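/- arXiv:1307.1915 — 9 statements merged into one kernel-verified Lean document; each statement's English description precedes it below -/
import Mathlib

section
/- Let Q be an instance of the FIFO stack-up problem with n bins and let (b_{π(1)}, …, b_{π(n)}) be the order in which the bins are removed during some processing of Q that uses at most p stack-up places. Suppose that at the configuration reached just before step i, the bin b_{π(l)} with l > i is the first bin of its remaining sequence and its pallet plt(b_{π(l)}) is already open. Then the modified removal order (b_{π(1)}, …, b_{π(i-1)}, b_{π(l)}, b_{π(i)}, …, b_{π(l-1)}, b_{π(l+1)}, …, b_{π(n)}) is also a processing of Q, and in each of its configurations at most p pallets are open. -/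
/-- The configuration of the remaining queues after the bins in `removed`
have been removed from the fronts of the queues of `Q`. -/
def confAfter {B : Type} [DecidableEq B] (Q : List (List B)) (removed : List B) :
    List (List B) :=
  Q.map fun q => q.dropWhile fun b => decide (b ∈ removed)

/-- `ord` is the removal order of a processing of the instance `Q`:
it is a permutation of all bins, and at every step the removed bin is the
first bin of one of the remaining sequences. -/
def IsProcessing {B : Type} [DecidableEq B] (Q : List (List B)) (ord : List B) : Prop :=
  ord.Perm Q.flatten ∧
  ∀ i (hi : i < ord.length),
    ∃ q ∈ confAfter Q (ord.take i), q.head? = some ord[i]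

/-- The set of pallets that are open after the bins in `removed` have been removed:
some bin of the pallet has been removed and some bin of the pallet remains. -/
def openAfter {B P : Type} [DecidableEq B] (Q : List (List B)) (plt : B → P)
    (removed : List B) : Set P :=
  {t | (∃ b ∈ removed, plt b = t) ∧
       ∃ q ∈ confAfter Q removed, ∃ b ∈ q, plt b = t}

/-- The processing `ord` of `Q` uses at most `p` stack-up places: in every
configuration during the processing at most `p` pallets are open. -/
def UsesAtMost {B P : Type} [DecidableEq B] (Q : List (List B)) (plt : B → P)
    (ord : List B) (p : ℕ) : Prop :=
  ∀ i ≤ ord.length, (openAfter Q plt (ord.take i)).ncard ≤ p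

/-- The set of pallet labels of the instance `Q`. -/
def pltsOf {B P : Type} (Q : List (List B)) (plt : B → P) : Set P :=
  {t | ∃ q ∈ Q, ∃ b ∈ q, plt b = t}

/-- Every pallet of the instance has at least two bins in the sequences of `Q`. -/
def EveryPalletTwoBins {B P : Type} (Q : List (List B)) (plt : B → P) : Prop :=
  ∀ t ∈ pltsOf Q plt, ∃ b₁ b₂, b₁ ≠ b₂ ∧ b₁ ∈ Q.flatten ∧ b₂ ∈ Q.flatten ∧
    plt b₁ = t ∧ plt b₂ = t

/-- The arc relation of the sequence graph `G_Q`: there is an arc `(u,v)` iff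
`u ≠ v` and in some sequence of `Q` a bin with label `u` occurs at an earlier
position than a bin with label `v`. -/
def seqArc {B P : Type} (Q : List (List B)) (plt : B → P) (u v : P) : Prop :=
  u ≠ v ∧ ∃ q ∈ Q, ∃ i j : ℕ, i < j ∧
    (∃ b, q[i]? = some b ∧ plt b = u) ∧ (∃ b', q[j]? = some b' ∧ plt b' = v)

/-- `X` is a directed path-decomposition of the digraph with vertex set `Vs`
and arc relation `A`. -/
def IsDPD {V : Type} (A : V → V → Prop) (Vs : Set V) (X : List (Set V)) : Prop :=
  (∀ C ∈ X, C ⊆ Vs) ∧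
  (∀ v ∈ Vs, ∃ i, ∃ hi : i < X.length, v ∈ X[i]) ∧
  (∀ u v, A u v → ∃ i j, i ≤ j ∧ ∃ hi : i < X.length, ∃ hj : j < X.length,
      u ∈ X[i] ∧ v ∈ X[j]) ∧
  (∀ v i j l, i ≤ l → l ≤ j →
    ∀ hi : i < X.length, ∀ hj : j < X.length, ∀ hl : l < X.length,
      v ∈ X[i] → v ∈ X[j] → v ∈ X[l])


lemma dropWhile_eq_of_prefix {B : Type} (p : B → Bool) (pre post : List B) (b : B)
    (hpre : ∀ c ∈ pre, p c = true) (hb : p b = false) :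
    (pre ++ b :: post).dropWhile p = b :: post := by
  rw [List.dropWhile_append]
  simp [List.dropWhile_eq_nil_iff.mpr hpre, List.dropWhile_cons, hb]

def HeadOk {B : Type} (Q : List (List B)) (S : B → Prop) (b : B) : Prop :=
  ¬ S b ∧ ∃ q ∈ Q, ∃ pre post, q = pre ++ b :: post ∧ ∀ c ∈ pre, S c

lemma headOk_iff {B : Type} [DecidableEq B] (Q : List (List B)) (r : List B) (b : B) :
    (∃ q ∈ confAfter Q r, q.head? = some b) ↔ HeadOk Q (· ∈ r) b := by
  constructor
  · rintro ⟨q', hq', hhead⟩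
    simp only [confAfter, List.mem_map] at hq'
    obtain ⟨q, hq, rfl⟩ := hq'
    set p : B → Bool := fun b => decide (b ∈ r) with hp
    obtain ⟨t, ht⟩ : ∃ t, q.dropWhile p = b :: t := by
      cases h : q.dropWhile p with
      | nil => simp [h] at hhead
      | cons a t => simp [h] at hhead; exact ⟨t, by rw [hhead]⟩
    have hnb : p b = false := by
      have := List.head?_dropWhile_not p q
      rw [ht] at this; simpa using this
    refine ⟨by simpa [hp] using hnb, q, hq, q.takeWhile p, t, ?_, ?_⟩
    · rw [← ht, List.takeWhile_append_dropWhile]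
    · intro c hc
      have := List.mem_takeWhile_imp hc
      simpa [hp] using this
  · rintro ⟨hnb, q, hq, pre, post, rfl, hpre⟩
    refine ⟨b :: post, ?_, rfl⟩
    simp only [confAfter, List.mem_map]
    refine ⟨pre ++ b :: post, hq, ?_⟩
    exact dropWhile_eq_of_prefix _ pre post b (by simpa using hpre) (by simpa using hnb)

lemma headOk_mono {B : Type} (Q : List (List B)) {S S' : B → Prop} {b : B}
    (hsub : ∀ c, S c → S' c) (hnb : ¬ S' b) (h : HeadOk Q S b) : HeadOk Q S' b := by
  obtain ⟨_, q, hq, pre, post, hdec, hpre⟩ := h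
  exact ⟨hnb, q, hq, pre, post, hdec, fun c hc => hsub c (hpre c hc)⟩

lemma mem_conf_mono {B : Type} [DecidableEq B] (Q : List (List B)) {r r' : List B}
    (hsub : ∀ c, c ∈ r → c ∈ r') {b : B} {q' : List B}
    (hq' : q' ∈ confAfter Q r') (hb : b ∈ q') :
    ∃ q ∈ confAfter Q r, b ∈ q := by
  simp only [confAfter, List.mem_map] at hq' ⊢
  obtain ⟨q0, hq0, rfl⟩ := hq'
  set p : B → Bool := fun b => decide (b ∈ r) with hp
  set p' : B → Bool := fun b => decide (b ∈ r') with hp'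
  refine ⟨q0.dropWhile p, ⟨q0, hq0, rfl⟩, ?_⟩
  have key : q0.dropWhile p' = (q0.dropWhile p).dropWhile p' := by
    conv_lhs => rw [← List.takeWhile_append_dropWhile (p := p) (l := q0)]
    rw [List.dropWhile_append]
    have : (q0.takeWhile p).dropWhile p' = [] := by
      rw [List.dropWhile_eq_nil_iff]
      intro x hx
      have := List.mem_takeWhile_imp hx
      simp [hp] at this
      simp [hp', hsub x this]
    simp [this]
  rw [key] at hb
  exact (List.dropWhile_suffix p').mem hb

lemma openAfter_finite {B P : Type} [DecidableEq B] (Q : List (List B)) (plt : B → P)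
    (r : List B) : (openAfter Q plt r).Finite := by
  apply Set.Finite.subset (Set.Finite.image plt (List.finite_toSet r))
  rintro t ⟨⟨b, hb, rfl⟩, -⟩
  exact ⟨b, hb, rfl⟩

lemma openAfter_congr {B P : Type} [DecidableEq B] (Q : List (List B)) (plt : B → P)
    {r r' : List B} (h : ∀ c, c ∈ r ↔ c ∈ r') :
    openAfter Q plt r = openAfter Q plt r' := by
  have hconf : confAfter Q r = confAfter Q r' := by
    unfold confAfter
    congr 1
    funext q
    congr 1
    funext b
    exact decide_eq_decide.mpr (h b)
  unfold openAfter
  rw [hconf]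
  ext t
  simp only [Set.mem_setOf_eq]
  constructor <;> rintro ⟨⟨b, hb, rfl⟩, hrest⟩
  · exact ⟨⟨b, (h b).mp hb, rfl⟩, hrest⟩
  · exact ⟨⟨b, (h b).mpr hb, rfl⟩, hrest⟩

lemma not_mem_take_of_nodup {B : Type} {ord : List B} (h : ord.Nodup) {k m : ℕ}
    (hk : k < ord.length) (hm : m ≤ k) : ord[k] ∉ ord.take m := by
  intro hmem
  obtain ⟨j, hj, hje⟩ := List.mem_iff_getElem.mp hmem
  rw [List.getElem_take] at hje
  have hjlt : j < m := by simpa using hj.trans_le (by simp)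
  have := (h.getElem_inj_iff.mp hje)
  omega

lemma mem_take_mono {B : Type} {ord : List B} {m m' : ℕ} (h : m ≤ m') {b : B}
    (hb : b ∈ ord.take m) : b ∈ ord.take m' := by
  have heq : ord.take m = (ord.take m').take m := by
    rw [List.take_take]
    congr 1
    omega
  rw [heq] at hb
  exact List.take_subset _ _ hb

/-- If during a processing of `Q` with at most `p` open pallets
the bin `ord[l]` (with `l > i`) is, in the configuration reached just before
step `i`, the first bin of its remaining sequence and its pallet is already
open, then moving the removal of `ord[l]` forward to position `i` again yields
a processing of `Q` in each of whose configurations at most `p` pallets are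
open. -/
theorem fifo_priority_rule {B P : Type} [DecidableEq B]
    (Q : List (List B)) (plt : B → P) (hnd : Q.flatten.Nodup)
    (ord : List B) (p : ℕ)
    (hproc : IsProcessing Q ord) (hp : UsesAtMost Q plt ord p)
    (i l : ℕ) (hil : i < l) (hl : l < ord.length)
    (hfront : ∃ q ∈ confAfter Q (ord.take i), q.head? = some ord[l])
    (hopen : plt ord[l] ∈ openAfter Q plt (ord.take i)) :
    IsProcessing Q (ord.take i ++ ord[l] :: (ord.drop i).erase ord[l]) ∧
    UsesAtMost Q plt (ord.take i ++ ord[l] :: (ord.drop i).erase ord[l]) p := by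
  obtain ⟨hperm, hstep⟩ := hproc
  have hordnd : ord.Nodup := hperm.nodup_iff.mpr hnd
  set n := ord.length with hn
  have hiln : i < n := by omega
  set x := ord[l] with hxdef
  set T := ord.take i with hT
  set E := (ord.drop i).erase x with hEdef
  set new := T ++ x :: E with hnewdef
  have hTlen : T.length = i := by rw [hT]; simp; omega
  have hxd : x ∈ ord.drop i := by
    have h1 : (ord.drop i)[l - i]'(by simp [← hn]; omega) = x := by
      rw [List.getElem_drop]
      simp only [hxdef]
      congr 1
      omega
    exact h1 ▸ List.getElem_mem _
  have hElen : E.length = n - i - 1 := by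
    rw [hEdef, List.length_erase_of_mem hxd]; simp [← hn]
  have hnewlen : new.length = n := by
    rw [hnewdef]; simp [hTlen, hElen]; omega
  set A := (ord.drop i).take (l - i) with hA
  set C := ord.drop (l + 1) with hC
  have hsplit : ord.drop i = A ++ x :: C := by
    rw [hA, hC]
    conv_lhs => rw [← List.take_append_drop (l - i) (ord.drop i)]
    congr 1
    rw [List.drop_drop]
    have h1 : i + (l - i) = l := by omega
    rw [h1, ← List.getElem_cons_drop (as := ord) (i := l) hl]
  have hAlen : A.length = l - i := by rw [hA]; simp [← hn]; omega
  have hxnotA : x ∉ A := by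
    intro hmem
    obtain ⟨j, hj, hje⟩ := List.mem_iff_getElem.mp hmem
    have hj' : j < l - i := by rw [hAlen] at hj; exact hj
    have key : A[j]'hj = ord[i + j]'(by omega) := by
      simp only [hA]
      rw [List.getElem_take, List.getElem_drop]
    have h2 : ord[i + j]'(by omega) = ord[l]'(by omega) := by
      rw [← key, hje, hxdef]
    have := hordnd.getElem_inj_iff.mp h2
    omega
  have hEAC : E = A ++ C := by
    rw [hEdef, hsplit, List.erase_append_right _ hxnotA, List.erase_cons_head]
  have hClen : C.length = n - (l + 1) := by rw [hC]; simp [← hn]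
  -- take computations
  have htake_le : ∀ j, j ≤ i → new.take j = ord.take j := by
    intro j hj
    rw [hnewdef, List.take_append_of_le_length (by rw [hTlen]; omega), hT, List.take_take]
    congr 1; omega
  have htake_mid : ∀ j, i < j → j ≤ l → ∀ b, (b ∈ new.take j ↔ b ∈ ord.take (j - 1) ∨ b = x) := by
    intro j hj1 hj2 b
    have h1 : new.take j = T ++ x :: A.take (j - 1 - i) := by
      have hTle : T.length ≤ j := by rw [hTlen]; omega
      rw [hnewdef, List.take_append, List.take_of_length_le hTle, hTlen]
      congr 1
      have h2 : j - i = (j - i - 1) + 1 := by omega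
      have hAle : j - i - 1 ≤ A.length := by rw [hAlen]; omega
      rw [h2, List.take_succ_cons, hEAC, List.take_append_of_le_length hAle]
      congr 2
      omega
    have h2 : ord.take (j - 1) = T ++ A.take (j - 1 - i) := by
      have h3 : j - 1 = i + (j - 1 - i) := by omega
      rw [h3, List.take_add, ← hT]
      congr 1
      rw [hA, List.take_take]
      congr 1
      omega
    rw [h1, h2]
    simp only [List.mem_append, List.mem_cons]
    tauto
  have htake_hi : ∀ j, l < j → ∀ b, (b ∈ new.take j ↔ b ∈ ord.take j) := by
    intro j hj b
    have h1 : new.take j = T ++ x :: (A ++ C.take (j - l - 1)) := by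
      have hTle : T.length ≤ j := by rw [hTlen]; omega
      rw [hnewdef, List.take_append, List.take_of_length_le hTle, hTlen]
      congr 1
      have h2 : j - i = (j - i - 1) + 1 := by omega
      have hAle : A.length ≤ j - i - 1 := by rw [hAlen]; omega
      rw [h2, List.take_succ_cons, hEAC, List.take_append,
        List.take_of_length_le hAle, hAlen]
      rw [show j - i - 1 - (l - i) = j - l - 1 from by omega]
    have h2 : ord.take j = T ++ (A ++ x :: C.take (j - l - 1)) := by
      have h3 : j = i + (j - i) := by omega
      conv_lhs => rw [h3]
      rw [List.take_add, ← hT]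
      congr 1
      have hAle : A.length ≤ j - i := by rw [hAlen]; omega
      rw [hsplit, List.take_append, List.take_of_length_le hAle, hAlen]
      congr 1
      have h4 : j - i - (l - i) = (j - l - 1) + 1 := by omega
      rw [h4, List.take_succ_cons]
    rw [h1, h2]
    simp only [List.mem_append, List.mem_cons]
    tauto
  -- the permutation
  have hnewperm : new.Perm ord := by
    conv_rhs => rw [← List.take_append_drop i ord, ← hT]
    exact List.Perm.append_left T (List.perm_cons_erase hxd).symm
  constructor
  · -- IsProcessing
    refine ⟨hnewperm.trans hperm, ?_⟩
    intro j hj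
    rw [hnewlen] at hj
    rcases lt_or_ge j i with hji | hji
    · -- j < i
      have hget : new[j]'(by omega) = ord[j]'(by omega) := by
        simp only [hnewdef]
        rw [List.getElem_append_left (by rw [hTlen]; omega)]
        simp only [hT]
        rw [List.getElem_take]
      rw [htake_le j (le_of_lt hji)]
      simp only [hget]
      exact hstep j (by omega)
    · rcases eq_or_lt_of_le hji with hji' | hji'
      · -- j = i
        have hget : new[j]'(by omega) = x := by
          simp only [hnewdef]
          rw [List.getElem_append_right (by rw [hTlen]; omega)]
          simp only [hTlen]
          have h0 : j - i = 0 := by omega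
          simp [h0]
        rw [htake_le j (by omega)]
        simp only [hget]
        have hTj : ord.take j = T := by rw [hT]; congr 1; omega
        rw [hTj]
        exact hfront
      · rcases le_or_gt j l with hjl | hjl
        · -- i < j ≤ l : new[j] = ord[j-1]
          have hget : new[j]'(by omega) = ord[j - 1]'(by omega) := by
            simp only [hnewdef]
            rw [List.getElem_append_right (by rw [hTlen]; omega)]
            simp only [hTlen]
            obtain ⟨m, hm, hm'⟩ : ∃ m, j - i = m + 1 ∧ m = j - i - 1 := ⟨j - i - 1, by omega, rfl⟩
            simp only [hm, List.getElem_cons_succ]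
            simp only [hEAC]
            rw [List.getElem_append_left (by rw [hAlen]; omega)]
            simp only [hA]
            rw [List.getElem_take, List.getElem_drop]
            simp only [show i + m = j - 1 from by omega]
          simp only [hget]
          rw [headOk_iff]
          have hold : HeadOk Q (· ∈ ord.take (j - 1)) (ord[j - 1]'(by omega)) :=
            (headOk_iff Q _ _).mp (hstep (j - 1) (by omega))
          refine headOk_mono Q (fun c hc => ?_) ?_ hold
          · exact (htake_mid j hji' hjl c).mpr (Or.inl hc)
          · intro hmem
            rcases (htake_mid j hji' hjl _).mp hmem with h | h
            · exact not_mem_take_of_nodup hordnd (by omega) le_rfl h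
            · rw [hxdef] at h
              have := hordnd.getElem_inj_iff.mp h
              omega
        · -- l < j : new[j] = ord[j]
          have hget : new[j]'(by omega) = ord[j]'(by omega) := by
            simp only [hnewdef]
            rw [List.getElem_append_right (by rw [hTlen]; omega)]
            simp only [hTlen]
            obtain ⟨m, hm, hm'⟩ : ∃ m, j - i = m + 1 ∧ m = j - i - 1 := ⟨j - i - 1, by omega, rfl⟩
            simp only [hm, List.getElem_cons_succ]
            simp only [hEAC]
            rw [List.getElem_append_right (by rw [hAlen]; omega)]
            simp only [hAlen, hC]
            rw [List.getElem_drop]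
            simp only [show l + 1 + (m - (l - i)) = j from by omega]
          simp only [hget]
          rw [headOk_iff]
          have hold : HeadOk Q (· ∈ ord.take j) (ord[j]'(by omega)) :=
            (headOk_iff Q _ _).mp (hstep j (by omega))
          refine headOk_mono Q (fun c hc => ?_) ?_ hold
          · exact (htake_hi j hjl c).mpr hc
          · intro hmem
            exact not_mem_take_of_nodup hordnd (by omega) le_rfl
              ((htake_hi j hjl _).mp hmem)
  · -- UsesAtMost
    intro j hjle
    rw [hnewlen] at hjle
    rcases le_or_gt j i with hji | hji
    · rw [htake_le j hji]
      exact hp j (by omega)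
    · rcases le_or_gt j l with hjl | hjl
      · -- i < j ≤ l
        have hsub : openAfter Q plt (new.take j) ⊆ openAfter Q plt (ord.take (j - 1)) := by
          rintro t ⟨⟨b, hb, rfl⟩, q', hq', b', hb', hplt⟩
          obtain ⟨q0, hq0, hb0⟩ := mem_conf_mono Q
            (fun c hc => (htake_mid j hji hjl c).mpr (Or.inl hc)) hq' hb'
          refine ⟨?_, q0, hq0, b', hb0, hplt⟩
          rcases (htake_mid j hji hjl b).mp hb with h | rfl
          · exact ⟨b, h, rfl⟩
          · obtain ⟨⟨b₀, hb₀, hpb₀⟩, -⟩ := hopen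
            exact ⟨b₀, mem_take_mono (by omega) hb₀, hpb₀⟩
        calc (openAfter Q plt (new.take j)).ncard
            ≤ (openAfter Q plt (ord.take (j - 1))).ncard :=
              Set.ncard_le_ncard hsub (openAfter_finite Q plt _)
          _ ≤ p := hp (j - 1) (by omega)
      · rw [openAfter_congr Q plt (htake_hi j hjl)]
        exact hp j (by omega)
end

section
/- Let Q be an instance of the FIFO stack-up problem and G_Q its sequence graph. If (u,v) is an arc of G_Q, then u ≠ v and in every processing of Q the pallet u is opened before the pallet v is closed; that is, the first bin labeled u is removed strictly before the last bin labeled v is removed. -/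
/-- If `(u,v)` is an arc of the sequence graph `G_Q`, then
`u ≠ v`, and in every processing of `Q` the pallet `u` is opened strictly
before the pallet `v` is closed: the first bin labeled `u` is removed strictly
before the last bin labeled `v` is removed. -/
theorem seqArc_opened_before_closed {B P : Type} [DecidableEq B]
    (Q : List (List B)) (plt : B → P) (hnd : Q.flatten.Nodup)
    (u v : P) (harc : seqArc Q plt u v) :
    u ≠ v ∧
    ∀ ord : List B, IsProcessing Q ord →
      ∀ i j (hi : i < ord.length) (hj : j < ord.length),
        plt ord[i] = u →
        (∀ i' (hi' : i' < ord.length), plt ord[i'] = u → i ≤ i') →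
        plt ord[j] = v →
        (∀ j' (hj' : j' < ord.length), plt ord[j'] = v → j' ≤ j) →
        i < j := by
  obtain ⟨hne, q, hqQ, i', j', hij, ⟨b, hbq, hbu⟩, ⟨b', hb'q, hb'v⟩⟩ := harc
  refine ⟨hne, ?_⟩
  rintro ord ⟨hperm, hstep⟩ i j hi hj hplti hmin hpltj hmax
  -- basic facts about b'
  obtain ⟨hj'lt, hqj'⟩ := List.getElem?_eq_some_iff.mp hb'q
  obtain ⟨hi'lt, hqi'⟩ := List.getElem?_eq_some_iff.mp hbq
  have hb'q' : b' ∈ q := hqj' ▸ List.getElem_mem hj'lt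
  have hb'fl : b' ∈ Q.flatten := List.mem_flatten.mpr ⟨q, hqQ, hb'q'⟩
  have hb'ord : b' ∈ ord := hperm.mem_iff.mpr hb'fl
  obtain ⟨s, hs, hords⟩ := List.mem_iff_getElem.mp hb'ord
  -- the step removing b'
  obtain ⟨q'', hq''mem, hhead⟩ := hstep s hs
  unfold confAfter at hq''mem
  obtain ⟨q0, hq0Q, hq0d⟩ := List.mem_map.mp hq''mem
  set p : B → Bool := fun b => decide (b ∈ ord.take s) with hp
  set n : ℕ := (q0.takeWhile p).length with hn
  have hdec : q0.takeWhile p ++ q0.dropWhile p = q0 := List.takeWhile_append_dropWhile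
  have hdrop : q0.dropWhile p = q0.drop n := by
    conv_rhs => rw [← hdec]
    rw [List.drop_left]
  have hheadn : q0[n]? = some b' := by
    rw [← List.head?_drop, ← hdrop, hq0d, hhead, hords]
  have hb'q0 : b' ∈ q0 := by
    obtain ⟨hlt, he⟩ := List.getElem?_eq_some_iff.mp hheadn
    exact he ▸ List.getElem_mem hlt
  -- q0 = q by disjointness
  obtain ⟨hnds, hPW⟩ := List.nodup_flatten.mp hnd
  have hq0q : q0 = q := by
    by_contra hne'
    exact (haveI : Std.Symm (@List.Disjoint B) := ⟨fun a b h => h.symm⟩; hPW.forall) hq0Q hqQ hne' hb'q0 hb'q'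
  subst hq0q
  -- n = j'
  have hnj' : n = j' := (List.getElem?_inj (List.getElem?_eq_some_iff.mp hheadn).1
    (hnds q0 hqQ)).mp (hheadn.trans hb'q.symm)
  -- b ∈ ord.take s
  have hbtake : b ∈ ord.take s := by
    have hi'n : i' < n := hnj' ▸ hij
    have h1 : i' < (q0.takeWhile p).length := hi'n
    have h2 : (q0.takeWhile p)[i']? = some b := by
      rw [← List.getElem?_append_left (l₂ := q0.dropWhile p) h1, hdec, hbq]
    obtain ⟨hlt2, he2⟩ := List.getElem?_eq_some_iff.mp h2
    have : b ∈ q0.takeWhile p := he2 ▸ List.getElem_mem hlt2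
    have := List.mem_takeWhile_imp this
    rw [hp] at this
    simpa using this
  obtain ⟨t, ht, hordt⟩ := List.mem_iff_getElem.mp hbtake
  have hts : t < s := lt_of_lt_of_le ht (by simp [List.length_take])
  have htlen : t < ord.length := lt_of_lt_of_le ht (by simp [List.length_take])
  have hordtb : ord[t] = b := by rwa [List.getElem_take] at hordt
  have h1 : i ≤ t := hmin t htlen (by rw [hordtb, hbu])
  have h2 : s ≤ j := hmax s hs (by rw [hords, hb'v])
  omega
end

section
/- Let Q be an instance of the FIFO stack-up problem in which every pallet of plts(Q) has at least two bins in the sequences of Q. If (Q,Q_0), (Q,Q_1), …, (Q,Q_n) is a processing of Q with Q_0 = Q and Q_n consisting of empty sequences that uses at most p stack-up places, then the sequence of bags (open(Q,Q_0), open(Q,Q_1), …, open(Q,Q_n)) is a directed path-decomposition of the sequence graph G_Q of width at most p − 1. -/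
lemma dropWhile_dropWhile {B : Type} {p p' : B → Bool} (h : ∀ b, p b = true → p' b = true) :
    ∀ l : List B, (l.dropWhile p).dropWhile p' = l.dropWhile p'
  | [] => rfl
  | a :: l => by
    by_cases ha : p a = true
    · simp [List.dropWhile_cons, ha, h a ha, dropWhile_dropWhile h l]
    · simp [List.dropWhile_cons, ha]

lemma dropWhile_eq_self_of {B : Type} {p : B → Bool} :
    ∀ {l : List B}, (∀ b ∈ l, p b = false) → l.dropWhile p = l
  | [], _ => rfl
  | a :: l, h => by simp [List.dropWhile_cons, h a List.mem_cons_self]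

lemma unique_list {B : Type} {Q : List (List B)} (hnd : Q.flatten.Nodup) {q1 q2 : List B} {b : B}
    (h1 : q1 ∈ Q) (h2 : q2 ∈ Q) (hb1 : b ∈ q1) (hb2 : b ∈ q2) : q1 = q2 := by
  rcases List.nodup_flatten.mp hnd with ⟨-, hpw⟩
  by_contra hne
  letI : Std.Symm (List.Disjoint (α := B)) := ⟨fun _ _ h => h.symm⟩
  exact (hpw.forall h1 h2 hne) hb1 hb2

lemma mem_take_iff {B : Type} [DecidableEq B] {ord : List B} (hnodup : ord.Nodup) {b : B} (hb : b ∈ ord) (i : ℕ) :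
    b ∈ ord.take i ↔ ord.idxOf b < i := by
  have hlt : ord.idxOf b < ord.length := List.idxOf_lt_length_iff.mpr hb
  constructor
  · intro h
    rcases List.mem_iff_getElem?.mp h with ⟨k, hk⟩
    rw [List.getElem?_take] at hk
    by_cases hki : k < i
    · rw [if_pos hki] at hk
      rcases List.getElem?_eq_some_iff.mp hk with ⟨hklen, hkeq⟩
      have : ord.idxOf b = k := by
        rw [← hnodup.getElem_inj_iff (hi := hlt) (hj := hklen)]
        rw [List.getElem_idxOf, hkeq]
      omega
    · rw [if_neg hki] at hk; exact absurd hk (by simp)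
  · intro h
    refine List.mem_iff_getElem?.mpr ⟨ord.idxOf b, ?_⟩
    rw [List.getElem?_take, if_pos h, List.getElem?_eq_getElem hlt, List.getElem_idxOf]


lemma inv {B : Type} [DecidableEq B] {Q : List (List B)} {ord : List B}
    (hnd : Q.flatten.Nodup) (hproc : IsProcessing Q ord) :
    ∀ i, i ≤ ord.length → ∀ q ∈ Q,
      ∀ b ∈ q.dropWhile (fun b => decide (b ∈ ord.take i)), b ∉ ord.take i := by
  intro i
  induction i with
  | zero => simp
  | succ i ih =>
    intro hi q hq b hb
    have hi' : i < ord.length := hi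
    have ihq := ih (le_of_lt hi')
    set P : B → Bool := fun b => decide (b ∈ ord.take i) with hP
    set P' : B → Bool := fun b => decide (b ∈ ord.take (i + 1)) with hP'
    have htake : ord.take (i + 1) = ord.take i ++ [ord[i]] := by
      rw [List.take_succ, List.getElem?_eq_getElem hi']; rfl
    have hmono : ∀ b, P b = true → P' b = true := by
      intro b h
      simp only [hP, decide_eq_true_eq] at h
      simp only [hP', decide_eq_true_eq, htake, List.mem_append]
      exact Or.inl h
    have key : (q.dropWhile P).dropWhile P' = q.dropWhile P' :=
      dropWhile_dropWhile hmono q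
    set r : List B := q.dropWhile P with hr
    -- q is nodup and r is nodup
    have hqnd : q.Nodup := (List.nodup_flatten.mp hnd).1 q hq
    have hrnd : r.Nodup := hqnd.sublist (List.dropWhile_sublist P)
    have hrq : ∀ x ∈ r, x ∈ q := fun x hx => (List.dropWhile_sublist P).subset hx
    have hordi : ord[i] ∈ ord.take (i+1) := by
      rw [htake]; exact List.mem_append_right _ (List.mem_singleton_self _)
    rw [← key] at hb
    by_cases hcase : ord[i] ∈ r
    · -- r starts with ord[i]
      obtain ⟨q'', hq''mem, hhead⟩ := hproc.2 i hi'
      obtain ⟨q''', hq'''Q, hq''eq⟩ := List.mem_map.mp hq''mem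
      have hoq'' : ord[i] ∈ q'' := List.mem_of_mem_head? (by rw [hhead]; rfl)
      have hoq''' : ord[i] ∈ q''' := (List.dropWhile_sublist _).subset (hq''eq ▸ hoq'')
      have hqq : q = q''' := unique_list hnd hq hq'''Q (hrq _ hcase) hoq'''
      have hreq : r = q'' := by rw [hr, hqq, ← hq''eq]
      obtain ⟨tl, htl⟩ : ∃ tl, r = ord[i] :: tl := by
        cases hrr : r with
        | nil => rw [hreq] at hrr; rw [hrr] at hhead; simp at hhead
        | cons a tl =>
          refine ⟨tl, ?_⟩
          rw [hreq] at hrr; rw [hrr] at hhead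
          simp only [List.head?_cons, Option.some.injEq] at hhead
          rw [hhead]
      have hnotmem : ord[i] ∉ tl := by
        have := hrnd; rw [htl] at this; exact (List.nodup_cons.mp this).1
      have htlfalse : ∀ x ∈ tl, P' x = false := by
        intro x hx
        have hxr : x ∈ r := by rw [htl]; exact List.mem_cons_of_mem _ hx
        have hx1 : x ∉ ord.take i := ihq q hq x hxr
        have hx2 : x ≠ ord[i] := fun h => hnotmem (h ▸ hx)
        simp only [hP', decide_eq_false_iff_not, htake, List.mem_append,
          List.mem_singleton]
        rintro (h | h)
        · exact hx1 h
        · exact hx2 h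
      rw [htl, List.dropWhile_cons, if_pos (by simp [hP', hordi]),
        dropWhile_eq_self_of htlfalse] at hb
      have := htlfalse b hb
      simpa [hP'] using this
    · have hrfalse : ∀ x ∈ r, P' x = false := by
        intro x hx
        have hx1 : x ∉ ord.take i := ihq q hq x hx
        have hx2 : x ≠ ord[i] := fun h => hcase (h ▸ hx)
        simp only [hP', decide_eq_false_iff_not, htake, List.mem_append,
          List.mem_singleton]
        rintro (h | h)
        · exact hx1 h
        · exact hx2 h
      rw [dropWhile_eq_self_of hrfalse] at hb
      have := hrfalse b hb
      simpa [hP'] using this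

lemma mem_confAfter_iff {B : Type} [DecidableEq B] {Q : List (List B)} {ord : List B}
    (hnd : Q.flatten.Nodup) (hproc : IsProcessing Q ord) {i : ℕ} (hi : i ≤ ord.length)
    {b : B} :
    (∃ q ∈ confAfter Q (ord.take i), b ∈ q) ↔ b ∈ Q.flatten ∧ b ∉ ord.take i := by
  constructor
  · rintro ⟨q', hq', hb⟩
    obtain ⟨q, hq, rfl⟩ := List.mem_map.mp hq'
    refine ⟨List.mem_flatten.mpr ⟨q, hq, (List.dropWhile_sublist _).subset hb⟩, ?_⟩
    exact inv hnd hproc i hi q hq b hb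
  · rintro ⟨hbf, hbn⟩
    obtain ⟨q, hq, hbq⟩ := List.mem_flatten.mp hbf
    refine ⟨q.dropWhile (fun b => decide (b ∈ ord.take i)), List.mem_map.mpr ⟨q, hq, rfl⟩, ?_⟩
    have := List.takeWhile_append_dropWhile (p := fun b => decide (b ∈ ord.take i)) (l := q)
    rw [← this, List.mem_append] at hbq
    rcases hbq with h | h
    · exact absurd (by simpa using List.mem_takeWhile_imp h) hbn
    · exact h

lemma fifo {B : Type} [DecidableEq B] {Q : List (List B)} {ord : List B}
    (hnd : Q.flatten.Nodup) (hproc : IsProcessing Q ord) {q : List B} (hq : q ∈ Q)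
    {a c : ℕ} {b b' : B} (hab : q[a]? = some b) (hcb : q[c]? = some b') (hac : a < c) :
    ord.idxOf b < ord.idxOf b' := by
  have hordnd : ord.Nodup := (hproc.1.nodup_iff).mpr hnd
  have hbq : b ∈ q := List.mem_iff_getElem?.mpr ⟨a, hab⟩
  have hb'q : b' ∈ q := List.mem_iff_getElem?.mpr ⟨c, hcb⟩
  have hb'f : b' ∈ Q.flatten := List.mem_flatten.mpr ⟨q, hq, hb'q⟩
  have hbf : b ∈ Q.flatten := List.mem_flatten.mpr ⟨q, hq, hbq⟩
  have hb'o : b' ∈ ord := hproc.1.mem_iff.mpr hb'f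
  have hbo : b ∈ ord := hproc.1.mem_iff.mpr hbf
  set s := ord.idxOf b' with hs
  have hslen : s < ord.length := List.idxOf_lt_length_iff.mpr hb'o
  have hords : ord[s] = b' := List.getElem_idxOf hslen
  obtain ⟨q'', hq''mem, hhead⟩ := hproc.2 s hslen
  rw [hords] at hhead
  obtain ⟨q''', hq'''Q, hq''eq⟩ := List.mem_map.mp hq''mem
  have hoq'' : b' ∈ q'' := List.mem_of_mem_head? (by rw [hhead]; rfl)
  have hoq''' : b' ∈ q''' := (List.dropWhile_sublist _).subset (hq''eq ▸ hoq'')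
  have hqq : q = q''' := unique_list hnd hq hq'''Q hb'q hoq'''
  set P : B → Bool := fun b => decide (b ∈ ord.take s) with hP
  have hsplit : q.takeWhile P ++ q'' = q := by
    rw [← hq''eq, ← hqq]; exact List.takeWhile_append_dropWhile (p := P) (l := q)
  obtain ⟨tl, htl⟩ : ∃ tl, q'' = b' :: tl := by
    cases hrr : q'' with
    | nil => rw [hrr] at hhead; simp at hhead
    | cons x tl =>
      rw [hrr] at hhead
      simp only [List.head?_cons, Option.some.injEq] at hhead
      exact ⟨tl, by rw [hhead]⟩
  have hqnd : q.Nodup := (List.nodup_flatten.mp hnd).1 q hq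
  set tw := q.takeWhile P with htw
  have hqtw : q[tw.length]? = some b' := by
    rw [← hsplit, List.getElem?_append_right (le_refl _), Nat.sub_self, htl]
    simp
  obtain ⟨hclen, hceq⟩ := List.getElem?_eq_some_iff.mp hcb
  obtain ⟨htwlen, htweq⟩ := List.getElem?_eq_some_iff.mp hqtw
  have hc : c = tw.length := by
    rw [← hqnd.getElem_inj_iff (hi := hclen) (hj := htwlen), hceq, htweq]
  have halen : a < tw.length := by omega
  have hbtw : b ∈ tw := by
    have h2 : tw[a]? = some b := by
      rw [← List.getElem?_append_left (l₂ := q'') halen, hsplit]; exact hab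
    exact List.mem_iff_getElem?.mpr ⟨a, h2⟩
  rw [htw] at hbtw
  have hPb := List.mem_takeWhile_imp hbtw
  rw [hP] at hPb
  have : b ∈ ord.take s := by simpa using hPb
  exact (mem_take_iff hordnd hbo s).mp this

lemma pair_minmax {p : ℕ → Prop} {a a' : ℕ} (h : a ≠ a') (ha : p a) (ha' : p a') :
    ∃ m M, m < M ∧ p m ∧ p M ∧ m ≤ a ∧ a ≤ M := by
  rcases h.lt_or_gt with h | h
  · exact ⟨a, a', h, ha, ha', le_refl _, le_of_lt h⟩
  · exact ⟨a', a, h, ha', ha, le_of_lt h, le_refl _⟩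

lemma openAfter_iff {B P : Type} [DecidableEq B] {Q : List (List B)} {plt : B → P}
    {ord : List B} (hnd : Q.flatten.Nodup) (hproc : IsProcessing Q ord)
    {i : ℕ} (hi : i ≤ ord.length) {t : P} :
    t ∈ openAfter Q plt (ord.take i) ↔
      (∃ a, a < i ∧ ∃ h : a < ord.length, plt (ord[a]'h) = t) ∧
      (∃ c, i ≤ c ∧ ∃ h : c < ord.length, plt (ord[c]'h) = t) := by
  have hordnd : ord.Nodup := (hproc.1.nodup_iff).mpr hnd
  constructor
  · rintro ⟨⟨b, hb, hplt⟩, ⟨q, hq, b', hb', hplt'⟩⟩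
    constructor
    · rcases List.mem_iff_getElem?.mp hb with ⟨k, hk⟩
      rw [List.getElem?_take] at hk
      by_cases hki : k < i
      · rw [if_pos hki] at hk
        rcases List.getElem?_eq_some_iff.mp hk with ⟨hklen, hkeq⟩
        exact ⟨k, hki, hklen, by rw [hkeq]; exact hplt⟩
      · rw [if_neg hki] at hk; exact absurd hk (by simp)
    · have hmem := (mem_confAfter_iff hnd hproc hi).mp ⟨q, hq, hb'⟩
      have hb'o : b' ∈ ord := hproc.1.mem_iff.mpr hmem.1
      have hclen : ord.idxOf b' < ord.length := List.idxOf_lt_length_iff.mpr hb'o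
      refine ⟨ord.idxOf b', ?_, hclen, by rw [List.getElem_idxOf hclen]; exact hplt'⟩
      by_contra hlt
      exact hmem.2 ((mem_take_iff hordnd hb'o i).mpr (by omega))
  · rintro ⟨⟨a, hai, halen, haeq⟩, ⟨c, hci, hclen, hceq⟩⟩
    constructor
    · refine ⟨ord[a]'halen, ?_, haeq⟩
      refine List.mem_iff_getElem?.mpr ⟨a, ?_⟩
      rw [List.getElem?_take, if_pos hai, List.getElem?_eq_getElem halen]
    · set b := ord[c]'hclen with hb
      have hbo : b ∈ ord := List.getElem_mem _
      have hbf : b ∈ Q.flatten := hproc.1.mem_iff.mp hbo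
      have hidx : ord.idxOf b = c := by
        have h1 : ord.idxOf b < ord.length := List.idxOf_lt_length_iff.mpr hbo
        rw [← hordnd.getElem_inj_iff (hi := h1) (hj := hclen), List.getElem_idxOf]
      have hbn : b ∉ ord.take i := by
        intro hmem
        have := (mem_take_iff hordnd hbo i).mp hmem
        omega
      obtain ⟨q, hq, hbq⟩ := (mem_confAfter_iff hnd hproc hi).mpr ⟨hbf, hbn⟩
      exact ⟨q, hq, b, hbq, hceq⟩

/-- If every pallet of `Q` has at least two bins and
`ord` is a processing of `Q` that uses at most `p` stack-up places, then the
sequence of bags `(open(Q,Q_0), open(Q,Q_1), …, open(Q,Q_n))` is a directed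
path-decomposition of the sequence graph `G_Q` of width at most `p - 1`
(i.e. every bag has at most `p` elements). -/
theorem processing_gives_dpd {B P : Type} [DecidableEq B]
    (Q : List (List B)) (plt : B → P) (hnd : Q.flatten.Nodup)
    (htwo : EveryPalletTwoBins Q plt)
    (ord : List B) (p : ℕ)
    (hproc : IsProcessing Q ord) (hp : UsesAtMost Q plt ord p) :
    IsDPD (seqArc Q plt) (pltsOf Q plt)
      ((List.range (ord.length + 1)).map fun i => openAfter Q plt (ord.take i)) ∧
    ∀ C ∈ (List.range (ord.length + 1)).map fun i => openAfter Q plt (ord.take i),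
      C.ncard ≤ p := by
  have hordnd : ord.Nodup := (hproc.1.nodup_iff).mpr hnd
  set n := ord.length with hn
  set X := (List.range (n + 1)).map fun i => openAfter Q plt (ord.take i) with hX
  have hXlen : X.length = n + 1 := by simp [hX]
  have hXget : ∀ i (h : i < X.length), X[i]'h = openAfter Q plt (ord.take i) := by
    intro i h
    simp [hX]
  -- distinct bins have distinct indices
  have hidxne : ∀ b₁ b₂ : B, b₁ ∈ ord → b₂ ∈ ord → b₁ ≠ b₂ →
      ord.idxOf b₁ ≠ ord.idxOf b₂ := by
    intro b₁ b₂ h1 h2 hne heq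
    apply hne
    have l1 := List.getElem_idxOf (List.idxOf_lt_length_iff.mpr h1)
    have l2 := List.getElem_idxOf (List.idxOf_lt_length_iff.mpr h2)
    rw [← l1, ← l2]
    congr 1
  -- for a pallet t, indices of two distinct bins with label t
  have htwoidx : ∀ t ∈ pltsOf Q plt, ∀ b : B, b ∈ Q.flatten → plt b = t →
      ∃ m M, m < M ∧ (∃ h : m < n, plt (ord[m]'h) = t) ∧
        (∃ h : M < n, plt (ord[M]'h) = t) ∧ m ≤ ord.idxOf b ∧ ord.idxOf b ≤ M := by
    intro t ht b hbf hbt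
    obtain ⟨b₁, b₂, hne, h1f, h2f, h1t, h2t⟩ := htwo t ht
    have hbo : b ∈ ord := hproc.1.mem_iff.mpr hbf
    -- choose a bin distinct from b among b₁ b₂
    obtain ⟨b', hb'ne, hb'f, hb't⟩ : ∃ b', b' ≠ b ∧ b' ∈ Q.flatten ∧ plt b' = t := by
      by_cases h : b₁ = b
      · exact ⟨b₂, fun hh => hne (h ▸ hh ▸ rfl), h2f, h2t⟩
      · exact ⟨b₁, h, h1f, h1t⟩
    have hb'o : b' ∈ ord := hproc.1.mem_iff.mpr hb'f
    have hPb : (∃ h : ord.idxOf b < n, plt (ord[ord.idxOf b]'h) = t) :=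
      ⟨List.idxOf_lt_length_iff.mpr hbo, by rw [List.getElem_idxOf]; exact hbt⟩
    have hPb' : (∃ h : ord.idxOf b' < n, plt (ord[ord.idxOf b']'h) = t) :=
      ⟨List.idxOf_lt_length_iff.mpr hb'o, by rw [List.getElem_idxOf]; exact hb't⟩
    exact pair_minmax (hidxne b b' hbo hb'o (fun hh => hb'ne hh.symm)) hPb hPb'
  refine ⟨⟨?_, ?_, ?_, ?_⟩, ?_⟩
  · -- bags are subsets of pltsOf
    intro C hC t htC
    obtain ⟨i, hi, rfl⟩ := List.mem_map.mp hC
    obtain ⟨b, hb, hplt⟩ := htC.1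
    have hbo : b ∈ ord := List.take_subset _ _ hb
    have hbf : b ∈ Q.flatten := hproc.1.mem_iff.mp hbo
    obtain ⟨q, hq, hbq⟩ := List.mem_flatten.mp hbf
    exact ⟨q, hq, b, hbq, hplt⟩
  · -- every pallet is in some bag
    intro t ht
    obtain ⟨q, hq, b, hbq, hbt⟩ := ht
    have hbf : b ∈ Q.flatten := List.mem_flatten.mpr ⟨q, hq, hbq⟩
    obtain ⟨m, M, hmM, hPm, hPM, -, -⟩ := htwoidx t ⟨q, hq, b, hbq, hbt⟩ b hbf hbt
    obtain ⟨hMn, hMt⟩ := hPM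
    refine ⟨m + 1, by rw [hXlen]; omega, ?_⟩
    rw [hXget (m+1) (by rw [hXlen]; omega)]
    rw [openAfter_iff hnd hproc (by omega)]
    exact ⟨⟨m, by omega, hPm⟩, ⟨M, by omega, hMn, hMt⟩⟩
  · -- arc condition
    rintro u v ⟨hne, q, hq, i0, j0, hij, ⟨b, hbq, hbu⟩, ⟨b', hb'q, hb'v⟩⟩
    have hbf : b ∈ Q.flatten := List.mem_flatten.mpr ⟨q, hq, List.mem_iff_getElem?.mpr ⟨i0, hbq⟩⟩
    have hb'f : b' ∈ Q.flatten :=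
      List.mem_flatten.mpr ⟨q, hq, List.mem_iff_getElem?.mpr ⟨j0, hb'q⟩⟩
    have hac : ord.idxOf b < ord.idxOf b' := fifo hnd hproc hq hbq hb'q hij
    have hu : u ∈ pltsOf Q plt := by
      obtain ⟨q', hq', hbq'⟩ := List.mem_flatten.mp hbf
      exact ⟨q', hq', b, hbq', hbu⟩
    have hv : v ∈ pltsOf Q plt := by
      obtain ⟨q', hq', hbq'⟩ := List.mem_flatten.mp hb'f
      exact ⟨q', hq', b', hbq', hb'v⟩
    obtain ⟨mu, Mu, hmMu, hPmu, hPMu, hmua, haMu⟩ := htwoidx u hu b hbf hbu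
    obtain ⟨mv, Mv, hmMv, hPmv, hPMv, hmvc, hcMv⟩ := htwoidx v hv b' hb'f hb'v
    have hMun : Mu < n := hPMu.1
    have hMvn : Mv < n := hPMv.1
    refine ⟨mu + 1, max (mu + 1) (mv + 1), le_max_left _ _,
      by rw [hXlen]; omega, by rw [hXlen]; omega, ?_, ?_⟩
    · rw [hXget _ (by rw [hXlen]; omega), openAfter_iff hnd hproc (by omega)]
      exact ⟨⟨mu, by omega, hPmu⟩, ⟨Mu, by omega, hPMu⟩⟩
    · rw [hXget _ (by rw [hXlen]; omega), openAfter_iff hnd hproc (by omega)]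
      refine ⟨⟨mv, by omega, hPmv⟩, ⟨Mv, by omega, hPMv⟩⟩
  · -- convexity
    intro t i j l hil hlj hi hj hl hti htj
    rw [hXlen] at hi hj hl
    rw [hXget _ (by rw [hXlen]; omega), openAfter_iff hnd hproc (by omega)] at hti htj ⊢
    obtain ⟨⟨a, hai, ha⟩, -⟩ := hti
    obtain ⟨-, ⟨c, hcj, hc⟩⟩ := htj
    exact ⟨⟨a, by omega, ha⟩, ⟨c, by omega, hc⟩⟩
  · -- cardinality bound
    intro C hC
    obtain ⟨i, hi, rfl⟩ := List.mem_map.mp hC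
    rw [List.mem_range] at hi
    exact hp i (by omega)
end

section
/- Let Q be an instance of the FIFO stack-up problem in which every pallet of plts(Q) has at least two bins in the sequences of Q. If there exists a directed path-decomposition of the sequence graph G_Q of width p − 1, then there exists a processing of Q that uses at most p stack-up places. -/
section Aux
variable {B P : Type} [DecidableEq B]

/-- Invariant: the removed bins form exactly a prefix of every queue. -/
def Good (Q : List (List B)) (removed : List B) : Prop :=
  ∀ q ∈ Q, ∃ pre suf, q = pre ++ suf ∧ (∀ b ∈ pre, b ∈ removed) ∧ ∀ b ∈ suf, b ∉ removed

lemma dropWhile_pre_suf (removed : List B) (pre suf : List B)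
    (h1 : ∀ b ∈ pre, b ∈ removed) (h2 : ∀ b ∈ suf, b ∉ removed) :
    (pre ++ suf).dropWhile (fun b => decide (b ∈ removed)) = suf := by
  induction pre with
  | nil =>
    cases suf with
    | nil => rfl
    | cons a t =>
      simp only [List.nil_append, List.dropWhile_cons]
      simp [h2 a (List.mem_cons_self)]
  | cons a pre ih =>
    simp only [List.cons_append, List.dropWhile_cons]
    have := h1 a (List.mem_cons_self)
    simp only [this, decide_true, if_true]
    exact ih (fun b hb => h1 b (List.mem_cons_of_mem _ hb))

lemma good_spec {Q : List (List B)} {removed : List B} (hg : Good Q removed)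
    {q : List B} (hq : q ∈ Q) :
    ∃ pre, q = pre ++ q.dropWhile (fun b => decide (b ∈ removed)) ∧
      (∀ b ∈ pre, b ∈ removed) ∧
      ∀ b ∈ q.dropWhile (fun b => decide (b ∈ removed)), b ∉ removed := by
  obtain ⟨pre, suf, rfl, h1, h2⟩ := hg q hq
  rw [dropWhile_pre_suf removed pre suf h1 h2]
  exact ⟨pre, rfl, h1, h2⟩
end Aux

section Pop
variable {B P : Type} [DecidableEq B]

lemma pop_lemma (Q : List (List B)) (removed : List B) (b : B)
    (hnd : Q.flatten.Nodup) (hg : Good Q removed)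
    (q₀ : List B) (hq₀ : q₀ ∈ Q)
    (hb : (q₀.dropWhile (fun x => decide (x ∈ removed))).head? = some b) :
    Good Q (removed ++ [b]) ∧
    (confAfter Q removed).flatten.Perm (b :: (confAfter Q (removed ++ [b])).flatten) := by
  classical
  obtain ⟨Q₁, Q₂, hQ⟩ := List.append_of_mem hq₀
  subst hQ
  obtain ⟨pre₀, hq₀eq, hpre₀, hsuf₀⟩ := good_spec hg hq₀
  set suf₀ := q₀.dropWhile (fun x => decide (x ∈ removed)) with hsufdef
  obtain ⟨rest, hrest⟩ : ∃ rest, suf₀ = b :: rest := by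
    cases hsuf : suf₀ with
    | nil => rw [hsuf] at hb; simp at hb
    | cons c t => rw [hsuf] at hb; simp at hb; exact ⟨t, by rw [hb]⟩
  have hbq₀ : b ∈ q₀ := by
    rw [hq₀eq, hrest]; exact List.mem_append_right _ (List.mem_cons_self)
  -- nodup consequences
  have hflat : (Q₁ ++ q₀ :: Q₂).flatten = Q₁.flatten ++ (q₀ ++ Q₂.flatten) := by
    simp [List.flatten_append]
  rw [hflat] at hnd
  have hbQ₁ : b ∉ Q₁.flatten := fun hmem =>
    (List.disjoint_of_nodup_append hnd) hmem (List.mem_append_left _ hbq₀)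
  have hnd2 : (q₀ ++ Q₂.flatten).Nodup := hnd.of_append_right
  have hbQ₂ : b ∉ Q₂.flatten := fun hmem =>
    (List.disjoint_of_nodup_append hnd2) hbq₀ hmem
  have hq₀nd : q₀.Nodup := hnd2.of_append_left
  have hbrest : b ∉ rest := by
    have hsub : suf₀.Sublist q₀ := by
      rw [hq₀eq]; exact (List.suffix_append pre₀ suf₀).sublist
    have : suf₀.Nodup := hq₀nd.sublist hsub
    rw [hrest] at this
    exact (List.nodup_cons.mp this).1
  have hbnotrem : b ∉ removed := hsuf₀ b (by rw [hrest]; exact List.mem_cons_self)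
  -- behavior on other queues
  have hother : ∀ q ∈ Q₁ ++ q₀ :: Q₂, b ∉ q →
      q.dropWhile (fun x => decide (x ∈ removed ++ [b])) =
      q.dropWhile (fun x => decide (x ∈ removed)) := by
    intro q hq hbq
    obtain ⟨pre, hqeq, h1, h2⟩ := good_spec hg hq
    conv_lhs => rw [hqeq]
    rw [dropWhile_pre_suf]
    · intro x hx; exact List.mem_append_left _ (h1 x hx)
    · intro x hx
      simp only [List.mem_append, List.mem_singleton]
      rintro (h | rfl)
      · exact h2 x hx h
      · exact hbq (by rw [hqeq]; exact List.mem_append_right _ hx)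
  -- behavior on q₀
  have hq₀' : q₀.dropWhile (fun x => decide (x ∈ removed ++ [b])) = rest := by
    have : q₀ = (pre₀ ++ [b]) ++ rest := by
      rw [hq₀eq, hrest, List.append_assoc]; rfl
    conv_lhs => rw [this]
    rw [dropWhile_pre_suf]
    · intro x hx
      rcases List.mem_append.mp hx with h | h
      · exact List.mem_append_left _ (hpre₀ x h)
      · exact List.mem_append_right _ h
    · intro x hx
      simp only [List.mem_append, List.mem_singleton]
      rintro (h | rfl)
      · exact hsuf₀ x (by rw [hrest]; exact List.mem_cons_of_mem _ hx) h
      · exact hbrest hx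
  constructor
  · -- Good preserved
    intro q hq
    rcases List.mem_append.mp hq with hq1 | hq1
    · obtain ⟨pre, hqeq, h1, h2⟩ := good_spec hg (List.mem_append_left _ hq1)
      refine ⟨pre, _, hqeq, fun x hx => List.mem_append_left _ (h1 x hx), ?_⟩
      intro x hx
      simp only [List.mem_append, List.mem_singleton]
      rintro (h | rfl)
      · exact h2 x hx h
      · exact hbQ₁ (List.mem_flatten.mpr ⟨q, hq1, by rw [hqeq]; exact List.mem_append_right _ hx⟩)
    · rcases List.mem_cons.mp hq1 with rfl | hq2
      · refine ⟨pre₀ ++ [b], rest, by rw [hq₀eq, hrest, List.append_assoc]; rfl, ?_, ?_⟩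
        · intro x hx
          rcases List.mem_append.mp hx with h | h
          · exact List.mem_append_left _ (hpre₀ x h)
          · exact List.mem_append_right _ h
        · intro x hx
          simp only [List.mem_append, List.mem_singleton]
          rintro (h | rfl)
          · exact hsuf₀ x (by rw [hrest]; exact List.mem_cons_of_mem _ hx) h
          · exact hbrest hx
      · obtain ⟨pre, hqeq, h1, h2⟩ := good_spec hg (by
          exact List.mem_append_right _ (List.mem_cons_of_mem _ hq2))
        refine ⟨pre, _, hqeq, fun x hx => List.mem_append_left _ (h1 x hx), ?_⟩
        intro x hx
        simp only [List.mem_append, List.mem_singleton]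
        rintro (h | rfl)
        · exact h2 x hx h
        · exact hbQ₂ (List.mem_flatten.mpr ⟨q, hq2, by rw [hqeq]; exact List.mem_append_right _ hx⟩)
  · -- Perm
    have hmap1 : Q₁.map (fun q => q.dropWhile (fun x => decide (x ∈ removed ++ [b]))) =
        Q₁.map (fun q => q.dropWhile (fun x => decide (x ∈ removed))) := by
      apply List.map_congr_left
      intro q hq
      exact hother q (List.mem_append_left _ hq)
        (fun h => hbQ₁ (List.mem_flatten.mpr ⟨q, hq, h⟩))
    have hmap2 : Q₂.map (fun q => q.dropWhile (fun x => decide (x ∈ removed ++ [b]))) =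
        Q₂.map (fun q => q.dropWhile (fun x => decide (x ∈ removed))) := by
      apply List.map_congr_left
      intro q hq
      exact hother q (List.mem_append_right _ (List.mem_cons_of_mem _ hq))
        (fun h => hbQ₂ (List.mem_flatten.mpr ⟨q, hq, h⟩))
    simp only [confAfter, List.map_append, List.map_cons, List.flatten_append,
      List.flatten_cons, hmap1, hmap2, hq₀', ← hsufdef, hrest]
    have := List.perm_middle (a := b)
      (l₁ := (Q₁.map (fun q => q.dropWhile (fun x => decide (x ∈ removed)))).flatten)
      (l₂ := rest ++ (Q₂.map (fun q => q.dropWhile (fun x => decide (x ∈ removed)))).flatten)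
    simpa only [List.append_assoc, List.cons_append] using this

end Pop

section Arc
variable {B P : Type} [DecidableEq B]

lemma arc_of {Q : List (List B)} {removed : List B} {plt : B → P}
    (hg : Good Q removed) {q : List B} (hq : q ∈ Q) {c : B} {t : List B}
    (hdw : q.dropWhile (fun x => decide (x ∈ removed)) = c :: t)
    {b : B} (hb : b ∈ t) (hne : plt c ≠ plt b) :
    seqArc Q plt (plt c) (plt b) := by
  obtain ⟨pre, hqeq, h1, h2⟩ := good_spec hg hq
  rw [hdw] at hqeq
  obtain ⟨k, hk⟩ := List.mem_iff_getElem?.mp hb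
  refine ⟨hne, q, hq, pre.length, pre.length + (k + 1), by omega, ⟨c, ?_, rfl⟩, ⟨b, ?_, rfl⟩⟩
  · rw [hqeq, List.getElem?_append_right (le_refl _)]
    simp
  · rw [hqeq, List.getElem?_append_right (by omega)]
    have : pre.length + (k + 1) - pre.length = k + 1 := by omega
    rw [this]
    simpa using hk

lemma plts_finite (Q : List (List B)) (plt : B → P) : (pltsOf Q plt).Finite := by
  have hsub : pltsOf Q plt ⊆ plt '' {b | b ∈ Q.flatten} := by
    rintro x ⟨q, hq, b, hb, rfl⟩
    exact ⟨b, List.mem_flatten.mpr ⟨q, hq, hb⟩, rfl⟩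
  exact (Set.Finite.image plt (Q.flatten.finite_toSet)).subset hsub

end Arc

section Main
variable {B P : Type} [DecidableEq B]

lemma main_lemma (Q : List (List B)) (plt : B → P)
    (hnd : Q.flatten.Nodup) (X : List (Set P))
    (hdpd : IsDPD (seqArc Q plt) (pltsOf Q plt) X) (p : ℕ)
    (hW : ∀ C ∈ X, C.ncard ≤ p) (n : ℕ) :
    ∀ (removed : List B) (m₀ : ℕ),
      (confAfter Q removed).flatten.length + (X.length - m₀) ≤ n →
      Good Q removed →
      (removed ++ (confAfter Q removed).flatten).Perm Q.flatten →
      (∀ b ∈ (confAfter Q removed).flatten, ∃ j, m₀ ≤ j ∧ ∃ hj : j < X.length, plt b ∈ X[j]) →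
      (∀ t ∈ openAfter Q plt removed, ∃ h : m₀ < X.length, t ∈ X[m₀]) →
      ∃ ord' : List B,
        (removed ++ ord').Perm Q.flatten ∧
        (∀ r b, (r ++ [b]) <+: ord' → ∃ q ∈ confAfter Q (removed ++ r), q.head? = some b) ∧
        (∀ r, r <+: ord' → (openAfter Q plt (removed ++ r)).ncard ≤ p) := by
  induction n using Nat.strong_induction_on with
  | _ n IH =>
  intro removed m₀ hsum hg inv0 inv2 inv3
  by_cases hm : m₀ < X.length
  · -- open set bound at the current configuration
    have hopen_bound : (openAfter Q plt removed).ncard ≤ p := by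
      have hsub : openAfter Q plt removed ⊆ X[m₀]'hm := by
        intro t ht
        obtain ⟨h, ht'⟩ := inv3 t ht
        exact ht'
      have hfin : (X[m₀]'hm).Finite :=
        (plts_finite Q plt).subset (hdpd.1 _ (List.getElem_mem hm))
      exact le_trans (Set.ncard_le_ncard hsub hfin) (hW _ (List.getElem_mem hm))
    by_cases hpop : ∃ b, ∃ q' ∈ confAfter Q removed, q'.head? = some b ∧ plt b ∈ X[m₀]'hm
    · -- pop a bin
      obtain ⟨b, q', hq', hhead, hbX⟩ := hpop
      obtain ⟨q₀, hq₀, hq₀eq⟩ := List.mem_map.mp hq'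
      have hpop' := pop_lemma Q removed b hnd hg q₀ hq₀ (by rw [hq₀eq]; exact hhead)
      obtain ⟨hg', hperm⟩ := hpop'
      set removed' := removed ++ [b] with hrem'
      -- new sum is smaller
      have hlen : (confAfter Q removed).flatten.length =
          (confAfter Q removed').flatten.length + 1 := by
        rw [hperm.length_eq]; simp
      have hlt : (confAfter Q removed').flatten.length + (X.length - m₀) < n := by omega
      -- remaining bins shrink
      have hrem_sub : ∀ c ∈ (confAfter Q removed').flatten, c ∈ (confAfter Q removed).flatten := by
        intro c hc
        exact hperm.mem_iff.mpr (List.mem_cons_of_mem _ hc)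
      -- invariants for removed'
      have inv0' : (removed' ++ (confAfter Q removed').flatten).Perm Q.flatten := by
        have h1 : removed' ++ (confAfter Q removed').flatten
            = removed ++ (b :: (confAfter Q removed').flatten) := by
          rw [hrem', List.append_assoc]; rfl
        rw [h1]
        exact ((hperm.symm).append_left removed).trans inv0
      have inv2' : ∀ c ∈ (confAfter Q removed').flatten,
          ∃ j, m₀ ≤ j ∧ ∃ hj : j < X.length, plt c ∈ X[j] :=
        fun c hc => inv2 c (hrem_sub c hc)
      have inv3' : ∀ t ∈ openAfter Q plt removed', ∃ h : m₀ < X.length, t ∈ X[m₀] := by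
        rintro t ⟨⟨b', hb', hplt⟩, q, hq, b'', hb'', hplt2⟩
        rcases List.mem_append.mp hb' with h | h
        · refine inv3 t ⟨⟨b', h, hplt⟩, ?_⟩
          have : b'' ∈ (confAfter Q removed).flatten :=
            hrem_sub b'' (List.mem_flatten.mpr ⟨q, hq, hb''⟩)
          obtain ⟨q2, hq2, hb2⟩ := List.mem_flatten.mp this
          exact ⟨q2, hq2, b'', hb2, hplt2⟩
        · refine ⟨hm, ?_⟩
          rw [List.mem_singleton] at h
          subst h
          rw [← hplt]
          exact hbX
      obtain ⟨ord'', hc1, hc2, hc3⟩ :=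
        IH _ hlt removed' m₀ (by omega) hg' inv0' inv2' inv3'
      refine ⟨b :: ord'', ?_, ?_, ?_⟩
      · have : removed ++ b :: ord'' = removed' ++ ord'' := by
          rw [hrem', List.append_assoc]; rfl
        rw [this]; exact hc1
      · intro r c hpre
        cases r with
        | nil =>
          simp only [List.nil_append] at hpre ⊢
          have : c = b := (List.cons_prefix_cons.mp hpre).1
          subst this
          rw [List.append_nil]
          exact ⟨q', hq', hhead⟩
        | cons a r' =>
          rw [List.cons_append] at hpre
          obtain ⟨rfl, hpre'⟩ := List.cons_prefix_cons.mp hpre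
          have := hc2 r' c hpre'
          have heq : removed' ++ r' = removed ++ a :: r' := by
            rw [hrem', List.append_assoc]; rfl
          rwa [heq] at this
      · intro r hpre
        cases r with
        | nil => rw [List.append_nil]; exact hopen_bound
        | cons a r' =>
          obtain ⟨rfl, hpre'⟩ := List.cons_prefix_cons.mp hpre
          have := hc3 r' hpre'
          have heq : removed' ++ r' = removed ++ a :: r' := by
            rw [hrem', List.append_assoc]; rfl
          rwa [heq] at this
    · -- stuck: move to the next bag
      push_neg at hpop
      -- every remaining bin's pallet occurs in a bag with index ≥ m₀ + 1
      have inv2' : ∀ c ∈ (confAfter Q removed).flatten,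
          ∃ j, m₀ + 1 ≤ j ∧ ∃ hj : j < X.length, plt c ∈ X[j] := by
        intro c hc
        obtain ⟨q', hq', hcq'⟩ := List.mem_flatten.mp hc
        obtain ⟨q, hq, hqeq⟩ := List.mem_map.mp hq'
        cases hq'' : q' with
        | nil => rw [hq''] at hcq'; simp at hcq'
        | cons d t =>
        subst hq''
        -- the head d has an occurrence ≥ m₀ + 1
        have hd_mem : d ∈ (confAfter Q removed).flatten :=
          List.mem_flatten.mpr ⟨d :: t, hq', List.mem_cons_self⟩
        have hd_not : plt d ∉ X[m₀]'hm := by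
          intro hcon
          exact hpop d (d :: t) hq' rfl hcon
        obtain ⟨jd, hjd1, hjd2, hjd3⟩ := inv2 d hd_mem
        have hjd : m₀ + 1 ≤ jd := by
          rcases Nat.lt_or_ge m₀ jd with h | h
          · omega
          · exfalso; have : jd = m₀ := by omega
            subst this; exact hd_not hjd3
        rcases List.mem_cons.mp hcq' with rfl | hct
        · exact ⟨jd, hjd, hjd2, hjd3⟩
        · by_cases hpe : plt d = plt c
          · exact ⟨jd, hjd, hjd2, hpe ▸ hjd3⟩
          · have harc := arc_of hg hq (by rw [hqeq]) hct hpe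
            obtain ⟨i, j, hij, hi, hj, hui, hvj⟩ := hdpd.2.2.1 _ _ harc
            rcases Nat.lt_or_ge j (m₀ + 1) with hjlt | hjge
            · exfalso
              -- then i ≤ j ≤ m₀ ≤ jd, so plt d ∈ X[m₀], contradiction
              have : plt d ∈ X[m₀]'hm :=
                hdpd.2.2.2 (plt d) i jd m₀ (by omega) (by omega) hi hjd2 hm hui hjd3
              exact hd_not this
            · exact ⟨j, hjge, hj, hvj⟩
      have inv3' : ∀ t ∈ openAfter Q plt removed,
          ∃ h : m₀ + 1 < X.length, t ∈ X[m₀ + 1] := by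
        intro t ht
        obtain ⟨hrem, q, hq, b', hb', hplt⟩ := ht
        have hb'mem : b' ∈ (confAfter Q removed).flatten := List.mem_flatten.mpr ⟨q, hq, hb'⟩
        obtain ⟨j, hj1, hj2, hj3⟩ := inv2' b' hb'mem
        obtain ⟨_, htm⟩ := inv3 t ⟨hrem, q, hq, b', hb', hplt⟩
        have hm1 : m₀ + 1 < X.length := by omega
        refine ⟨hm1, ?_⟩
        rw [← hplt] at htm ⊢
        exact hdpd.2.2.2 (plt b') m₀ j (m₀ + 1) (by omega) hj1 hm hj2 hm1 htm hj3
      have hlt : (confAfter Q removed).flatten.length + (X.length - (m₀ + 1)) < n := by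
        omega
      obtain ⟨ord', hc1, hc2, hc3⟩ :=
        IH _ hlt removed (m₀ + 1) (by omega) hg inv0 inv2' inv3'
      exact ⟨ord', hc1, hc2, hc3⟩
  · -- m₀ ≥ X.length : everything must already be removed
    have hempty : (confAfter Q removed).flatten = [] := by
      rw [List.eq_nil_iff_forall_not_mem]
      intro c hc
      obtain ⟨j, hj1, hj2, _⟩ := inv2 c hc
      omega
    have hopen : openAfter Q plt removed = ∅ := by
      rw [Set.eq_empty_iff_forall_notMem]
      intro t ht
      obtain ⟨h, _⟩ := inv3 t ht
      omega
    refine ⟨[], ?_, ?_, ?_⟩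
    · rw [List.append_nil]
      have := inv0
      rw [hempty, List.append_nil] at this
      exact this
    · intro r b hpre
      rw [List.prefix_nil] at hpre
      simp at hpre
    · intro r hpre
      rw [List.prefix_nil] at hpre
      subst hpre
      rw [List.append_nil, hopen]
      simp

end Main


/-- If every pallet of `Q` has at least two bins and there is
a directed path-decomposition of the sequence graph `G_Q` of width `p - 1`
(i.e. every bag has at most `p` elements), then there is a processing of `Q`
that uses at most `p` stack-up places. -/
theorem dpd_gives_processing {B P : Type} [DecidableEq B]
    (Q : List (List B)) (plt : B → P) (hnd : Q.flatten.Nodup)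
    (htwo : EveryPalletTwoBins Q plt) (p : ℕ)
    (hX : ∃ X : List (Set P), IsDPD (seqArc Q plt) (pltsOf Q plt) X ∧
      ∀ C ∈ X, C.ncard ≤ p) :
    ∃ ord : List B, IsProcessing Q ord ∧ UsesAtMost Q plt ord p := by
  obtain ⟨X, hdpd, hW⟩ := hX
  have h0 : confAfter Q ([] : List B) = Q := by
    have hdw : ∀ l : List B, l.dropWhile (fun b => decide (b ∈ ([] : List B))) = l := by
      intro l
      have := dropWhile_pre_suf ([] : List B) [] l (by simp) (by simp)
      simpa using this
    simp only [confAfter, hdw, List.map_id']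
  have hmain := main_lemma Q plt hnd X hdpd p hW
    (Q.flatten.length + X.length) ([] : List B) 0
    (by rw [h0]; simp)
    (fun q hq => ⟨[], q, rfl, by simp, fun b _ hb => by simp at hb⟩)
    (by rw [h0]; simp)
    (by
      rw [h0]
      intro b hb
      obtain ⟨q, hq, hbq⟩ := List.mem_flatten.mp hb
      obtain ⟨i, hi, hmem⟩ := hdpd.2.1 (plt b) ⟨q, hq, b, hbq, rfl⟩
      exact ⟨i, Nat.zero_le _, hi, hmem⟩)
    (by rintro t ⟨⟨b, hb, _⟩, _⟩; simp at hb)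
  obtain ⟨ord, hc1, hc2, hc3⟩ := hmain
  rw [List.nil_append] at hc1
  refine ⟨ord, ⟨hc1, ?_⟩, ?_⟩
  · intro i hi
    have hpre : ord.take i ++ [ord[i]] <+: ord := by
      have : ord.take i ++ [ord[i]] = ord.take (i + 1) := by
        rw [List.take_succ, List.getElem?_eq_getElem hi]
        rfl
      rw [this]
      exact List.take_prefix _ _
    have := hc2 (ord.take i) ord[i] hpre
    rwa [List.nil_append] at this
  · intro i hi
    have := hc3 (ord.take i) (List.take_prefix _ _)
    rwa [List.nil_append] at this
end

section
/- Let Q be an instance of the FIFO stack-up problem in which every pallet of plts(Q) has at least two bins in the sequences of Q, and let p ≥ 1. Then there exists a processing of Q that uses at most p stack-up places if and only if the directed pathwidth of the sequence graph G_Q is at most p − 1. -/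
/-- The directed pathwidth of the digraph with vertex set `Vs` and arc relation
`A`: the smallest `w` such that there is a directed path-decomposition all of
whose bags have at most `w + 1` elements (i.e. of width at most `w`). -/
noncomputable def dirPathwidth {V : Type} (A : V → V → Prop) (Vs : Set V) : ℕ :=
  sInf {w | ∃ X : List (Set V), IsDPD A Vs X ∧ ∀ C ∈ X, C.ncard ≤ w + 1}




set_option linter.unusedSectionVars false
namespace StackAux

variable {B P : Type} [DecidableEq B]

/-- `R` is downward closed in `q`. -/
def DC (R q : List B) : Prop :=
  ∀ i j : ℕ, i < j → ∀ (hj : j < q.length), q[j] ∈ R → ∀ (hi : i < q.length), q[i] ∈ R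

lemma DC.tail {R : List B} {a : B} {t : List B} (h : DC R (a :: t)) : DC R t := by
  intro i j hij hj hjR hi
  have := h (i+1) (j+1) (by omega) (by simpa using Nat.succ_lt_succ hj)
    (by simpa using hjR) (by simpa using Nat.succ_lt_succ hi)
  simpa using this

lemma dropWhile_eq_filter {R q : List B} (h : DC R q) :
    q.dropWhile (fun b => decide (b ∈ R)) = q.filter (fun b => !decide (b ∈ R)) := by
  induction q with
  | nil => rfl
  | cons a t ih =>
    by_cases ha : a ∈ R
    · rw [List.dropWhile_cons_of_pos (by simpa using ha),
        List.filter_cons_of_neg (by simpa using ha), ih h.tail]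
    · rw [List.dropWhile_cons_of_neg (by simpa using ha),
        List.filter_cons_of_pos (by simpa using ha)]
      have hself : List.filter (fun b => !decide (b ∈ R)) t = t := by
        refine List.filter_eq_self.mpr fun b hb => ?_
        obtain ⟨j, hj, hjb⟩ := List.getElem_of_mem hb
        by_contra hbR
        have hbR' : b ∈ R := by simpa using hbR
        have := h 0 (j+1) (by omega) (by simp; omega)
          (by simpa [hjb] using hbR') (by simp)
        simp only [List.getElem_cons_zero] at this
        exact ha this
      rw [hself]

lemma filter_head_first {q : List B} (hq : q.Nodup) {p : B → Bool} {x : B}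
    (hx : (q.filter p).head? = some x) :
    ∀ i j (hi : i < q.length) (hj : j < q.length), q[j] = x → i < j → p q[i] = false := by
  induction q with
  | nil => intro i j hi; simp at hi
  | cons a t ih =>
    by_cases hpa : p a
    · rw [List.filter_cons_of_pos hpa] at hx
      have hxa : x = a := by simpa using hx.symm
      subst hxa
      intro i j hi hj hjx hij
      match j, hj with
      | 0, _ => omega
      | (k+1), hj =>
        exfalso
        have : x ∈ t := by
          rw [List.getElem_cons_succ] at hjx
          exact hjx ▸ List.getElem_mem _
        exact (List.nodup_cons.mp hq).1 this
    · rw [List.filter_cons_of_neg hpa] at hx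
      intro i j hi hj hjx hij
      match j, hj with
      | 0, _ => omega
      | (k+1), hj =>
        match i, hi with
        | 0, _ => simpa using hpa
        | (l+1), hi =>
          rw [List.getElem_cons_succ] at hjx ⊢
          exact ih (List.nodup_cons.mp hq).2 hx l k (by simpa using hi) (by simpa using hj) hjx (by omega)

lemma queue_unique {Q : List (List B)} (hnd : Q.flatten.Nodup) {q q' : List B}
    (hq : q ∈ Q) (hq' : q' ∈ Q) {b : B} (hb : b ∈ q) (hb' : b ∈ q') : q = q' := by
  by_contra hne
  have hpw := (List.nodup_flatten.mp hnd).2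
  haveI : Std.Symm (@List.Disjoint B) := ⟨fun _ _ h => h.symm⟩
  exact (hpw.forall hq hq' hne) hb hb'

lemma mem_take_iff {ord : List B} (hnd : ord.Nodup) {k : ℕ} (hk : k < ord.length)
    {b : B} (hb : ord[k] = b) (m : ℕ) : b ∈ ord.take m ↔ k < m := by
  constructor
  · intro h
    obtain ⟨j, hj, hjb⟩ := List.getElem_of_mem h
    rw [List.getElem_take] at hjb
    have hjl : j < m := by
      have := hj; rw [List.length_take] at this; omega
    have hjlen : j < ord.length := by
      have := hj; rw [List.length_take] at this; omega
    have : j = k := hnd.getElem_inj_iff.mp (by rw [hjb, hb])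
    omega
  · intro h
    have hk' : k < (ord.take m).length := by rw [List.length_take]; omega
    have : (ord.take m)[k] = b := by rw [List.getElem_take]; exact hb
    exact this ▸ List.getElem_mem _

lemma sublist_eq_of_mem_iff {l : List B} (hnd : l.Nodup) :
    ∀ {s₁ s₂ : List B}, s₁.Sublist l → s₂.Sublist l → (∀ b, b ∈ s₁ ↔ b ∈ s₂) → s₁ = s₂ := by
  induction l with
  | nil =>
    intro s₁ s₂ h₁ h₂ _
    rw [List.sublist_nil.mp h₁, List.sublist_nil.mp h₂]
  | cons a t ih =>
    intro s₁ s₂ h₁ h₂ hmem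
    have hat : a ∉ t := (List.nodup_cons.mp hnd).1
    have hndt : t.Nodup := (List.nodup_cons.mp hnd).2
    by_cases ha : a ∈ s₁
    · have ha₂ : a ∈ s₂ := (hmem a).mp ha
      rcases List.sublist_cons_iff.mp h₁ with h | ⟨r₁, rfl, hr₁⟩
      · exact absurd (h.mem ha) hat
      rcases List.sublist_cons_iff.mp h₂ with h | ⟨r₂, rfl, hr₂⟩
      · exact absurd (h.mem ha₂) hat
      have har₁ : a ∉ r₁ := fun h => hat (hr₁.mem h)
      have har₂ : a ∉ r₂ := fun h => hat (hr₂.mem h)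
      have : r₁ = r₂ := by
        refine ih hndt hr₁ hr₂ (fun b => ?_)
        constructor
        · intro hb
          have hba : b ≠ a := fun h => har₁ (h ▸ hb)
          have := (hmem b).mp (List.mem_cons_of_mem _ hb)
          rcases List.mem_cons.mp this with h | h
          · exact absurd h hba
          · exact h
        · intro hb
          have hba : b ≠ a := fun h => har₂ (h ▸ hb)
          have := (hmem b).mpr (List.mem_cons_of_mem _ hb)
          rcases List.mem_cons.mp this with h | h
          · exact absurd h hba
          · exact h
      rw [this]
    · have ha₂ : a ∉ s₂ := fun h => ha ((hmem a).mpr h)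
      have hs₁ : s₁.Sublist t := by
        rcases List.sublist_cons_iff.mp h₁ with h | ⟨r₁, rfl, hr₁⟩
        · exact h
        · exact absurd (List.mem_cons_self : a ∈ a :: r₁) ha
      have hs₂ : s₂.Sublist t := by
        rcases List.sublist_cons_iff.mp h₂ with h | ⟨r₂, rfl, hr₂⟩
        · exact h
        · exact absurd (List.mem_cons_self : a ∈ a :: r₂) ha₂
      exact ih hndt hs₁ hs₂ hmem



lemma proc_DC {Q : List (List B)} {ord : List B} (hproc : IsProcessing Q ord)
    (hnd : Q.flatten.Nodup) : ∀ m, ∀ q ∈ Q, DC (ord.take m) q := by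
  intro m
  induction m with
  | zero => intro q hq i j hij hj hjR hi; simp at hjR
  | succ m ih =>
    by_cases hm : m < ord.length
    · intro q hq i j hij hj hjR hi
      rw [List.take_succ, List.getElem?_eq_getElem hm] at hjR ⊢
      simp only [List.mem_append, Option.toList_some, List.mem_singleton] at hjR
      rcases hjR with hjR | hjR
      · exact List.mem_append.mpr (Or.inl (ih q hq i j hij hj hjR hi))
      · obtain ⟨q₀, hq₀, hhead⟩ := hproc.2 m hm
        obtain ⟨q', hq', hq₀e⟩ := List.mem_map.mp hq₀
        rw [dropWhile_eq_filter (ih q' hq')] at hq₀e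
        rw [← hq₀e] at hhead
        have hx : ord[m] ∈ q'.filter (fun b => !decide (b ∈ ord.take m)) := by
          have := List.mem_of_mem_head? (l := q'.filter (fun b => !decide (b ∈ ord.take m)))
            (a := ord[m])
          apply this
          rw [hhead]; rfl
        have hxq' : ord[m] ∈ q' := List.mem_of_mem_filter hx
        have hqq' : q = q' := queue_unique hnd hq hq' (hjR ▸ List.getElem_mem hj) hxq'
        subst hqq'
        have hqnd : q.Nodup := (List.nodup_flatten.mp hnd).1 q hq
        have := filter_head_first hqnd hhead i j hi hj hjR hij
        simp only [Bool.not_eq_false', decide_eq_true_eq] at this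
        exact List.mem_append.mpr (Or.inl this)
    · have heq : ord.take (m+1) = ord.take m := by
        rw [List.take_of_length_le (by omega), List.take_of_length_le (by omega)]
      rw [heq]; exact ih

lemma mem_confAfter {Q : List (List B)} {ord : List B} (hproc : IsProcessing Q ord)
    (hnd : Q.flatten.Nodup) (m : ℕ) (b : B) :
    (∃ q' ∈ confAfter Q (ord.take m), b ∈ q') ↔ b ∈ Q.flatten ∧ b ∉ ord.take m := by
  constructor
  · rintro ⟨q', hq', hb⟩
    obtain ⟨q, hq, rfl⟩ := List.mem_map.mp hq'
    rw [dropWhile_eq_filter (proc_DC hproc hnd m q hq), List.mem_filter] at hb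
    exact ⟨List.mem_flatten.mpr ⟨q, hq, hb.1⟩, by simpa using hb.2⟩
  · rintro ⟨hbf, hbm⟩
    obtain ⟨q, hq, hbq⟩ := List.mem_flatten.mp hbf
    refine ⟨_, List.mem_map_of_mem hq, ?_⟩
    rw [dropWhile_eq_filter (proc_DC hproc hnd m q hq), List.mem_filter]
    exact ⟨hbq, by simpa using hbm⟩

lemma mem_openAfter {Q : List (List B)} {ord : List B} {plt : B → P}
    (hproc : IsProcessing Q ord) (hnd : Q.flatten.Nodup) (m : ℕ) (t : P) :
    t ∈ openAfter Q plt (ord.take m) ↔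
      (∃ b ∈ ord.take m, plt b = t) ∧ ∃ b ∈ Q.flatten, b ∉ ord.take m ∧ plt b = t := by
  show ((∃ b ∈ ord.take m, plt b = t) ∧ _) ↔ _
  constructor
  · rintro ⟨h1, q', hq', b, hb, hbt⟩
    exact ⟨h1, b, ((mem_confAfter hproc hnd m b).mp ⟨q', hq', hb⟩).1,
      ((mem_confAfter hproc hnd m b).mp ⟨q', hq', hb⟩).2, hbt⟩
  · rintro ⟨h1, b, hbf, hbm, hbt⟩
    obtain ⟨q', hq', hb⟩ := (mem_confAfter hproc hnd m b).mpr ⟨hbf, hbm⟩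
    exact ⟨h1, q', hq', b, hb, hbt⟩

lemma open_between {Q : List (List B)} {ord : List B} {plt : B → P}
    (hproc : IsProcessing Q ord) (hnd : Q.flatten.Nodup) {t : P} {ka kb m : ℕ}
    (hka : ka < ord.length) (hkb : kb < ord.length)
    (hta : plt ord[ka] = t) (htb : plt ord[kb] = t)
    (h1 : ka < m) (h2 : m ≤ kb) : t ∈ openAfter Q plt (ord.take m) := by
  have hordnd : ord.Nodup := hproc.1.nodup_iff.mpr hnd
  rw [mem_openAfter hproc hnd]
  refine ⟨⟨ord[ka], (mem_take_iff hordnd hka rfl m).mpr h1, hta⟩,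
    ord[kb], hproc.1.mem_iff.mp (List.getElem_mem hkb), ?_, htb⟩
  rw [mem_take_iff hordnd hkb rfl m]
  omega

lemma two_positions {Q : List (List B)} {ord : List B} {plt : B → P}
    (hproc : IsProcessing Q ord) (hnd : Q.flatten.Nodup)
    (htwo : EveryPalletTwoBins Q plt) {t : P} (ht : t ∈ pltsOf Q plt) :
    ∃ ka kb, ∃ (hka : ka < ord.length) (hkb : kb < ord.length),
      ka < kb ∧ plt ord[ka] = t ∧ plt ord[kb] = t := by
  have hordnd : ord.Nodup := hproc.1.nodup_iff.mpr hnd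
  obtain ⟨b₁, b₂, hne, hb₁, hb₂, ht₁, ht₂⟩ := htwo t ht
  obtain ⟨k₁, hk₁, he₁⟩ := List.getElem_of_mem (hproc.1.mem_iff.mpr hb₁)
  obtain ⟨k₂, hk₂, he₂⟩ := List.getElem_of_mem (hproc.1.mem_iff.mpr hb₂)
  have hkne : k₁ ≠ k₂ := by
    intro h; apply hne; rw [← he₁, ← he₂]; subst h; rfl
  rcases Nat.lt_or_ge k₁ k₂ with h | h
  · exact ⟨k₁, k₂, hk₁, hk₂, h, he₁ ▸ ht₁, he₂ ▸ ht₂⟩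
  · exact ⟨k₂, k₁, hk₂, hk₁, by omega, he₂ ▸ ht₂, he₁ ▸ ht₁⟩

lemma pltsOf_finite {Q : List (List B)} (plt : B → P) : (pltsOf Q plt).Finite := by
  have : pltsOf Q plt = plt '' {b | b ∈ Q.flatten} := by
    ext t
    simp only [pltsOf, Set.mem_setOf_eq, Set.mem_image, List.mem_flatten]
    constructor
    · rintro ⟨q, hq, b, hb, rfl⟩; exact ⟨b, ⟨q, hq, hb⟩, rfl⟩
    · rintro ⟨b, ⟨q, hq, hb⟩, rfl⟩; exact ⟨q, hq, b, hb, rfl⟩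
  rw [this]
  exact (Q.flatten.finite_toSet).image plt

lemma forward_dir {Q : List (List B)} {plt : B → P} (hnd : Q.flatten.Nodup)
    (htwo : EveryPalletTwoBins Q plt) {ord : List B} (hproc : IsProcessing Q ord)
    {p : ℕ} (hp : 1 ≤ p) (huse : UsesAtMost Q plt ord p) :
    dirPathwidth (seqArc Q plt) (pltsOf Q plt) ≤ p - 1 := by
  have hordnd : ord.Nodup := hproc.1.nodup_iff.mpr hnd
  set n := ord.length with hn
  set X : List (Set P) := (List.range (n+1)).map (fun m => openAfter Q plt (ord.take m))
    with hX
  have hlen : X.length = n + 1 := by simp [hX]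
  have hXel : ∀ i (hi : i < X.length), X[i] = openAfter Q plt (ord.take i) := by
    intro i hi
    simp [hX]
  apply Nat.sInf_le
  refine ⟨X, ⟨?_, ?_, ?_, ?_⟩, ?_⟩
  · -- subsets of Vs
    intro C hC
    obtain ⟨m, hm, rfl⟩ := List.mem_map.mp hC
    rintro t ⟨h1, q', hq', b, hb, hbt⟩
    obtain ⟨q, hq, rfl⟩ := List.mem_map.mp hq'
    exact ⟨q, hq, b, (List.dropWhile_sublist _).mem hb, hbt⟩
  · -- coverage
    intro t ht
    obtain ⟨ka, kb, hka, hkb, hlt, hta, htb⟩ := two_positions hproc hnd htwo ht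
    refine ⟨ka + 1, by omega, ?_⟩
    rw [hXel (ka+1) (by omega)]
    exact open_between hproc hnd hka hkb hta htb (by omega) (by omega)
  · -- arcs
    rintro u v ⟨huv, q, hq, iq, jq, hij, ⟨b, hbq, hbu⟩, ⟨b', hbq', hbv⟩⟩
    obtain ⟨hiq, hbe⟩ := List.getElem?_eq_some_iff.mp hbq
    obtain ⟨hjq, hbe'⟩ := List.getElem?_eq_some_iff.mp hbq'
    have hbne : b ≠ b' := by intro h; exact huv (by rw [← hbu, ← hbv, h])
    have hbf : b ∈ Q.flatten := List.mem_flatten.mpr ⟨q, hq, hbe ▸ List.getElem_mem hiq⟩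
    have hbf' : b' ∈ Q.flatten := List.mem_flatten.mpr ⟨q, hq, hbe' ▸ List.getElem_mem hjq⟩
    obtain ⟨tb, htb, htbe⟩ := List.getElem_of_mem (hproc.1.mem_iff.mpr hbf)
    obtain ⟨tb', htb', htbe'⟩ := List.getElem_of_mem (hproc.1.mem_iff.mpr hbf')
    -- tb < tb'
    have hmem : q[jq] ∈ ord.take (tb'+1) := by
      rw [hbe']
      exact (mem_take_iff hordnd htb' htbe' (tb'+1)).mpr (by omega)
    have hbmem : b ∈ ord.take (tb'+1) :=
      hbe ▸ proc_DC hproc hnd (tb'+1) q hq iq jq hij hjq hmem hiq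
    have htt : tb < tb' + 1 := (mem_take_iff hordnd htb htbe (tb'+1)).mp hbmem
    have htne : tb ≠ tb' := by
      intro h; apply hbne; rw [← htbe, ← htbe']; subst h; rfl
    have htt' : tb < tb' := by omega
    -- u positions
    have hu : u ∈ pltsOf Q plt := ⟨q, hq, b, hbe ▸ List.getElem_mem hiq, hbu⟩
    have hv : v ∈ pltsOf Q plt := ⟨q, hq, b', hbe' ▸ List.getElem_mem hjq, hbv⟩
    obtain ⟨ra, rb, hra, hrb, hrab, hua, hub⟩ := two_positions hproc hnd htwo hu
    obtain ⟨sa, sb, hsa, hsb, hsab, hva, hvb⟩ := two_positions hproc hnd htwo hv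
    have htbu : plt ord[tb] = u := by rw [htbe]; exact hbu
    have htbv : plt ord[tb'] = v := by rw [htbe']; exact hbv
    have hkau : min ra tb < n := by omega
    have hkbu : max rb tb < n := by omega
    have hkav : min sa tb' < n := by omega
    have hkbv : max sb tb' < n := by omega
    have hlab_kau : plt ord[min ra tb] = u := by
      rcases min_choice ra tb with h | h <;> simp only [h] <;> assumption
    have hlab_kbu : plt ord[max rb tb] = u := by
      rcases max_choice rb tb with h | h <;> simp only [h] <;> assumption
    have hlab_kav : plt ord[min sa tb'] = v := by
      rcases min_choice sa tb' with h | h <;> simp only [h] <;> assumption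
    have hlab_kbv : plt ord[max sb tb'] = v := by
      rcases max_choice sb tb' with h | h <;> simp only [h] <;> assumption
    refine ⟨min ra tb + 1, max sb tb', by omega, by omega, by omega, ?_, ?_⟩
    · rw [hXel _ (by omega)]
      exact open_between hproc hnd hkau hkbu hlab_kau hlab_kbu (by omega)
        (by omega)
    · rw [hXel _ (by omega)]
      exact open_between hproc hnd hkav hkbv hlab_kav hlab_kbv (by omega)
        (by omega)
  · -- interval
    intro t i j l hil hlj hi hj hl hti htj
    rw [hXel i hi] at hti
    rw [hXel j hj] at htj
    rw [hXel l hl]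
    rw [mem_openAfter hproc hnd] at hti htj ⊢
    obtain ⟨⟨c, hc, hct⟩, _⟩ := hti
    obtain ⟨_, d, hdf, hdm, hdt⟩ := htj
    have htl : ord.take i = (ord.take l).take i := by
      rw [List.take_take, min_eq_left hil]
    have htl' : ord.take l = (ord.take j).take l := by
      rw [List.take_take, min_eq_left hlj]
    refine ⟨⟨c, ?_, hct⟩, d, hdf, ?_, hdt⟩
    · rw [htl] at hc; exact List.take_subset _ _ hc
    · intro hdl; apply hdm; rw [htl'] at hdl; exact List.take_subset _ _ hdl
  · -- sizes
    intro C hC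
    obtain ⟨m, hm, rfl⟩ := List.mem_map.mp hC
    rw [List.mem_range] at hm
    have := huse m (by omega)
    omega

lemma isProcessing_of_filter {Q : List (List B)} {ord : List B}
    (hnd : Q.flatten.Nodup) (hperm : ord.Perm Q.flatten)
    (hfil : ∀ q ∈ Q, q = ord.filter (fun b => decide (b ∈ q))) : IsProcessing Q ord := by
  have hordnd : ord.Nodup := hperm.nodup_iff.mpr hnd
  refine ⟨hperm, fun m hm => ?_⟩
  have hbf : ord[m] ∈ Q.flatten := hperm.mem_iff.mp (List.getElem_mem hm)
  obtain ⟨q, hq, hbq⟩ := List.mem_flatten.mp hbf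
  refine ⟨_, List.mem_map_of_mem hq, ?_⟩
  have hsplit : ord = ord.take m ++ (ord[m] :: ord.drop (m+1)) := by
    rw [← List.drop_eq_getElem_cons hm, List.take_append_drop]
  have hq' := hfil q hq
  rw [hsplit, List.filter_append, List.filter_cons_of_pos (by simpa using hbq)] at hq'
  rw [hq', List.dropWhile_append]
  have hnil : (List.filter (fun b => decide (b ∈ q)) (ord.take m)).dropWhile
      (fun b => decide (b ∈ ord.take m)) = [] := by
    rw [List.dropWhile_eq_nil_iff]
    intro x hx
    simpa using (List.mem_filter.mp hx).1
  rw [hnil]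
  simp only [List.isEmpty_nil, if_true]
  have hnm : ¬ (ord[m] ∈ ord.take m) := by
    rw [mem_take_iff hordnd hm rfl m]; omega
  rw [List.dropWhile_cons_of_neg (by simpa using hnm)]
  rfl

/-- `c` occurs at a position ≤ that of `b` in some queue. -/
def Pre (Q : List (List B)) (c b : B) : Prop :=
  ∃ q ∈ Q, ∃ i j, ∃ (hi : i < q.length) (hj : j < q.length), i ≤ j ∧ q[i] = c ∧ q[j] = b

/-- Set of bags containing `t`. -/
def bagSet (X : List (Set P)) (t : P) : Set ℕ := {i | ∃ hi : i < X.length, t ∈ X[i]}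

noncomputable def FbD (X : List (Set P)) (t : P) : ℕ := sInf (bagSet X t)
noncomputable def LbD (X : List (Set P)) (t : P) : ℕ := sSup (bagSet X t)

/-- The stage at which bin `b` is removed. -/
noncomputable def stage (Q : List (List B)) (plt : B → P) (X : List (Set P)) (b : B) : ℕ :=
  sSup {m | ∃ c, Pre Q c b ∧ m = FbD X (plt c)}

lemma bagSet_bdd (X : List (Set P)) (t : P) : BddAbove (bagSet X t) := by
  refine ⟨X.length, ?_⟩
  rintro i ⟨hi, _⟩
  exact le_of_lt hi

lemma backward_dir {Q : List (List B)} {plt : B → P} (hnd : Q.flatten.Nodup)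
    {p : ℕ} (hp : 1 ≤ p)
    (hdpw : dirPathwidth (seqArc Q plt) (pltsOf Q plt) ≤ p - 1) :
    ∃ ord : List B, IsProcessing Q ord ∧ UsesAtMost Q plt ord p := by
  classical
  have harc_mem : ∀ u v, seqArc Q plt u v → u ∈ pltsOf Q plt ∧ v ∈ pltsOf Q plt := by
    rintro u v ⟨huv, q, hq, i, j, hij, ⟨b, hb, hbu⟩, ⟨b', hb', hbv⟩⟩
    obtain ⟨hi, hbe⟩ := List.getElem?_eq_some_iff.mp hb
    obtain ⟨hj, hbe'⟩ := List.getElem?_eq_some_iff.mp hb'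
    exact ⟨⟨q, hq, b, hbe ▸ List.getElem_mem hi, hbu⟩,
      ⟨q, hq, b', hbe' ▸ List.getElem_mem hj, hbv⟩⟩
  have hne : {w | ∃ X : List (Set P), IsDPD (seqArc Q plt) (pltsOf Q plt) X ∧
      ∀ C ∈ X, C.ncard ≤ w + 1}.Nonempty := by
    refine ⟨(pltsOf Q plt).ncard, [pltsOf Q plt], ⟨?_, ?_, ?_, ?_⟩, ?_⟩
    · intro C hC; rw [List.mem_singleton] at hC; subst hC; exact subset_rfl
    · intro v hv; exact ⟨0, by simp, by simpa⟩
    · intro u v huv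
      exact ⟨0, 0, le_refl 0, by simp, by simp, by simpa using (harc_mem u v huv).1,
        by simpa using (harc_mem u v huv).2⟩
    · intro v i j l hil hlj hi hj hl h1 h2
      simp only [List.length_singleton] at hi hl
      interval_cases l
      interval_cases i
      simpa using h1
    · intro C hC; rw [List.mem_singleton] at hC; subst hC; exact Nat.le_succ _
  obtain ⟨X, ⟨hsub, hcov, harc, hint⟩, hsz⟩ := Nat.sInf_mem hne
  have hdpw' : sInf {w | ∃ X : List (Set P), IsDPD (seqArc Q plt) (pltsOf Q plt) X ∧
      ∀ C ∈ X, C.ncard ≤ w + 1} ≤ p - 1 := hdpw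
  have hszp : ∀ C ∈ X, C.ncard ≤ p := by
    intro C hC
    have h1 := hsz C hC
    omega
  have hSne : ∀ t ∈ pltsOf Q plt, (bagSet X t).Nonempty := by
    intro t ht; obtain ⟨i, hi, h⟩ := hcov t ht; exact ⟨i, hi, h⟩
  have hplts : ∀ b ∈ Q.flatten, plt b ∈ pltsOf Q plt := by
    intro b hb; obtain ⟨q, hq, hbq⟩ := List.mem_flatten.mp hb; exact ⟨q, hq, b, hbq, rfl⟩
  have hFmem : ∀ t ∈ pltsOf Q plt, FbD X t ∈ bagSet X t :=
    fun t ht => Nat.sInf_mem (hSne t ht)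
  have hLmem : ∀ t ∈ pltsOf Q plt, LbD X t ∈ bagSet X t :=
    fun t ht => Nat.sSup_mem (hSne t ht) (bagSet_bdd X t)
  have hpre_flat : ∀ {c b : B}, Pre Q c b → c ∈ Q.flatten ∧ b ∈ Q.flatten := by
    rintro c b ⟨q, hq, i, j, hi, hj, hij, rfl, rfl⟩
    exact ⟨List.mem_flatten.mpr ⟨q, hq, List.getElem_mem hi⟩,
      List.mem_flatten.mpr ⟨q, hq, List.getElem_mem hj⟩⟩
  have hpre_self : ∀ b ∈ Q.flatten, Pre Q b b := by
    intro b hb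
    obtain ⟨q, hq, hbq⟩ := List.mem_flatten.mp hb
    obtain ⟨i, hi, he⟩ := List.getElem_of_mem hbq
    exact ⟨q, hq, i, i, hi, hi, le_refl i, he, he⟩
  have hpre_trans : ∀ {d c b : B}, Pre Q d c → Pre Q c b → Pre Q d b := by
    rintro d c b ⟨q₁, hq₁, i, j, hi, hj, hij, hde, hce⟩
      ⟨q₂, hq₂, i', j', hi', hj', hij', hce', hbe⟩
    have hqq : q₁ = q₂ := queue_unique hnd hq₁ hq₂ (hce ▸ List.getElem_mem hj)
      (hce' ▸ List.getElem_mem hi')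
    subst hqq
    have hq1nd : q₁.Nodup := (List.nodup_flatten.mp hnd).1 q₁ hq₁
    have hji : j = i' := hq1nd.getElem_inj_iff.mp (by rw [hce, hce'])
    exact ⟨q₁, hq₁, i, j', hi, hj', by omega, hde, hbe⟩
  have hFL : ∀ {c b : B}, Pre Q c b → FbD X (plt c) ≤ LbD X (plt b) := by
    intro c b hpcb
    by_cases hpl : plt c = plt b
    · rw [hpl]
      exact le_trans (Nat.sInf_le (hLmem _ (hplts b (hpre_flat hpcb).2)))
        (le_refl _)
    · obtain ⟨q, hq, i, j, hi, hj, hij, hce, hbe⟩ := hpcb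
      have hijs : i < j := by
        rcases Nat.lt_or_ge i j with h | h
        · exact h
        · exfalso
          have hieq : i = j := by omega
          apply hpl; rw [← hce, ← hbe]; subst hieq; rfl
      have harcuv : seqArc Q plt (plt c) (plt b) :=
        ⟨hpl, q, hq, i, j, hijs, ⟨c, by rw [List.getElem?_eq_getElem hi, hce], rfl⟩,
          ⟨b, by rw [List.getElem?_eq_getElem hj, hbe], rfl⟩⟩
      obtain ⟨i', j', hij', hi', hj', hu, hv⟩ := harc _ _ harcuv
      calc FbD X (plt c) ≤ i' := Nat.sInf_le ⟨hi', hu⟩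
        _ ≤ j' := hij'
        _ ≤ LbD X (plt b) := le_csSup (bagSet_bdd X _) ⟨hj', hv⟩
  have hsbdd : ∀ b : B, BddAbove {m | ∃ c, Pre Q c b ∧ m = FbD X (plt c)} := by
    intro b
    refine ⟨X.length, ?_⟩
    rintro m ⟨c, hpcb, rfl⟩
    obtain ⟨h1, _⟩ := hFmem _ (hplts c (hpre_flat hpcb).1)
    exact le_of_lt h1
  have hsne : ∀ b ∈ Q.flatten, {m | ∃ c, Pre Q c b ∧ m = FbD X (plt c)}.Nonempty :=
    fun b hb => ⟨FbD X (plt b), b, hpre_self b hb, rfl⟩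
  have hFs : ∀ b ∈ Q.flatten, FbD X (plt b) ≤ stage Q plt X b :=
    fun b hb => le_csSup (hsbdd b) ⟨b, hpre_self b hb, rfl⟩
  have hsL : ∀ b ∈ Q.flatten, stage Q plt X b ≤ LbD X (plt b) := by
    intro b hb
    refine csSup_le (hsne b hb) ?_
    rintro m ⟨c, hpcb, rfl⟩
    exact hFL hpcb
  have hsX : ∀ b ∈ Q.flatten, ∃ h : stage Q plt X b < X.length, plt b ∈ X[stage Q plt X b] := by
    intro b hb
    obtain ⟨hF1, hF2⟩ := hFmem _ (hplts b hb)
    obtain ⟨hL1, hL2⟩ := hLmem _ (hplts b hb)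
    have h1 := hFs b hb
    have h2 := hsL b hb
    have hsl : stage Q plt X b < X.length := by omega
    exact ⟨hsl, hint (plt b) (FbD X (plt b)) (LbD X (plt b)) (stage Q plt X b)
      h1 h2 hF1 hL1 hsl hF2 hL2⟩
  have hs_mono : ∀ {c b : B}, Pre Q c b → stage Q plt X c ≤ stage Q plt X b := by
    intro c b hpcb
    refine csSup_le (hsne c (hpre_flat hpcb).1) ?_
    rintro m ⟨d, hpdc, rfl⟩
    exact le_csSup (hsbdd b) ⟨d, hpre_trans hpdc hpcb, rfl⟩
  -- the removal order
  set lef : B → B → Bool := fun b b' => decide (stage Q plt X b ≤ stage Q plt X b')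
    with hledef
  have htrans : ∀ a b c, lef a b = true → lef b c = true → lef a c = true := by
    intro a b c
    simp only [hledef, decide_eq_true_eq]
    omega
  have htotal : ∀ a b, (lef a b || lef b a) = true := by
    intro a b
    simp only [hledef, Bool.or_eq_true, decide_eq_true_eq]
    omega
  set ord : List B := Q.flatten.mergeSort lef with horddef
  have hperm : ord.Perm Q.flatten := List.mergeSort_perm _ _
  have hordnd : ord.Nodup := hperm.nodup_iff.mpr hnd
  have hsorted : List.Pairwise (fun a b => stage Q plt X a ≤ stage Q plt X b) ord := by
    have h := List.pairwise_mergeSort htrans htotal Q.flatten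
    refine List.Pairwise.imp ?_ h
    intro a b hab
    simpa [hledef] using hab
  have hmono : ∀ {k k' : ℕ} (hk : k < ord.length) (hk' : k' < ord.length), k ≤ k' →
      stage Q plt X ord[k] ≤ stage Q plt X ord[k'] := by
    intro k k' hk hk' hkk
    rcases Nat.eq_or_lt_of_le hkk with heq | h
    · subst heq; exact le_refl _
    · exact List.pairwise_iff_getElem.mp hsorted k k' hk hk' h
  have hfil : ∀ q ∈ Q, q = ord.filter (fun b => decide (b ∈ q)) := by
    intro q hq
    have hqpw : List.Pairwise (fun a b => lef a b = true) q := by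
      rw [List.pairwise_iff_getElem]
      intro i j hi hj hij
      simp only [hledef, decide_eq_true_eq]
      exact hs_mono ⟨q, hq, i, j, hi, hj, le_of_lt hij, rfl, rfl⟩
    have hqsub : q.Sublist ord := List.sublist_mergeSort htrans htotal hqpw
      (List.sublist_flatten_of_mem hq)
    refine sublist_eq_of_mem_iff hordnd hqsub (List.filter_sublist (l := ord)) ?_
    intro b
    rw [List.mem_filter]
    constructor
    · intro hb; exact ⟨hperm.mem_iff.mpr (List.mem_flatten.mpr ⟨q, hq, hb⟩), by simpa⟩
    · rintro ⟨_, hb⟩; simpa using hb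
  have hproc : IsProcessing Q ord := isProcessing_of_filter hnd hperm hfil
  refine ⟨ord, hproc, ?_⟩
  intro m hm
  rcases Nat.eq_zero_or_pos m with rfl | hm0
  · have hzero : openAfter Q plt (ord.take 0) = ∅ := by
      ext t; simp [openAfter]
    rw [hzero]; simp
  · have hm1 : m - 1 < ord.length := by omega
    obtain ⟨histar, hXstar⟩ := hsX ord[m-1] (hperm.mem_iff.mp (List.getElem_mem hm1))
    have hXfin : (X[stage Q plt X ord[m-1]]).Finite :=
      (pltsOf_finite plt).subset (hsub _ (List.getElem_mem histar))
    refine le_trans (Set.ncard_le_ncard ?_ hXfin) (hszp _ (List.getElem_mem histar))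
    intro t ht
    rw [mem_openAfter hproc hnd] at ht
    obtain ⟨⟨c, hc, hct⟩, d, hdf, hdm, hdt⟩ := ht
    obtain ⟨kc, hkc, hkce⟩ := List.getElem_of_mem (List.take_subset _ _ hc)
    have hkcm : kc < m := (mem_take_iff hordnd hkc hkce m).mp hc
    have hcs : stage Q plt X c ≤ stage Q plt X ord[m-1] := by
      have h := hmono hkc hm1 (by omega)
      rwa [hkce] at h
    have hcf : c ∈ Q.flatten := hperm.mem_iff.mp (hkce ▸ List.getElem_mem hkc)
    have hFt : FbD X t ≤ stage Q plt X ord[m-1] := by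
      have h := hFs c hcf
      rw [hct] at h
      omega
    obtain ⟨kd, hkd, hkde⟩ := List.getElem_of_mem (hperm.mem_iff.mpr hdf)
    have hkdm : ¬ kd < m := fun h => hdm ((mem_take_iff hordnd hkd hkde m).mpr h)
    have hds : stage Q plt X ord[m-1] ≤ stage Q plt X d := by
      have h := hmono hm1 hkd (by omega)
      rwa [hkde] at h
    have hLt : stage Q plt X ord[m-1] ≤ LbD X t := by
      obtain ⟨hd1, hd2⟩ := hsX d hdf
      have h : stage Q plt X d ≤ LbD X (plt d) := le_csSup (bagSet_bdd X _) ⟨hd1, hd2⟩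
      rw [hdt] at h
      omega
    have htp : t ∈ pltsOf Q plt := hdt ▸ hplts d hdf
    obtain ⟨hF1, hF2⟩ := hFmem t htp
    obtain ⟨hL1, hL2⟩ := hLmem t htp
    exact hint t (FbD X t) (LbD X t) (stage Q plt X ord[m-1]) hFt hLt hF1 hL1 histar hF2 hL2

end StackAux

/-- If every pallet of `Q` has at least two bins and `p ≥ 1`,
then there is a processing of `Q` with at most `p` stack-up places if and only
if the directed pathwidth of the sequence graph `G_Q` is at most `p - 1`. -/
theorem processing_iff_dirPathwidth {B P : Type} [DecidableEq B]
    (Q : List (List B)) (plt : B → P) (hnd : Q.flatten.Nodup)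
    (htwo : EveryPalletTwoBins Q plt) (p : ℕ) (hp : 1 ≤ p) :
    (∃ ord : List B, IsProcessing Q ord ∧ UsesAtMost Q plt ord p) ↔
      dirPathwidth (seqArc Q plt) (pltsOf Q plt) ≤ p - 1 := by
  constructor
  · rintro ⟨ord, hproc, huse⟩
    exact StackAux.forward_dir hnd htwo hproc hp huse
  · intro h
    exact StackAux.backward_dir hnd hp h
end

section
/- Let G = (V,E) be a finite digraph without self-loops in which every vertex has at least one incoming arc and at least one outgoing arc, and let p ≥ 1. Then there is a directed path-decomposition of G of width at most p − 1 if and only if there is a processing of the queue system Q_G that uses at most p stack-up places. -/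
/-- The queue system `Q_G` of a digraph `G = (V, A)`: for each arc `(u,v)` a
sequence of two distinct bins, the first labeled with pallet `u`, the second
labeled with pallet `v`. -/
noncomputable def queueSystem {V : Type} [Fintype V] [DecidableEq V]
    (A : V → V → Prop) [DecidableRel A] : List (List (V × V × Bool)) :=
  ((Finset.univ.filter (fun e : V × V => A e.1 e.2)).toList).map
    fun e => [(e.1, e.2, false), (e.1, e.2, true)]

/-- The pallet label of a bin of the queue system: the second bin of a queue
for arc `(u,v)` is labeled `v`, the first one `u`. -/
def queuePlt {V : Type} (b : V × V × Bool) : V :=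
  if b.2.2 then b.2.1 else b.1

section Helpers
variable {V : Type} [Fintype V] [DecidableEq V] (A : V → V → Prop) [DecidableRel A]

lemma mem_queueSystem {q : List (V × V × Bool)} :
    q ∈ queueSystem A ↔ ∃ u v, A u v ∧ q = [(u, v, false), (u, v, true)] := by
  simp only [queueSystem, List.mem_map, Finset.mem_toList, Finset.mem_filter,
    Finset.mem_univ, true_and]
  constructor
  · rintro ⟨⟨u, v⟩, hA, rfl⟩; exact ⟨u, v, hA, rfl⟩
  · rintro ⟨u, v, hA, rfl⟩; exact ⟨(u, v), hA, rfl⟩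

omit [Fintype V] [DecidableEq V] in
lemma mem_pair {b : V × V × Bool} {u v : V} :
    b ∈ [(u, v, false), (u, v, true)] ↔ b = (u, v, false) ∨ b = (u, v, true) := by
  simp only [List.mem_cons, List.not_mem_nil, or_false, List.mem_singleton]

lemma mem_flatten_queueSystem {b : V × V × Bool} :
    b ∈ (queueSystem A).flatten ↔ A b.1 b.2.1 := by
  rw [List.mem_flatten]
  constructor
  · rintro ⟨q, hq, hb⟩
    obtain ⟨u, v, hA, rfl⟩ := (mem_queueSystem A).1 hq
    rcases (mem_pair).1 hb with rfl | rfl <;> exact hA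
  · intro hA
    refine ⟨[(b.1, b.2.1, false), (b.1, b.2.1, true)],
      (mem_queueSystem A).2 ⟨b.1, b.2.1, hA, rfl⟩, ?_⟩
    rcases b with ⟨u, v, _ | _⟩ <;> simp

lemma nodup_flatten_queueSystem : (queueSystem A).flatten.Nodup := by
  rw [List.nodup_flatten]
  constructor
  · intro l hl
    obtain ⟨u, v, _, rfl⟩ := (mem_queueSystem A).1 hl
    simp
  · unfold queueSystem
    refine List.Pairwise.map _ ?_ (Finset.nodup_toList _)
    rintro ⟨u, v⟩ ⟨u', v'⟩ hne
    intro b hb hb'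
    rcases (mem_pair).1 hb with rfl | rfl <;>
      rcases (mem_pair).1 hb' with h | h <;>
      · simp only [Prod.ext_iff] at h
        exact hne (by simp only [Prod.ext_iff]; exact ⟨h.1, h.2.1⟩)

/-- prefix-closed removed sets -/
def PrefixOK {V : Type} (R : List (V × V × Bool)) : Prop :=
  ∀ u v, (u, v, true) ∈ R → (u, v, false) ∈ R

lemma mem_confAfter_queueSystem {R : List (V × V × Bool)} (hR : PrefixOK R)
    {b : V × V × Bool} :
    (∃ q ∈ confAfter (queueSystem A) R, b ∈ q) ↔
      b ∈ (queueSystem A).flatten ∧ b ∉ R := by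
  constructor
  · rintro ⟨q', hq', hb⟩
    simp only [confAfter, List.mem_map] at hq'
    obtain ⟨q, hq, rfl⟩ := hq'
    obtain ⟨u, v, hA, rfl⟩ := (mem_queueSystem A).1 hq
    by_cases h1 : (u, v, false) ∈ R
    · by_cases h2 : (u, v, true) ∈ R
      · simp [List.dropWhile_cons, h1, h2] at hb
      · simp only [List.dropWhile_cons, h1, h2, decide_eq_true_eq, if_true, if_false,
          if_pos, if_neg, not_false_iff, List.dropWhile_nil] at hb
        simp only [List.mem_singleton] at hb
        subst hb
        exact ⟨(mem_flatten_queueSystem A).2 hA, h2⟩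
    · rw [List.dropWhile_cons] at hb
      simp only [h1, decide_eq_true_eq, if_neg, not_false_iff] at hb
      rcases (mem_pair).1 hb with rfl | rfl
      · exact ⟨(mem_flatten_queueSystem A).2 hA, h1⟩
      · exact ⟨(mem_flatten_queueSystem A).2 hA, fun h => h1 (hR u v h)⟩
  · rintro ⟨hb, hbR⟩
    rw [List.mem_flatten] at hb
    obtain ⟨q, hq, hbq⟩ := hb
    refine ⟨_, List.mem_map_of_mem hq, ?_⟩
    obtain ⟨u, v, hA, rfl⟩ := (mem_queueSystem A).1 hq
    by_cases h1 : (u, v, false) ∈ R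
    · rcases (mem_pair).1 hbq with rfl | rfl
      · exact absurd h1 hbR
      · simp [List.dropWhile_cons, h1, hbR]
    · have h2 : (u, v, true) ∉ R := fun h => h1 (hR u v h)
      rcases (mem_pair).1 hbq with rfl | rfl <;>
        simp [List.dropWhile_cons, h1]

end Helpers

lemma mem_take_iff_nodup {α : Type*} {l : List α} (h : l.Nodup) {i m : ℕ}
    (hm : m < l.length) : l[m] ∈ l.take i ↔ m < i := by
  constructor
  · intro hmem
    obtain ⟨j, hj, hje⟩ := List.mem_iff_getElem.1 hmem
    rw [List.getElem_take] at hje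
    have hj' : j < l.length := lt_of_lt_of_le hj (by simp [List.length_take])
    have := (h.getElem_inj_iff).1 hje
    subst this
    exact lt_of_lt_of_le hj (by simp [List.length_take])
  · intro hmi
    have hlen : m < (l.take i).length := by
      simp only [List.length_take, lt_min_iff]; exact ⟨hmi, hm⟩
    have : (l.take i)[m] = l[m] := List.getElem_take
    rw [← this]
    exact List.getElem_mem _

lemma mem_take_pos {α : Type*} {l : List α} (h : l.Nodup) {i : ℕ} {b : α}
    (hb : b ∈ l.take i) : ∃ m, ∃ hm : m < l.length, m < i ∧ l[m] = b := by
  obtain ⟨j, hj, hje⟩ := List.mem_iff_getElem.1 hb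
  rw [List.getElem_take] at hje
  have hj1 : j < l.length := lt_of_lt_of_le hj (by simp [List.length_take])
  exact ⟨j, hj1, lt_of_lt_of_le hj (by simp [List.length_take]), hje⟩

section Processing
variable {V : Type} [Fintype V] [DecidableEq V] (A : V → V → Prop) [DecidableRel A]

variable {A}

lemma processing_false_before_true {ord : List (V × V × Bool)}
    (hproc : IsProcessing (queueSystem A) ord) {u v : V} {m : ℕ}
    (hm : m < ord.length) (he : ord[m] = (u, v, true)) :
    (u, v, false) ∈ ord.take m := by
  obtain ⟨q, hq, hhead⟩ := hproc.2 m hm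
  simp only [confAfter, List.mem_map] at hq
  obtain ⟨q₀, hq₀, rfl⟩ := hq
  obtain ⟨a, b, hA, rfl⟩ := (mem_queueSystem A).1 hq₀
  rw [he] at hhead
  by_cases h1 : (a, b, false) ∈ ord.take m
  · by_cases h2 : (a, b, true) ∈ ord.take m
    · simp [List.dropWhile_cons, h1, h2] at hhead
    · simp only [List.dropWhile_cons, h1, h2, decide_eq_true_eq, if_pos, if_neg,
        not_false_iff, List.dropWhile_nil, List.head?_cons, Option.some.injEq,
        Prod.ext_iff] at hhead
      obtain ⟨rfl, rfl, -⟩ := hhead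
      exact h1
  · rw [List.dropWhile_cons] at hhead
    simp only [h1, decide_eq_true_eq, if_neg, not_false_iff, List.head?_cons,
      Option.some.injEq, Prod.ext_iff] at hhead
    exact absurd hhead.2.2 (by simp)

lemma processing_prefixOK {ord : List (V × V × Bool)}
    (hproc : IsProcessing (queueSystem A) ord) (i : ℕ) :
    PrefixOK (ord.take i) := by
  have hnd : ord.Nodup := hproc.1.nodup_iff.2 (nodup_flatten_queueSystem A)
  intro u v hmem
  obtain ⟨m, hm, hmi, he⟩ := mem_take_pos hnd hmem
  have hF := processing_false_before_true hproc hm he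
  obtain ⟨a, ha, ham, hae⟩ := mem_take_pos hnd hF
  rw [← hae]
  exact (mem_take_iff_nodup hnd ha).2 (lt_trans ham hmi)

lemma mem_openAfter_prefixOK {R : List (V × V × Bool)} (hR : PrefixOK R) {t : V} :
    t ∈ openAfter (queueSystem A) queuePlt R ↔
      (∃ b ∈ R, queuePlt b = t) ∧
      ∃ b, b ∈ (queueSystem A).flatten ∧ b ∉ R ∧ queuePlt b = t := by
  unfold openAfter
  simp only [Set.mem_setOf_eq]
  constructor
  · rintro ⟨h1, q, hq, b, hb, hbt⟩
    exact ⟨h1, b, ((mem_confAfter_queueSystem A hR).1 ⟨q, hq, hb⟩).1,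
      ((mem_confAfter_queueSystem A hR).1 ⟨q, hq, hb⟩).2, hbt⟩
  · rintro ⟨h1, b, hbf, hbr, hbt⟩
    obtain ⟨q, hq, hb⟩ := (mem_confAfter_queueSystem A hR).2 ⟨hbf, hbr⟩
    exact ⟨h1, q, hq, b, hb, hbt⟩

lemma mem_openAfter_char {ord : List (V × V × Bool)}
    (hproc : IsProcessing (queueSystem A) ord) {i : ℕ} {t : V} :
    t ∈ openAfter (queueSystem A) queuePlt (ord.take i) ↔
      (∃ b ∈ ord.take i, queuePlt b = t) ∧
      ∃ b, b ∈ (queueSystem A).flatten ∧ b ∉ ord.take i ∧ queuePlt b = t :=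
  mem_openAfter_prefixOK (processing_prefixOK hproc i)

end Processing


section MainBack
variable {V : Type} [Fintype V] [DecidableEq V] {A : V → V → Prop} [DecidableRel A]

lemma dpd_of_processing
    (hin : ∀ v, ∃ w, A w v) (hout : ∀ v, ∃ w, A v w)
    {p : ℕ} {ord : List (V × V × Bool)}
    (hproc : IsProcessing (queueSystem A) ord)
    (huse : UsesAtMost (queueSystem A) queuePlt ord p) :
    ∃ X : List (Set V), IsDPD A (Set.univ : Set V) X ∧ ∀ C ∈ X, C.ncard ≤ p := by
  classical
  set n := ord.length with hn
  refine ⟨(List.range (n+1)).map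
      (fun i => openAfter (queueSystem A) queuePlt (ord.take i)), ?_, ?_⟩
  rotate_left
  · intro C hC
    simp only [List.mem_map, List.mem_range] at hC
    obtain ⟨i, hi, rfl⟩ := hC
    exact huse i (by omega)
  have hXlen : ((List.range (n+1)).map
      (fun i => openAfter (queueSystem A) queuePlt (ord.take i))).length = n + 1 := by simp
  have hXget : ∀ i (hi : i < n + 1),
      ((List.range (n+1)).map
        (fun i => openAfter (queueSystem A) queuePlt (ord.take i)))[i]'(by simpa using hi)
        = openAfter (queueSystem A) queuePlt (ord.take i) := by
    intro i hi
    simp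
  have hnd : ord.Nodup := hproc.1.nodup_iff.2 (nodup_flatten_queueSystem A)
  have hpos : ∀ b : V × V × Bool, A b.1 b.2.1 → ∃ m, ∃ hm : m < n, ord[m] = b := by
    intro b hb
    have : b ∈ ord := hproc.1.mem_iff.2 ((mem_flatten_queueSystem A).2 hb)
    exact List.mem_iff_getElem.1 this
  have hopen : ∀ (t : V) (m m' : ℕ) (hm : m < n) (hm' : m' < n), m < m' →
      queuePlt ord[m] = t → queuePlt ord[m'] = t →
      ∀ i, m < i → i ≤ m' → t ∈ openAfter (queueSystem A) queuePlt (ord.take i) := by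
    intro t m m' hm hm' hmm htm htm' i him him'
    rw [mem_openAfter_char hproc]
    refine ⟨⟨ord[m], (mem_take_iff_nodup hnd hm).2 him, htm⟩,
      ⟨ord[m'], hproc.1.subset (List.getElem_mem _), ?_, htm'⟩⟩
    rw [mem_take_iff_nodup hnd hm']
    omega
  -- false bin comes before true bin
  have hFT : ∀ (u v : V) (a b : ℕ) (ha : a < n) (hb : b < n),
      ord[a] = (u, v, false) → ord[b] = (u, v, true) → a < b := by
    intro u v a b ha hb hea heb
    have hmem := processing_false_before_true hproc hb heb
    obtain ⟨m, hm, hmb, hme⟩ := mem_take_pos hnd hmem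
    have : m = a := hnd.getElem_inj_iff.1 (by rw [hme, hea])
    omega
  refine ⟨?_, ?_, ?_, ?_⟩
  · intro C _; exact Set.subset_univ _
  · -- every vertex in some bag
    intro v _
    obtain ⟨w, hw⟩ := hout v
    obtain ⟨w', hw'⟩ := hin v
    obtain ⟨m₁, hm₁, he₁⟩ := hpos (v, w, false) hw
    obtain ⟨m₂, hm₂, he₂⟩ := hpos (w', v, true) hw'
    have hne : m₁ ≠ m₂ := by
      intro h; subst h; rw [he₁] at he₂; simp at he₂
    have hp₁ : queuePlt ord[m₁] = v := by rw [he₁]; rfl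
    have hp₂ : queuePlt ord[m₂] = v := by rw [he₂]; rfl
    rcases lt_or_gt_of_ne hne with h | h
    · refine ⟨m₁ + 1, by simpa using by omega, ?_⟩
      rw [hXget (m₁+1) (by omega)]
      exact hopen v m₁ m₂ hm₁ hm₂ h hp₁ hp₂ (m₁+1) (by omega) (by omega)
    · refine ⟨m₂ + 1, by simpa using by omega, ?_⟩
      rw [hXget (m₂+1) (by omega)]
      exact hopen v m₂ m₁ hm₂ hm₁ h hp₂ hp₁ (m₂+1) (by omega) (by omega)
  · -- arcs
    intro u v hA
    obtain ⟨w, hw⟩ := hin u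
    obtain ⟨y, hy⟩ := hout v
    obtain ⟨a, ha, hea⟩ := hpos (u, v, false) hA
    obtain ⟨a', ha', hea'⟩ := hpos (w, u, true) hw
    obtain ⟨b, hb, heb⟩ := hpos (u, v, true) hA
    obtain ⟨b', hb', heb'⟩ := hpos (v, y, false) hy
    have hab : a < b := hFT u v a b ha hb hea heb
    have haa' : a ≠ a' := by
      intro h; subst h; rw [hea] at hea'; simp at hea'
    have hbb' : b ≠ b' := by
      intro h; subst h; rw [heb] at heb'; simp at heb'
    have hpa : queuePlt ord[a] = u := by rw [hea]; rfl
    have hpa' : queuePlt ord[a'] = u := by rw [hea']; rfl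
    have hpb : queuePlt ord[b] = v := by rw [heb]; rfl
    have hpb' : queuePlt ord[b'] = v := by rw [heb']; rfl
    refine ⟨min a a' + 1, max b b', by omega, by simpa using by omega,
      by simpa using by omega, ?_, ?_⟩
    · rw [hXget (min a a' + 1) (by omega)]
      rcases le_or_gt a a' with h | h
      · have : min a a' = a := min_eq_left h
        rw [this]
        exact hopen u a a' ha ha' (by omega) hpa hpa' (a+1) (by omega) (by omega)
      · have : min a a' = a' := min_eq_right (le_of_lt h)
        rw [this]
        exact hopen u a' a ha' ha h hpa' hpa (a'+1) (by omega) (by omega)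
    · rw [hXget (max b b') (by omega)]
      rcases le_or_gt b b' with h | h
      · have : max b b' = b' := max_eq_right h
        rw [this]
        exact hopen v b b' hb hb' (by omega) hpb hpb' b' (by omega) (by omega)
      · have : max b b' = b := max_eq_left (le_of_lt h)
        rw [this]
        exact hopen v b' b hb' hb h hpb' hpb b (by omega) (by omega)
  · -- interval property
    intro t i j l hil hlj hi hj hl hti htj
    rw [hXget i (by simpa using hi)] at hti
    rw [hXget j (by simpa using hj)] at htj
    rw [hXget l (by simpa using hl)]
    rw [mem_openAfter_char hproc] at hti htj ⊢
    obtain ⟨⟨b₁, hb₁, hp₁⟩, -⟩ := hti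
    obtain ⟨-, b₂, hb₂f, hb₂r, hp₂⟩ := htj
    constructor
    · obtain ⟨m, hm, hmi, hme⟩ := mem_take_pos hnd hb₁
      exact ⟨b₁, by rw [← hme]; exact (mem_take_iff_nodup hnd hm).2 (by omega), hp₁⟩
    · refine ⟨b₂, hb₂f, ?_, hp₂⟩
      intro hmem
      obtain ⟨m, hm, hml, hme⟩ := mem_take_pos hnd hmem
      exact hb₂r (by rw [← hme]; exact (mem_take_iff_nodup hnd hm).2 (by omega))

end MainBack


section MainFwd
variable {V : Type} [Fintype V] [DecidableEq V] {A : V → V → Prop} [DecidableRel A]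

lemma processing_of_dpd {p : ℕ} {X : List (Set V)}
    (hdpd : IsDPD A (Set.univ : Set V) X) (hsz : ∀ C ∈ X, C.ncard ≤ p) :
    ∃ ord : List (V × V × Bool), IsProcessing (queueSystem A) ord ∧
      UsesAtMost (queueSystem A) queuePlt ord p := by
  classical
  obtain ⟨-, hcov, harc, hint⟩ := hdpd
  have hSne : ∀ v : V, ((Finset.range X.length).filter
      (fun i => ∃ h : i < X.length, v ∈ X[i])).Nonempty := by
    intro v
    obtain ⟨i, hi, hmem⟩ := hcov v (Set.mem_univ v)
    exact ⟨i, Finset.mem_filter.2 ⟨Finset.mem_range.2 hi, hi, hmem⟩⟩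
  set f : V → ℕ := fun v => Finset.min' _ (hSne v) with hf
  set l : V → ℕ := fun v => Finset.max' _ (hSne v) with hl
  have hfmem : ∀ v, ∃ h : f v < X.length, v ∈ X[f v] := by
    intro v
    have := Finset.min'_mem _ (hSne v)
    exact (Finset.mem_filter.1 this).2
  have hlmem : ∀ v, ∃ h : l v < X.length, v ∈ X[l v] := by
    intro v
    have := Finset.max'_mem _ (hSne v)
    exact (Finset.mem_filter.1 this).2
  have hfle : ∀ v i, ∀ h : i < X.length, v ∈ X[i] → f v ≤ i := by
    intro v i h hmem
    exact Finset.min'_le _ _ (Finset.mem_filter.2 ⟨Finset.mem_range.2 h, h, hmem⟩)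
  have hlge : ∀ v i, ∀ h : i < X.length, v ∈ X[i] → i ≤ l v := by
    intro v i h hmem
    exact Finset.le_max' _ _ (Finset.mem_filter.2 ⟨Finset.mem_range.2 h, h, hmem⟩)
  have hfl : ∀ v, f v ≤ l v := by
    intro v
    obtain ⟨h, hmem⟩ := hlmem v
    exact hfle v (l v) h hmem
  have hXmem : ∀ v c, f v ≤ c → c ≤ l v → ∃ hc : c < X.length, v ∈ X[c] := by
    intro v c h1 h2
    obtain ⟨hfv, hmf⟩ := hfmem v
    obtain ⟨hlv, hml⟩ := hlmem v
    have hc : c < X.length := lt_of_le_of_lt h2 hlv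
    exact ⟨hc, hint v (f v) (l v) c h1 h2 hfv hlv hc hmf hml⟩
  have harcfl : ∀ u v, A u v → f u ≤ l v := by
    intro u v hA
    obtain ⟨i, j, hij, hi, hj, hui, hvj⟩ := harc u v hA
    exact le_trans (hfle u i hi hui) (le_trans hij (hlge v j hj hvj))
  set κ : V × V × Bool → ℕ :=
    fun b => if b.2.2 then 2 * l b.2.1 + 1 else 2 * f b.1 with hκ
  set kh : V × V × Bool → ℕ := fun b => if b.2.2 then l b.2.1 else f b.1 with hkh
  have hκkh : ∀ b, 2 * kh b ≤ κ b ∧ κ b ≤ 2 * kh b + 1 := by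
    intro b
    by_cases h : b.2.2 <;> simp [hκ, hkh, h] <;> omega
  have hkhplt : ∀ b : V × V × Bool,
      f (queuePlt b) ≤ kh b ∧ kh b ≤ l (queuePlt b) := by
    intro b
    by_cases h : b.2.2 <;> simp [queuePlt, hkh, h, hfl _]
  haveI : Std.Total (α := V × V × Bool) (fun x y => κ x ≤ κ y) := ⟨fun a b => le_total _ _⟩
  haveI : IsTrans (V × V × Bool) (fun x y => κ x ≤ κ y) := ⟨fun _ _ _ => le_trans⟩
  set ord : List (V × V × Bool) :=
    List.insertionSort (fun x y => κ x ≤ κ y) (queueSystem A).flatten with hord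
  have hperm : ord.Perm (queueSystem A).flatten := List.perm_insertionSort _ _
  have hnd : ord.Nodup := hperm.nodup_iff.2 (nodup_flatten_queueSystem A)
  have hsorted := List.pairwise_insertionSort (fun x y => κ x ≤ κ y)
      (queueSystem A).flatten
  have hmono : ∀ i j, ∀ hi : i < ord.length, ∀ hj : j < ord.length, i ≤ j →
      κ ord[i] ≤ κ ord[j] := by
    intro i j hi hj hij
    rcases eq_or_lt_of_le hij with rfl | hlt
    · exact le_refl _
    · exact List.pairwise_iff_getElem.1 hsorted i j hi hj hlt
  have hAmem : ∀ b : V × V × Bool, b ∈ ord → A b.1 b.2.1 := by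
    intro b hb
    exact (mem_flatten_queueSystem A).1 (hperm.subset hb)
  have hposof : ∀ b : V × V × Bool, A b.1 b.2.1 →
      ∃ m, ∃ hm : m < ord.length, ord[m] = b := by
    intro b hb
    exact List.mem_iff_getElem.1 (hperm.mem_iff.2 ((mem_flatten_queueSystem A).2 hb))
  have hFT : ∀ (u v : V) (a b : ℕ), ∀ ha : a < ord.length, ∀ hb : b < ord.length,
      ord[a] = (u, v, false) → ord[b] = (u, v, true) → a < b := by
    intro u v a b ha hb hea heb
    have hAuv : A u v := by
      have := hAmem ord[b] (List.getElem_mem _)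
      rw [heb] at this
      exact this
    have hκa : κ ord[a] = 2 * f u := by rw [hea]; simp [hκ]
    have hκb : κ ord[b] = 2 * l v + 1 := by rw [heb]; simp [hκ]
    have hflv := harcfl u v hAuv
    by_contra hcon
    have hba : b ≤ a := le_of_not_gt hcon
    have hne : b ≠ a := by
      intro h; subst h; rw [hea] at heb; simp at heb
    have := hmono b a hb ha hba
    omega
  have hprefixOK : ∀ i, PrefixOK (ord.take i) := by
    intro i u v hmem
    obtain ⟨m, hm, hmi, hme⟩ := mem_take_pos hnd hmem
    have hAuv : A u v := by
      have := hAmem ord[m] (List.getElem_mem _)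
      rw [hme] at this
      exact this
    obtain ⟨a, ha, hae⟩ := hposof (u, v, false) hAuv
    have ham : a < m := hFT u v a m ha hm hae hme
    rw [← hae]
    exact (mem_take_iff_nodup hnd ha).2 (by omega)
  have hselfnotin : ∀ i, ∀ hi : i < ord.length, ord[i] ∉ ord.take i := by
    intro i hi hmem
    rw [mem_take_iff_nodup hnd hi] at hmem
    omega
  refine ⟨ord, ⟨hperm, ?_⟩, ?_⟩
  · -- processing steps
    intro i hi
    have hAb : A ord[i].1 ord[i].2.1 := hAmem _ (List.getElem_mem _)
    have hq₀ : [(ord[i].1, ord[i].2.1, false), (ord[i].1, ord[i].2.1, true)] ∈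
        queueSystem A := (mem_queueSystem A).2 ⟨_, _, hAb, rfl⟩
    refine ⟨_, List.mem_map_of_mem hq₀, ?_⟩
    rcases hb2 : ord[i].2.2 with _ | _
    · -- first bin of the queue
      have hbeq : (ord[i].1, ord[i].2.1, false) = ord[i] := by
        rw [← hb2]
      have hnotin : (ord[i].1, ord[i].2.1, false) ∉ ord.take i := by
        rw [hbeq]; exact hselfnotin i hi
      rw [List.dropWhile_cons]
      simp only [hnotin, decide_eq_true_eq, if_neg, not_false_iff, List.head?_cons]
      rw [hbeq]
    · -- second bin of the queue
      have hbeq : (ord[i].1, ord[i].2.1, true) = ord[i] := by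
        rw [← hb2]
      obtain ⟨a, ha, hae⟩ := hposof (ord[i].1, ord[i].2.1, false) hAb
      have hai : a < i := hFT _ _ a i ha hi hae hbeq.symm
      have hFin : (ord[i].1, ord[i].2.1, false) ∈ ord.take i := by
        rw [← hae]; exact (mem_take_iff_nodup hnd ha).2 hai
      have hTnotin : (ord[i].1, ord[i].2.1, true) ∉ ord.take i := by
        rw [hbeq]; exact hselfnotin i hi
      simp [List.dropWhile_cons, hFin, hTnotin, hbeq, hselfnotin i hi]
  · -- uses at most p places
    intro i hi
    rcases Nat.eq_zero_or_pos i with rfl | hipos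
    · have hempty : openAfter (queueSystem A) queuePlt (ord.take 0) = ∅ := by
        ext t
        simp only [Set.mem_empty_iff_false, iff_false]
        rintro ⟨⟨b, hb, -⟩, -⟩
        simp at hb
      rw [hempty]
      simp
    · have hi1 : i - 1 < ord.length := by omega
      have hcX : kh ord[i-1] < X.length := by
        obtain ⟨h1, -⟩ := hfmem ord[i-1].1
        obtain ⟨h2, -⟩ := hlmem ord[i-1].2.1
        by_cases h : ord[i-1].2.2 <;> simp only [hkh, h, if_true, if_false,
          Bool.false_eq_true, ite_true, ite_false] <;> assumption
      have hsub : openAfter (queueSystem A) queuePlt (ord.take i) ⊆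
          X[kh ord[i-1]]'hcX := by
        intro t ht
        rw [mem_openAfter_prefixOK (hprefixOK i)] at ht
        obtain ⟨⟨b₁, hb₁, hp₁⟩, b₂, hb₂f, hb₂r, hp₂⟩ := ht
        obtain ⟨m, hm, hmi, hme⟩ := mem_take_pos hnd hb₁
        obtain ⟨m', hm', hme'⟩ := List.mem_iff_getElem.1 (hperm.mem_iff.2 hb₂f)
        have him' : i ≤ m' := by
          by_contra hcon
          exact hb₂r (by rw [← hme']; exact (mem_take_iff_nodup hnd hm').2 (by omega))
        have h1 : κ ord[m] ≤ κ ord[i-1] := hmono m (i-1) hm hi1 (by omega)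
        have h2 : κ ord[i-1] ≤ κ ord[m'] := hmono (i-1) m' hi1 hm' (by omega)
        have k1 := hκkh ord[m]
        have k2 := hκkh ord[i-1]
        have k3 := hκkh ord[m']
        have hpm : queuePlt ord[m] = t := by rw [hme]; exact hp₁
        have hpm' : queuePlt ord[m'] = t := by rw [hme']; exact hp₂
        have hq1 := hkhplt ord[m]
        have hq2 := hkhplt ord[m']
        rw [hpm] at hq1
        rw [hpm'] at hq2
        obtain ⟨hc', hXc⟩ := hXmem t (kh ord[i-1]) (by omega) (by omega)
        exact hXc
      calc (openAfter (queueSystem A) queuePlt (ord.take i)).ncard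
          ≤ (X[kh ord[i-1]]'hcX).ncard := Set.ncard_le_ncard hsub (Set.toFinite _)
        _ ≤ p := hsz _ (List.getElem_mem _)

end MainFwd


/-- Let `G = (V,A)` be a finite digraph without self-loops in
which every vertex has at least one incoming and at least one outgoing arc,
and let `p ≥ 1`. Then there is a directed path-decomposition of `G` of width
at most `p - 1` (every bag has at most `p` elements) if and only if there is a
processing of the queue system `Q_G` that uses at most `p` stack-up places. -/
theorem dpd_iff_processing_queueSystem {V : Type} [Fintype V] [DecidableEq V]
    (A : V → V → Prop) [DecidableRel A]
    (hloop : ∀ v, ¬ A v v)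
    (hin : ∀ v, ∃ w, A w v) (hout : ∀ v, ∃ w, A v w)
    (p : ℕ) (hp : 1 ≤ p) :
    (∃ X : List (Set V), IsDPD A (Set.univ : Set V) X ∧ ∀ C ∈ X, C.ncard ≤ p) ↔
    (∃ ord : List (V × V × Bool), IsProcessing (queueSystem A) ord ∧
      UsesAtMost (queueSystem A) queuePlt ord p) := by
  constructor
  · rintro ⟨X, hdpd, hsz⟩
    exact processing_of_dpd hdpd hsz
  · rintro ⟨ord, hproc, huse⟩
    exact dpd_of_processing hin hout hproc huse
end

section
/- Let Q be an instance of the FIFO stack-up problem in which every pallet of plts(Q) has at least two bins in the sequences of Q, and let X = (X_1, …, X_r) be a directed path-decomposition of the sequence graph G_Q. Consider the processing of Q that, in every decision configuration (Q,Q'), opens a pallet t ∈ front(Q') for which α(X,t) is minimal, and in every other configuration removes a front bin destined for an already open pallet. Then for every configuration (Q,Q') reached during this processing there is a bag X_i with open(Q,Q') ⊆ X_i. -/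
/-- The set `front(Q')` of pallet labels of the first bins of the nonempty
remaining sequences of a configuration `C`. -/
def frontOf {B P : Type} (plt : B → P) (C : List (List B)) : Set P :=
  {t | ∃ q ∈ C, ∃ b, q.head? = some b ∧ plt b = t}

/-- `α(X,t)`: the smallest index `i` with `t ∈ X i`. -/
noncomputable def dpdFirst {V : Type} (X : List (Set V)) (t : V) : ℕ :=
  sInf {i | ∃ hi : i < X.length, t ∈ X[i]}

section StackupHelpers

variable {B P : Type} [DecidableEq B]

private lemma su_mem_dropWhile (q removed : List B) {x : B}
    (hx : x ∈ q) (hnot : x ∉ removed) :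
    x ∈ q.dropWhile fun b => decide (b ∈ removed) := by
  have h := List.takeWhile_append_dropWhile
    (p := fun b => decide (b ∈ removed)) (l := q)
  rw [← h, List.mem_append] at hx
  rcases hx with h' | h'
  · exact absurd (by simpa using List.mem_takeWhile_imp h') hnot
  · exact h'

private lemma su_dropWhile_eq_self (q : List B) (p : B → Bool)
    (h : ∀ x ∈ q, ¬ p x = true) : q.dropWhile p = q := by
  cases q with
  | nil => rfl
  | cons a t =>
    rw [List.dropWhile_cons, if_neg (h a List.mem_cons_self)]

private lemma su_dropWhile_dropWhile (q : List B) (p p' : B → Bool)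
    (h : ∀ x, p x = true → p' x = true) :
    q.dropWhile p' = (q.dropWhile p).dropWhile p' := by
  conv_lhs => rw [← List.takeWhile_append_dropWhile (p := p) (l := q)]
  rw [List.dropWhile_append]
  have h0 : (List.takeWhile p q).dropWhile p' = [] :=
    List.dropWhile_eq_nil_iff.2 fun x hx => h x (List.mem_takeWhile_imp hx)
  simp [h0]

private lemma su_unique_queue {Q : List (List B)} (hnd : Q.flatten.Nodup) :
    ∀ q ∈ Q, ∀ q' ∈ Q, ∀ b : B, b ∈ q → b ∈ q' → q = q' := by
  induction Q with
  | nil => simp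
  | cons a Qs ih =>
    rw [List.flatten_cons, List.nodup_append] at hnd
    obtain ⟨-, h2, h3⟩ := hnd
    intro q hq q' hq' b hb hb'
    rcases List.mem_cons.1 hq with rfl | hqm
    · rcases List.mem_cons.1 hq' with rfl | hqm'
      · rfl
      · exact (h3 b hb b (List.mem_flatten.2 ⟨q', hqm', hb'⟩) rfl).elim
    · rcases List.mem_cons.1 hq' with rfl | hqm'
      · exact (h3 b hb' b (List.mem_flatten.2 ⟨q, hqm, hb⟩) rfl).elim
      · exact ih h2 q hqm q' hqm' b hb hb'

private lemma su_take_subset_take {α : Type*} (l : List α) {m n : ℕ} (h : m ≤ n) :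
    l.take m ⊆ l.take n := by
  intro x hx
  have he : l.take m = (l.take n).take m := by
    rw [List.take_take, Nat.min_eq_left h]
  rw [he] at hx
  exact List.take_subset _ _ hx

private lemma su_mem_take_iff {α : Type*} (l : List α) (i : ℕ) (y : α) :
    y ∈ l.take i ↔ ∃ j, ∃ h : j < l.length, j < i ∧ l[j] = y := by
  constructor
  · intro hy
    obtain ⟨n, hn, he⟩ := List.mem_iff_getElem.1 hy
    have hn' : n < min i l.length := by simpa using hn
    exact ⟨n, lt_of_lt_of_le hn' (min_le_right _ _),
      lt_of_lt_of_le hn' (min_le_left _ _), by rw [← he, List.getElem_take]⟩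
  · rintro ⟨j, hj, hji, rfl⟩
    have hj' : j < (l.take i).length := by simp [hj, hji]
    exact List.mem_iff_getElem.2 ⟨j, hj', by rw [List.getElem_take]⟩

private lemma su_mem_take_succ {α : Type*} (l : List α) {i : ℕ} (hi : i < l.length)
    (y : α) : y ∈ l.take (i+1) ↔ y ∈ l.take i ∨ y = l[i] := by
  rw [List.take_succ, List.getElem?_eq_getElem hi, List.mem_append]
  simp

/-- Key structural invariant: every bin remaining in the configuration after
`i` steps of a processing has not been removed. -/
private lemma su_clean {Q : List (List B)} {ord : List B} (hnd : Q.flatten.Nodup)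
    (hproc : IsProcessing Q ord) :
    ∀ i, i ≤ ord.length → ∀ q ∈ Q,
      ∀ x ∈ q.dropWhile (fun b => decide (b ∈ ord.take i)), x ∉ ord.take i := by
  intro i
  induction i with
  | zero => intro _ q _ x _; simp
  | succ i ih =>
    intro hle q hq x hx
    have hi : i < ord.length := lt_of_lt_of_le (Nat.lt_succ_self i) hle
    obtain ⟨q', hq', hhead⟩ := hproc.2 i hi
    obtain ⟨q₀, hq₀, rfl⟩ := List.mem_map.1 hq'
    set b := ord[i] with hb
    have hmono : ∀ y : B, (decide (y ∈ ord.take i) = true) →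
        (decide (y ∈ ord.take (i+1)) = true) := by
      intro y hy
      simp only [decide_eq_true_eq] at hy ⊢
      exact su_take_subset_take ord (Nat.le_succ i) hy
    have hsucc : ∀ y : B, y ∈ ord.take (i+1) ↔ y ∈ ord.take i ∨ y = b :=
      fun y => su_mem_take_succ ord hi y
    have hrw : q.dropWhile (fun y => decide (y ∈ ord.take (i+1)))
        = (q.dropWhile (fun y => decide (y ∈ ord.take i))).dropWhile
            (fun y => decide (y ∈ ord.take (i+1))) :=
      su_dropWhile_dropWhile q _ _ hmono
    set r := q.dropWhile (fun y => decide (y ∈ ord.take i)) with hr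
    have hclean : ∀ y ∈ r, y ∉ ord.take i := fun y hy => ih (le_of_lt hi) q hq y hy
    by_cases hbq : b ∈ q
    · -- q is the queue from which b is removed
      have hbq₀ : b ∈ q₀ := by
        have h1 : b ∈ q₀.dropWhile (fun y => decide (y ∈ ord.take i)) :=
          List.mem_of_mem_head? (Option.mem_def.2 hhead)
        exact (List.dropWhile_sublist _).mem h1
      have hqq : q = q₀ := su_unique_queue hnd q hq q₀ hq₀ b hbq hbq₀
      subst hqq
      have hqnd : q.Nodup := (List.nodup_flatten.1 hnd).1 q hq
      -- r = b :: r.tail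
      obtain ⟨t, ht⟩ : ∃ t, r = b :: t :=
        List.head?_eq_some_iff.1 hhead
      have hbt : b ∉ t := by
        have : r.Nodup := (List.dropWhile_sublist _).nodup hqnd
        rw [ht] at this
        exact (List.nodup_cons.1 this).1
      have ht' : ∀ y ∈ t, ¬ (decide (y ∈ ord.take (i+1)) = true) := by
        intro y hy
        simp only [decide_eq_true_eq, hsucc y]
        push_neg
        exact ⟨hclean y (by rw [ht]; exact List.mem_cons_of_mem _ hy),
          fun he => hbt (he ▸ hy)⟩
      have : q.dropWhile (fun y => decide (y ∈ ord.take (i+1))) = t := by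
        rw [hrw, ht, List.dropWhile_cons,
          if_pos (by simp [hsucc b]), su_dropWhile_eq_self t _ ht']
      rw [this] at hx
      simp only [decide_eq_true_eq] at ht'
      intro hmem
      exact ht' x hx (by simpa using hmem)
    · -- b not in q : configuration of q unchanged
      have ht' : ∀ y ∈ r, ¬ (decide (y ∈ ord.take (i+1)) = true) := by
        intro y hy
        simp only [decide_eq_true_eq, hsucc y]
        push_neg
        exact ⟨hclean y hy, fun he => hbq (he ▸ (List.dropWhile_sublist _).mem hy)⟩
      have : q.dropWhile (fun y => decide (y ∈ ord.take (i+1))) = r := by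
        rw [hrw, su_dropWhile_eq_self r _ ht']
      rw [this] at hx
      simp only [decide_eq_true_eq] at ht'
      intro hmem
      exact ht' x hx (by simpa using hmem)

end StackupHelpers

section StackupMain

variable {B P : Type} [DecidableEq B]

private lemma su_bag_bdd {V : Type} (X : List (Set V)) (t : V) :
    BddAbove {i | ∃ hi : i < X.length, t ∈ X[i]} :=
  ⟨X.length, fun _ hi => le_of_lt hi.1⟩

private lemma su_bag_nonempty {V : Type} {A : V → V → Prop} {Vs : Set V}
    {X : List (Set V)} (hX : IsDPD A Vs X) {t : V} (ht : t ∈ Vs) :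
    {i | ∃ hi : i < X.length, t ∈ X[i]}.Nonempty := by
  obtain ⟨i, hi, hm⟩ := hX.2.1 t ht
  exact ⟨i, hi, hm⟩

private noncomputable def dpdLast {V : Type} (X : List (Set V)) (t : V) : ℕ :=
  sSup {i | ∃ hi : i < X.length, t ∈ X[i]}

private lemma su_first_le_last_of_arc {Q : List (List B)} {plt : B → P}
    {X : List (Set P)} (hX : IsDPD (seqArc Q plt) (pltsOf Q plt) X)
    {u v : P} (h : seqArc Q plt u v) : dpdFirst X u ≤ dpdLast X v := by
  obtain ⟨i, j, hij, hi, hj, hiu, hjv⟩ := hX.2.2.1 u v h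
  have h1 : dpdFirst X u ≤ i := Nat.sInf_le ⟨hi, hiu⟩
  have h2 : j ≤ dpdLast X v := le_csSup (su_bag_bdd X v) ⟨hj, hjv⟩
  omega

private lemma su_arc {Q : List (List B)} {plt : B → P} {q₀ : List B} (hq₀ : q₀ ∈ Q)
    (removed : List B) {f x : B}
    (hhead : (q₀.dropWhile fun b => decide (b ∈ removed)).head? = some f)
    (hx : x ∈ q₀.dropWhile fun b => decide (b ∈ removed))
    (hne : plt f ≠ plt x) : seqArc Q plt (plt f) (plt x) := by
  have key : ∀ (l₁ l₂ : List B) (m : ℕ), (l₁ ++ l₂)[l₁.length + m]? = l₂[m]? := by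
    intro l₁ l₂ m
    rw [List.getElem?_append_right (Nat.le_add_right _ _), Nat.add_sub_cancel_left]
  set r := q₀.dropWhile fun b => decide (b ∈ removed) with hr
  set L := q₀.takeWhile fun b => decide (b ∈ removed) with hL
  have hsplit : q₀ = L ++ r := by
    rw [hL, hr]; exact (List.takeWhile_append_dropWhile).symm
  obtain ⟨t, ht⟩ := List.head?_eq_some_iff.1 hhead
  have hxt : x ∈ t := by
    rw [ht] at hx
    rcases List.mem_cons.1 hx with rfl | h
    · exact absurd rfl hne
    · exact h
  obtain ⟨k, hk, hkx⟩ := List.mem_iff_getElem.1 hxt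
  have hgf : q₀[L.length]? = some f := by
    have h0 : (L ++ r)[L.length + 0]? = r[0]? := key L r 0
    rw [Nat.add_zero] at h0
    rw [hsplit, h0, ← List.head?_eq_getElem?]
    exact hhead
  have hgx : q₀[L.length + (k + 1)]? = some x := by
    rw [hsplit, key L r (k+1), ht]
    simp [List.getElem?_cons_succ, List.getElem?_eq_getElem hk, hkx]
  exact ⟨hne, q₀, hq₀, L.length, L.length + (k+1), by omega,
    ⟨f, hgf, rfl⟩, ⟨x, hgx, rfl⟩⟩

open Classical in
private lemma su_opening {Q : List (List B)} {plt : B → P} {X : List (Set P)}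
    {ord : List B} (hproc : IsProcessing Q ord)
    (hgreedy : ∀ i (hi : i < ord.length),
      if frontOf plt (confAfter Q (ord.take i)) ∩ openAfter Q plt (ord.take i) = ∅
      then plt ord[i] ∈ frontOf plt (confAfter Q (ord.take i)) ∧
           ∀ t ∈ frontOf plt (confAfter Q (ord.take i)),
             dpdFirst X (plt ord[i]) ≤ dpdFirst X t
      else plt ord[i] ∈ openAfter Q plt (ord.take i))
    {n : ℕ} {w : P}
    (hw : w ∈ openAfter Q plt (ord.take n)) :
    ∃ j, ∃ hj : j < ord.length, j < n ∧ plt ord[j] = w ∧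
      (∀ j', ∀ hj' : j' < ord.length, plt ord[j'] = w → j ≤ j') ∧
      frontOf plt (confAfter Q (ord.take j)) ∩ openAfter Q plt (ord.take j) = ∅ ∧
      (∀ t ∈ frontOf plt (confAfter Q (ord.take j)), dpdFirst X w ≤ dpdFirst X t) := by
  obtain ⟨⟨b, hb, hpb⟩, -⟩ := hw
  obtain ⟨j₀, hj₀l, hj₀n, hj₀e⟩ := (su_mem_take_iff ord n b).1 hb
  have hSne : Set.Nonempty {j | ∃ h : j < ord.length, plt ord[j] = w} :=
    ⟨j₀, hj₀l, by rw [hj₀e, hpb]⟩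
  obtain ⟨hjl, hje⟩ := Nat.sInf_mem hSne
  set j := sInf {j | ∃ h : j < ord.length, plt ord[j] = w} with hj
  have hmin : ∀ j', ∀ hj' : j' < ord.length, plt ord[j'] = w → j ≤ j' :=
    fun j' h1 h2 => Nat.sInf_le ⟨h1, h2⟩
  have hjn : j < n := lt_of_le_of_lt (hmin j₀ hj₀l (by rw [hj₀e, hpb])) hj₀n
  have hdec : frontOf plt (confAfter Q (ord.take j)) ∩
      openAfter Q plt (ord.take j) = ∅ := by
    by_contra hcon
    have hg := hgreedy j hjl
    rw [if_neg hcon] at hg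
    obtain ⟨⟨b', hb', hpb'⟩, -⟩ := hg
    obtain ⟨j', hj'l, hj'lt, hj'e⟩ := (su_mem_take_iff ord j b').1 hb'
    have : j ≤ j' := hmin j' hj'l (by rw [hj'e, hpb', hje])
    omega
  have hg := hgreedy j hjl
  rw [if_pos hdec] at hg
  refine ⟨j, hjl, hjn, hje, hmin, hdec, ?_⟩
  rw [← hje]
  exact hg.2

open Classical in
private lemma su_comp {Q : List (List B)} {plt : B → P} (hnd : Q.flatten.Nodup)
    {X : List (Set P)} (hX : IsDPD (seqArc Q plt) (pltsOf Q plt) X)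
    {ord : List B} (hproc : IsProcessing Q ord)
    (hgreedy : ∀ i (hi : i < ord.length),
      if frontOf plt (confAfter Q (ord.take i)) ∩ openAfter Q plt (ord.take i) = ∅
      then plt ord[i] ∈ frontOf plt (confAfter Q (ord.take i)) ∧
           ∀ t ∈ frontOf plt (confAfter Q (ord.take i)),
             dpdFirst X (plt ord[i]) ≤ dpdFirst X t
      else plt ord[i] ∈ openAfter Q plt (ord.take i))
    {n : ℕ} (hn : n ≤ ord.length) {u w : P} (hne : u ≠ w)
    (hu : u ∈ openAfter Q plt (ord.take n))
    (hw : w ∈ openAfter Q plt (ord.take n)) :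
    dpdFirst X w ≤ dpdLast X u := by
  obtain ⟨ju, hjul, hjun, hjue, hjumin, hudec, humin⟩ := su_opening hproc hgreedy hu
  obtain ⟨jw, hjwl, hjwn, hjwe, hjwmin, hwdec, hwmin⟩ := su_opening hproc hgreedy hw
  have hjne : ju ≠ jw := by
    intro h
    subst h
    exact hne (by rw [← hjue, ← hjwe])
  rcases lt_or_gt_of_ne hjne with hlt | hgt
  · -- u opened first; at w's opening step jw, u is open.
    obtain ⟨-, q, hq, x, hxq, hpx⟩ := hu
    simp only [confAfter, List.mem_map] at hq
    obtain ⟨q₀, hq₀, rfl⟩ := hq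
    have hxnr : x ∉ ord.take jw := fun hmem =>
      su_clean hnd hproc n hn q₀ hq₀ x hxq
        (su_take_subset_take ord (le_of_lt hjwn) hmem)
    have hxd : x ∈ q₀.dropWhile (fun b => decide (b ∈ ord.take jw)) :=
      su_mem_dropWhile q₀ _ ((List.dropWhile_sublist _).mem hxq) hxnr
    have hrne : (q₀.dropWhile fun b => decide (b ∈ ord.take jw)) ≠ [] := by
      intro h; rw [h] at hxd; exact List.not_mem_nil hxd
    obtain ⟨f, hf⟩ : ∃ f, (q₀.dropWhile fun b =>
        decide (b ∈ ord.take jw)).head? = some f :=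
      ⟨_, List.head?_eq_head hrne⟩
    have hffront : plt f ∈ frontOf plt (confAfter Q (ord.take jw)) :=
      ⟨_, List.mem_map.2 ⟨q₀, hq₀, rfl⟩, f, hf, rfl⟩
    have huopen : u ∈ openAfter Q plt (ord.take jw) := by
      refine ⟨⟨ord[ju], ?_, hjue⟩, _, List.mem_map.2 ⟨q₀, hq₀, rfl⟩, x, hxd, hpx⟩
      exact (su_mem_take_iff ord jw ord[ju]).2 ⟨ju, hjul, hlt, rfl⟩
    have hfu : plt f ≠ u := by
      intro h
      have hmem : plt f ∈ frontOf plt (confAfter Q (ord.take jw)) ∩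
          openAfter Q plt (ord.take jw) := ⟨hffront, h ▸ huopen⟩
      rw [hwdec] at hmem
      exact hmem
    have harc : seqArc Q plt (plt f) (plt x) :=
      su_arc hq₀ (ord.take jw) hf hxd (by rw [hpx]; exact hfu)
    have hchain : dpdFirst X w ≤ dpdLast X (plt x) :=
      le_trans (hwmin (plt f) hffront) (su_first_le_last_of_arc hX harc)
    rw [hpx] at hchain
    exact hchain
  · -- w opened first; at w's opening step jw, u's first bin is still waiting.
    have hbu : ord[ju] ∈ Q.flatten := hproc.1.subset (List.getElem_mem hjul)
    obtain ⟨q₀, hq₀, hbq₀⟩ := List.mem_flatten.1 hbu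
    have hordnd : ord.Nodup := (hproc.1.nodup_iff).2 hnd
    have hnr : ord[ju] ∉ ord.take jw := by
      intro hmem
      obtain ⟨j', hj'l, hj'lt, hj'e⟩ := (su_mem_take_iff ord jw ord[ju]).1 hmem
      have : j' = ju := (hordnd.getElem_inj_iff).1 hj'e
      omega
    have hxd : ord[ju] ∈ q₀.dropWhile (fun b => decide (b ∈ ord.take jw)) :=
      su_mem_dropWhile q₀ _ hbq₀ hnr
    have hrne : (q₀.dropWhile fun b => decide (b ∈ ord.take jw)) ≠ [] := by
      intro h; rw [h] at hxd; exact List.not_mem_nil hxd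
    obtain ⟨f, hf⟩ : ∃ f, (q₀.dropWhile fun b =>
        decide (b ∈ ord.take jw)).head? = some f :=
      ⟨_, List.head?_eq_head hrne⟩
    have hffront : plt f ∈ frontOf plt (confAfter Q (ord.take jw)) :=
      ⟨_, List.mem_map.2 ⟨q₀, hq₀, rfl⟩, f, hf, rfl⟩
    by_cases hfu : plt f = u
    · have h1 : dpdFirst X w ≤ dpdFirst X u := hfu ▸ hwmin (plt f) hffront
      have huV : u ∈ pltsOf Q plt := ⟨q₀, hq₀, ord[ju], hbq₀, hjue⟩
      obtain ⟨i0, hi0⟩ := su_bag_nonempty hX huV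
      have h2 : dpdFirst X u ≤ dpdLast X u :=
        le_trans (Nat.sInf_le hi0) (le_csSup (su_bag_bdd X u) hi0)
      omega
    · have harc : seqArc Q plt (plt f) (plt ord[ju]) :=
        su_arc hq₀ (ord.take jw) hf hxd (by rw [hjue]; exact hfu)
      have hchain : dpdFirst X w ≤ dpdLast X (plt ord[ju]) :=
        le_trans (hwmin (plt f) hffront) (su_first_le_last_of_arc hX harc)
      rw [hjue] at hchain
      exact hchain

end StackupMain

open Classical in
/-- Let every pallet of `Q` have at least two bins and let
`X` be a directed path-decomposition of the sequence graph `G_Q`. Consider a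
processing of `Q` that in every decision configuration opens a pallet
`t ∈ front(Q')` with `α(X,t)` minimal, and in every other configuration
removes a front bin destined for an already open pallet. Then for every
configuration reached during this processing there is a bag `X i` containing
all open pallets. -/
theorem greedy_open_subset_bag {B P : Type} [DecidableEq B]
    (Q : List (List B)) (plt : B → P) (hnd : Q.flatten.Nodup)
    (htwo : EveryPalletTwoBins Q plt)
    (X : List (Set P)) (hXne : X ≠ [])
    (hX : IsDPD (seqArc Q plt) (pltsOf Q plt) X)
    (ord : List B) (hproc : IsProcessing Q ord)
    (hgreedy : ∀ i (hi : i < ord.length),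
      if frontOf plt (confAfter Q (ord.take i)) ∩ openAfter Q plt (ord.take i) = ∅
      then plt ord[i] ∈ frontOf plt (confAfter Q (ord.take i)) ∧
           ∀ t ∈ frontOf plt (confAfter Q (ord.take i)),
             dpdFirst X (plt ord[i]) ≤ dpdFirst X t
      else plt ord[i] ∈ openAfter Q plt (ord.take i)) :
    ∀ i ≤ ord.length, ∃ idx, ∃ h : idx < X.length,
      openAfter Q plt (ord.take i) ⊆ X[idx] := by
  intro i hi
  rcases (openAfter Q plt (ord.take i)).eq_empty_or_nonempty with hS | hS
  · exact ⟨0, List.length_pos_iff.2 hXne, by rw [hS]; exact Set.empty_subset _⟩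
  · have hsub : openAfter Q plt (ord.take i) ⊆ pltsOf Q plt := by
      rintro t ⟨-, q, hq, x, hx, rfl⟩
      simp only [confAfter, List.mem_map] at hq
      obtain ⟨q₀, hq₀, rfl⟩ := hq
      exact ⟨q₀, hq₀, x, (List.dropWhile_sublist _).mem hx, rfl⟩
    have hplts : (pltsOf Q plt).Finite := by
      have hsub2 : pltsOf Q plt ⊆ plt '' {b | b ∈ Q.flatten} := by
        rintro t ⟨q, hq, x, hx, rfl⟩
        exact ⟨x, List.mem_flatten.2 ⟨q, hq, hx⟩, rfl⟩
      exact Set.Finite.subset ((Q.flatten.finite_toSet).image plt) hsub2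
    have hfin := hplts.subset hsub
    obtain ⟨w, hwS, hmax⟩ := Set.exists_max_image _ (dpdFirst X) hfin hS
    have hwV : w ∈ pltsOf Q plt := hsub hwS
    obtain ⟨hm, hwm⟩ := Nat.sInf_mem (su_bag_nonempty hX hwV)
    refine ⟨dpdFirst X w, hm, ?_⟩
    intro u huS
    have h1 : dpdFirst X u ≤ dpdFirst X w := hmax u huS
    have h2 : dpdFirst X w ≤ dpdLast X u := by
      by_cases hew : u = w
      · subst hew
        exact le_csSup (su_bag_bdd X u) ⟨hm, hwm⟩
      · exact su_comp hnd hX hproc hgreedy hi hew huS hwS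
    have huV : u ∈ pltsOf Q plt := hsub huS
    obtain ⟨hau, hamem⟩ := Nat.sInf_mem (su_bag_nonempty hX huV)
    obtain ⟨hbu, hbmem⟩ := Nat.sSup_mem (su_bag_nonempty hX huV) (su_bag_bdd X u)
    exact hX.2.2.2 u (dpdFirst X u) (dpdLast X u) (dpdFirst X w) h1 h2
      hau hbu hm hamem hbmem
end

section
/- Let Q = (q_1, …, q_k) be an instance of the FIFO stack-up problem in which every pallet of plts(Q) has at least two bins in the sequences of Q. Let (i_1, …, i_k) with 0 ≤ i_j < |q_j| for the chosen index j describe a configuration, and let t be the pallet label of the bin at position i_j + 1 of sequence q_j. Then #cut_Q(i_1, …, i_{j-1}, i_j + 1, i_{j+1}, …, i_k) = #cut_Q(i_1, …, i_k) + c_j, where c_j = 1 if first(q_j, t) = i_j + 1 and for every ℓ ≠ j either t ∉ plts(q_ℓ) or first(q_ℓ, t) > i_ℓ; c_j = −1 if last(q_j, t) = i_j + 1 and for every ℓ ≠ j either t ∉ plts(q_ℓ) or last(q_ℓ, t) ≤ i_ℓ; and c_j = 0 otherwise. -/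
/-- `first(q,t)`: the (1-based) position of the first bin of `q` labeled `t`;
it is `|q| + 1` if no bin of `q` is labeled `t`. -/
def firstPos {B P : Type} [DecidableEq P] (plt : B → P) (q : List B) (t : P) : ℕ :=
  q.findIdx (fun b => decide (plt b = t)) + 1

/-- `last(q,t)`: the (1-based) position of the last bin of `q` labeled `t`;
it is `0` if no bin of `q` is labeled `t`. -/
def lastPos {B P : Type} [DecidableEq P] (plt : B → P) (q : List B) (t : P) : ℕ :=
  q.length - q.reverse.findIdx (fun b => decide (plt b = t))

/-- The cut `cut_Q(i_1, …, i_k)` at the configuration described by `c`: the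
set of pallets having a bin among the first `c j` bins of some sequence `q_j`
(already removed) and also a bin among the remaining bins of some sequence. -/
def cutQ {B P : Type} (Q : List (List B)) (plt : B → P)
    (c : Fin Q.length → ℕ) : Set P :=
  {t | (∃ j : Fin Q.length, ∃ b ∈ (Q.get j).take (c j), plt b = t) ∧
       (∃ j : Fin Q.length, ∃ b ∈ (Q.get j).drop (c j), plt b = t)}

section Helpers

variable {B P : Type} [DecidableEq P] (plt : B → P)

lemma exists_take_iff (q : List B) (t : P) {m : ℕ} (hm : m ≤ q.length) :
    (∃ x ∈ q.take m, plt x = t) ↔ firstPos plt q t ≤ m := by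
  unfold firstPos
  constructor
  · rintro ⟨x, hx, hxt⟩
    obtain ⟨i, hi, hq⟩ := List.getElem_of_mem hx
    have hilen : i < m := lt_of_lt_of_le hi (by simpa using (List.length_take_le m q))
    rw [List.getElem_take] at hq
    by_contra h
    have hlt : i < q.findIdx (fun b => decide (plt b = t)) := by omega
    have := List.not_of_lt_findIdx hlt
    simp [hq, hxt] at this
  · intro h
    have hlt : q.findIdx (fun b => decide (plt b = t)) < q.length := by omega
    have hp := @List.findIdx_getElem _ (fun b => decide (plt b = t)) q hlt
    refine ⟨q[q.findIdx (fun b => decide (plt b = t))], ?_, by simpa using hp⟩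
    exact List.mem_take_iff_getElem.mpr ⟨_, lt_min (by omega) hlt, rfl⟩

lemma exists_drop_iff (q : List B) (t : P) (m : ℕ) :
    (∃ x ∈ q.drop m, plt x = t) ↔ m < lastPos plt q t := by
  unfold lastPos
  rcases le_or_gt m q.length with hm | hm
  · have h1 : (∃ x ∈ q.drop m, plt x = t) ↔ ∃ x ∈ q.reverse.take (q.length - m), plt x = t := by
      constructor
      · rintro ⟨x, hx, hxt⟩
        exact ⟨x, by rw [← List.reverse_drop]; simpa using hx, hxt⟩
      · rintro ⟨x, hx, hxt⟩
        rw [← List.reverse_drop] at hx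
        exact ⟨x, by simpa using hx, hxt⟩
    rw [h1, exists_take_iff plt q.reverse t (by simp)]
    unfold firstPos
    have hle := List.findIdx_le_length (p := fun b => decide (plt b = t)) (xs := q.reverse)
    simp only [List.length_reverse] at hle
    omega
  · have h0 : q.drop m = [] := by simp; omega
    have hle := List.findIdx_le_length (p := fun b => decide (plt b = t)) (xs := q.reverse)
    simp only [List.length_reverse] at hle
    simp [h0]; omega

lemma mem_plts_single_iff (q : List B) (t : P) :
    t ∈ pltsOf [q] plt ↔ ∃ x ∈ q, plt x = t := by
  simp [pltsOf]

lemma firstPos_of_not_mem (q : List B) (t : P) (h : ¬ ∃ x ∈ q, plt x = t) :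
    firstPos plt q t = q.length + 1 := by
  unfold firstPos
  rw [List.findIdx_eq_length.mpr]
  intro x hx
  simp only [decide_eq_false_iff_not]
  exact fun hxt => h ⟨x, hx, hxt⟩

lemma lastPos_of_not_mem (q : List B) (t : P) (h : ¬ ∃ x ∈ q, plt x = t) :
    lastPos plt q t = 0 := by
  by_contra hne
  have h2 := (exists_drop_iff plt q t 0).mpr (by omega)
  simp only [List.drop_zero] at h2
  exact h h2

lemma cutQ_finite (Q : List (List B)) (c : Fin Q.length → ℕ) :
    (cutQ Q plt c).Finite := by
  apply Set.Finite.subset ((Q.flatten.finite_toSet).image plt)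
  rintro s ⟨⟨l, x, hx, hxs⟩, -⟩
  exact ⟨x, List.mem_flatten.mpr ⟨Q.get l, List.get_mem Q l, List.mem_of_mem_take hx⟩, hxs⟩

end Helpers

lemma getElem_mem_drop {α : Type*} (l : List α) {i n : ℕ} (h : i < l.length) (hn : n ≤ i) :
    l[i] ∈ l.drop n := by
  rw [List.mem_drop_iff_getElem]
  exact ⟨i - n, by omega, by congr 1; omega⟩

open Classical in
/-- Removing the next bin (the bin at position `i_j + 1`)
from sequence `q_j` changes the size of the cut by `c_j`, where `c_j = 1` if
the pallet `t` of this bin is opened by this step, `c_j = -1` if `t` is closed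
by this step, and `c_j = 0` otherwise. -/
theorem cut_update {B P : Type} [DecidableEq B] [DecidableEq P]
    (Q : List (List B)) (plt : B → P)
    (hnd : Q.flatten.Nodup) (htwo : EveryPalletTwoBins Q plt)
    (c : Fin Q.length → ℕ) (hc : ∀ l, c l ≤ (Q.get l).length)
    (j : Fin Q.length) (hj : c j < (Q.get j).length)
    (t : P) (ht : ∃ b, (Q.get j)[c j]? = some b ∧ plt b = t) :
    ((cutQ Q plt (Function.update c j (c j + 1))).ncard : ℤ) =
      (cutQ Q plt c).ncard +
        (if firstPos plt (Q.get j) t = c j + 1 ∧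
            (∀ l, l ≠ j → (t ∉ pltsOf [Q.get l] plt ∨ c l < firstPos plt (Q.get l) t))
         then 1
         else if lastPos plt (Q.get j) t = c j + 1 ∧
            (∀ l, l ≠ j → (t ∉ pltsOf [Q.get l] plt ∨ lastPos plt (Q.get l) t ≤ c l))
         then -1
         else 0) := by
  classical
  obtain ⟨b, hbq, hbt⟩ := ht
  have hb : (Q.get j)[c j] = b := by
    rwa [List.getElem?_eq_getElem hj, Option.some.injEq] at hbq
  set c' : Fin Q.length → ℕ := Function.update c j (c j + 1) with hcdef
  have hc'j : c' j = c j + 1 := by simp [hcdef]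
  have hc'ne : ∀ l, l ≠ j → c' l = c l := fun l hl => Function.update_of_ne hl _ c
  have htake : (Q.get j).take (c j + 1) = (Q.get j).take (c j) ++ [b] := by
    rw [List.take_succ, hbq]; rfl
  have hdrop := List.drop_eq_getElem_cons hj
  rw [hb] at hdrop
  -- membership characterizations
  have hSmem : ∀ s, s ∈ cutQ Q plt c ↔
      (∃ l : Fin Q.length, ∃ x ∈ (Q.get l).take (c l), plt x = s) ∧
      ((∃ l : Fin Q.length, ∃ x ∈ (Q.get l).drop (c' l), plt x = s) ∨ s = t) := by
    intro s
    show (_ ∧ _) ↔ _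
    apply and_congr Iff.rfl
    constructor
    · rintro ⟨l, x, hx, hxs⟩
      by_cases hlj : l = j
      · subst hlj
        rw [hdrop] at hx
        rcases List.mem_cons.mp hx with rfl | hx'
        · exact Or.inr (by rw [← hxs, hbt])
        · exact Or.inl ⟨l, x, by rw [hc'j]; exact hx', hxs⟩
      · exact Or.inl ⟨l, x, by rw [hc'ne l hlj]; exact hx, hxs⟩
    · rintro (⟨l, x, hx, hxs⟩ | rfl)
      · by_cases hlj : l = j
        · subst hlj
          rw [hc'j] at hx
          exact ⟨l, x, by rw [hdrop]; exact List.mem_cons_of_mem _ hx, hxs⟩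
        · exact ⟨l, x, by rw [← hc'ne l hlj]; exact hx, hxs⟩
      · exact ⟨j, b, by rw [hdrop]; exact List.mem_cons_self, hbt⟩
  have hS'mem : ∀ s, s ∈ cutQ Q plt c' ↔
      ((∃ l : Fin Q.length, ∃ x ∈ (Q.get l).take (c l), plt x = s) ∨ s = t) ∧
      (∃ l : Fin Q.length, ∃ x ∈ (Q.get l).drop (c' l), plt x = s) := by
    intro s
    show (_ ∧ _) ↔ _
    refine and_congr ?_ Iff.rfl
    constructor
    · rintro ⟨l, x, hx, hxs⟩
      by_cases hlj : l = j
      · subst hlj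
        rw [hc'j, htake] at hx
        rcases List.mem_append.mp hx with hx' | hx'
        · exact Or.inl ⟨l, x, hx', hxs⟩
        · rw [List.mem_singleton] at hx'
          subst hx'
          exact Or.inr (by rw [← hxs, hbt])
      · exact Or.inl ⟨l, x, by rw [← hc'ne l hlj]; exact hx, hxs⟩
    · rintro (⟨l, x, hx, hxs⟩ | rfl)
      · by_cases hlj : l = j
        · subst hlj
          exact ⟨l, x, by rw [hc'j, htake]; exact List.mem_append_left _ hx, hxs⟩
        · exact ⟨l, x, by rw [hc'ne l hlj]; exact hx, hxs⟩
      · refine ⟨j, b, ?_, hbt⟩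
        rw [hc'j, htake]
        exact List.mem_append_right _ (List.mem_singleton_self b)
  -- position facts
  have hFj : firstPos plt (Q.get j) t ≤ c j + 1 :=
    (exists_take_iff plt _ t (by omega)).mp
      ⟨b, by rw [htake]; exact List.mem_append_right _ (List.mem_singleton_self b), hbt⟩
  have hLj : c j < lastPos plt (Q.get j) t :=
    (exists_drop_iff plt _ t (c j)).mp ⟨b, by rw [hdrop]; exact List.mem_cons_self, hbt⟩
  have hfl : ∀ l : Fin Q.length,
      (¬ ∃ x ∈ (Q.get l).take (c l), plt x = t) ↔ c l < firstPos plt (Q.get l) t := by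
    intro l; rw [exists_take_iff plt _ t (hc l)]; omega
  have hdl : ∀ (l : Fin Q.length) (m : ℕ),
      (¬ ∃ x ∈ (Q.get l).drop m, plt x = t) ↔ lastPos plt (Q.get l) t ≤ m := by
    intro l m; rw [exists_drop_iff]; omega
  have hplts : ∀ l : Fin Q.length, t ∉ pltsOf [Q.get l] plt →
      firstPos plt (Q.get l) t = (Q.get l).length + 1 ∧ lastPos plt (Q.get l) t = 0 := by
    intro l h
    rw [mem_plts_single_iff] at h
    exact ⟨firstPos_of_not_mem _ _ _ h, lastPos_of_not_mem _ _ _ h⟩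
  -- characterization of the two conditions
  have hnA : (¬ ∃ l : Fin Q.length, ∃ x ∈ (Q.get l).take (c l), plt x = t) ↔
      (firstPos plt (Q.get j) t = c j + 1 ∧
        ∀ l, l ≠ j → (t ∉ pltsOf [Q.get l] plt ∨ c l < firstPos plt (Q.get l) t)) := by
    rw [not_exists]
    constructor
    · intro h
      have hj' := (hfl j).mp (h j)
      exact ⟨by omega, fun l hl => Or.inr ((hfl l).mp (h l))⟩
    · rintro ⟨h1, h2⟩ l
      by_cases hlj : l = j
      · subst hlj; exact (hfl l).mpr (by omega)
      · rcases h2 l hlj with hnp | hlt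
        · exact (hfl l).mpr (by have := (hplts l hnp).1; have := hc l; omega)
        · exact (hfl l).mpr hlt
  have hnB : (¬ ∃ l : Fin Q.length, ∃ x ∈ (Q.get l).drop (c' l), plt x = t) ↔
      (lastPos plt (Q.get j) t = c j + 1 ∧
        ∀ l, l ≠ j → (t ∉ pltsOf [Q.get l] plt ∨ lastPos plt (Q.get l) t ≤ c l)) := by
    rw [not_exists]
    constructor
    · intro h
      have hj' := (hdl j (c' j)).mp (h j)
      rw [hc'j] at hj'
      refine ⟨by omega, fun l hl => Or.inr ?_⟩
      have := (hdl l (c' l)).mp (h l)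
      rwa [hc'ne l hl] at this
    · rintro ⟨h1, h2⟩ l
      by_cases hlj : l = j
      · subst hlj; exact (hdl l (c' l)).mpr (by rw [hc'j]; omega)
      · rcases h2 l hlj with hnp | hle
        · exact (hdl l (c' l)).mpr (by rw [hc'ne l hlj]; have := (hplts l hnp).2; omega)
        · exact (hdl l (c' l)).mpr (by rw [hc'ne l hlj]; exact hle)
  have hfinS := cutQ_finite plt Q c
  have hfinS' := cutQ_finite plt Q c'
  by_cases h1 : firstPos plt (Q.get j) t = c j + 1 ∧
      ∀ l, l ≠ j → (t ∉ pltsOf [Q.get l] plt ∨ c l < firstPos plt (Q.get l) t)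
  · rw [if_pos h1]
    have hAt : ¬ ∃ l : Fin Q.length, ∃ x ∈ (Q.get l).take (c l), plt x = t := hnA.mpr h1
    -- the pallet t has a second bin, which shows it remains open after the step
    have hBt : ∃ l : Fin Q.length, ∃ x ∈ (Q.get l).drop (c' l), plt x = t := by
      have hbmem : b ∈ Q.get j := hb ▸ List.getElem_mem hj
      have htp : t ∈ pltsOf Q plt := ⟨Q.get j, List.get_mem Q j, b, hbmem, hbt⟩
      obtain ⟨b₁, b₂, hne, hb₁, hb₂, hp₁, hp₂⟩ := htwo t htp
      obtain ⟨b'', hbb, hbf, hbp⟩ : ∃ b'', b'' ≠ b ∧ b'' ∈ Q.flatten ∧ plt b'' = t := by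
        by_cases h : b₁ = b
        · exact ⟨b₂, by rw [← h]; exact hne.symm, hb₂, hp₂⟩
        · exact ⟨b₁, h, hb₁, hp₁⟩
      obtain ⟨ql, hql, hbql⟩ := List.mem_flatten.mp hbf
      obtain ⟨l, hlg⟩ := List.mem_iff_get.mp hql
      by_cases hlj : l = j
      · subst hlj
        obtain ⟨i, hi, hqi⟩ := List.getElem_of_mem (hlg ▸ hbql : b'' ∈ Q.get l)
        have hij : i ≠ c l := fun h => hbb (by rw [← hqi]; subst h; exact hb)
        rcases lt_or_gt_of_ne hij with hlt | hgt
        · exfalso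
          have hle : firstPos plt (Q.get l) t ≤ c l :=
            (exists_take_iff plt (Q.get l) t (m := c l) (by omega)).mp
              ⟨b'', List.mem_take_iff_getElem.mpr ⟨i, lt_min hlt hi, hqi⟩, hbp⟩
          have := h1.1
          omega
        · refine ⟨l, b'', ?_, hbp⟩
          rw [hc'j]
          exact hqi ▸ getElem_mem_drop _ hi (by omega)
      · rcases h1.2 l hlj with hnp | hlt
        · exact absurd ((mem_plts_single_iff plt (Q.get l) t).mpr ⟨b'', hlg ▸ hbql, hbp⟩) hnp
        · refine ⟨l, b'', ?_, hbp⟩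
          rw [hc'ne l hlj]
          have hnt : b'' ∉ (Q.get l).take (c l) := fun hmem =>
            absurd ((exists_take_iff plt _ t (hc l)).mp ⟨b'', hmem, hbp⟩) (by omega)
          have hmem2 : b'' ∈ (Q.get l).take (c l) ++ (Q.get l).drop (c l) := by
            rw [List.take_append_drop]; exact hlg ▸ hbql
          rcases List.mem_append.mp hmem2 with h | h
          · exact absurd h hnt
          · exact h
    have hset : cutQ Q plt c' = insert t (cutQ Q plt c) := by
      ext s
      rw [hS'mem, Set.mem_insert_iff, hSmem]
      constructor
      · rintro ⟨hA | rfl, hB⟩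
        · exact Or.inr ⟨hA, Or.inl hB⟩
        · exact Or.inl rfl
      · rintro (rfl | ⟨hA, hB | rfl⟩)
        · exact ⟨Or.inr rfl, hBt⟩
        · exact ⟨Or.inl hA, hB⟩
        · exact absurd hA hAt
    have htS : t ∉ cutQ Q plt c := by
      rw [hSmem]; rintro ⟨hA, -⟩; exact hAt hA
    rw [hset, Set.ncard_insert_of_notMem htS hfinS]
    push_cast; ring
  · rw [if_neg h1]
    have hAt : ∃ l : Fin Q.length, ∃ x ∈ (Q.get l).take (c l), plt x = t := by
      by_contra h; exact h1 (hnA.mp h)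
    by_cases h2 : lastPos plt (Q.get j) t = c j + 1 ∧
        ∀ l, l ≠ j → (t ∉ pltsOf [Q.get l] plt ∨ lastPos plt (Q.get l) t ≤ c l)
    · rw [if_pos h2]
      have hBt : ¬ ∃ l : Fin Q.length, ∃ x ∈ (Q.get l).drop (c' l), plt x = t := hnB.mpr h2
      have hset : cutQ Q plt c = insert t (cutQ Q plt c') := by
        ext s
        rw [hSmem, Set.mem_insert_iff, hS'mem]
        constructor
        · rintro ⟨hA, hB | rfl⟩
          · exact Or.inr ⟨Or.inl hA, hB⟩
          · exact Or.inl rfl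
        · rintro (rfl | ⟨hA | rfl, hB⟩)
          · exact ⟨hAt, Or.inr rfl⟩
          · exact ⟨hA, Or.inl hB⟩
          · exact absurd hB hBt
      have htS' : t ∉ cutQ Q plt c' := by
        rw [hS'mem]; rintro ⟨-, hB⟩; exact hBt hB
      rw [hset, Set.ncard_insert_of_notMem htS' hfinS']
      push_cast; ring
    · rw [if_neg h2]
      have hBt : ∃ l : Fin Q.length, ∃ x ∈ (Q.get l).drop (c' l), plt x = t := by
        by_contra h; exact h2 (hnB.mp h)
      have hset : cutQ Q plt c' = cutQ Q plt c := by
        ext s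
        rw [hS'mem, hSmem]
        constructor
        · rintro ⟨hA | rfl, hB⟩
          · exact ⟨hA, Or.inl hB⟩
          · exact ⟨hAt, Or.inl hB⟩
        · rintro ⟨hA, hB | rfl⟩
          · exact ⟨Or.inl hA, hB⟩
          · exact ⟨Or.inl hA, hBt⟩
      rw [hset]; push_cast; ring
end

section
/- Let Q = (q_1, …, q_k) be an instance of the FIFO stack-up problem and p ≥ 0. There is a processing of Q such that at most p pallets are open in every configuration if and only if in the processing graph of Q there is a directed path from the vertex (0, …, 0) to the vertex (|q_1|, …, |q_k|) such that every vertex v = (i_1, …, i_k) on this path satisfies #cut_Q(i_1, …, i_k) ≤ p. -/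
/-- The arc relation of the processing graph of `Q`: there is an arc from a
configuration `c` to a configuration `c'` iff `c'` is obtained from `c` by
increasing exactly one coordinate by one. -/
def ProcStep {B : Type} (Q : List (List B)) (c c' : Fin Q.length → ℕ) : Prop :=
  ∃ j, c' j = c j + 1 ∧ ∀ l, l ≠ j → c' l = c l


namespace FifoAux

variable {B P : Type} [DecidableEq B]

set_option linter.unusedSectionVars false

lemma get_mem' {α : Type*} (Q : List α) (j : Fin Q.length) : Q.get j ∈ Q :=
  List.get_mem Q j

lemma dropWhile_eq_drop_of {α : Type*} (pr : α → Bool) :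
    ∀ (n : ℕ) (q : List α), (∀ b ∈ q.take n, pr b = true) →
      (∀ b, q[n]? = some b → pr b = false) → q.dropWhile pr = q.drop n := by
  intro n
  induction n with
  | zero =>
    intro q h1 h2
    cases q with
    | nil => rfl
    | cons a l =>
      have : pr a = false := h2 a (by simp)
      simp [List.dropWhile_cons, this]
  | succ n ih =>
    intro q h1 h2
    cases q with
    | nil => rfl
    | cons a l =>
      have ha : pr a = true := h1 a (by simp [List.take_succ_cons])
      rw [List.dropWhile_cons]
      simp only [ha, if_true, List.drop_succ_cons]
      exact ih l (fun b hb => h1 b (by simp [List.take_succ_cons, hb]))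
        (fun b hb => h2 b (by simpa using hb))

def Inv (Q : List (List B)) (removed : List B) (c : Fin Q.length → ℕ) : Prop :=
  removed.Nodup ∧ (∀ j, c j ≤ (Q.get j).length) ∧
  ∀ b, b ∈ removed ↔ ∃ j, b ∈ (Q.get j).take (c j)

lemma idx_unique {Q : List (List B)} (hnd : Q.flatten.Nodup) {b : B}
    {j j' : Fin Q.length} (h : b ∈ Q.get j) (h' : b ∈ Q.get j') : j = j' := by
  by_contra hne
  have hd := List.pairwise_iff_get.mp (List.nodup_flatten.mp hnd).2
  rcases lt_or_gt_of_ne hne with hlt | hlt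
  · exact hd j j' hlt h h'
  · exact hd j' j hlt h' h

lemma nodup_get {Q : List (List B)} (hnd : Q.flatten.Nodup) (j : Fin Q.length) :
    (Q.get j).Nodup :=
  (List.nodup_flatten.mp hnd).1 _ (get_mem' Q j)

lemma getElem_not_mem {Q : List (List B)} (hnd : Q.flatten.Nodup) {removed c}
    (h : Inv Q removed c) {j : Fin Q.length} (hj : c j < (Q.get j).length) :
    (Q.get j)[c j] ∉ removed := by
  intro hmem
  obtain ⟨j', hj'⟩ := (h.2.2 _).mp hmem
  have hmemj : (Q.get j)[c j] ∈ Q.get j := List.getElem_mem hj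
  have heq : j' = j := idx_unique hnd (List.mem_of_mem_take hj') hmemj
  subst heq
  have hx : (Q.get j')[c j'] ∈ (Q.get j').drop (c j') := by
    apply List.mem_of_mem_head?
    rw [List.head?_drop, List.getElem?_eq_getElem hj]
    rfl
  have hnq : (Q.get j').Nodup := nodup_get hnd j'
  rw [← List.take_append_drop (c j') (Q.get j'), List.nodup_append] at hnq
  exact hnq.2.2 _ hj' _ hx rfl

lemma confAfter_get {Q : List (List B)} (hnd : Q.flatten.Nodup) {removed c}
    (h : Inv Q removed c) (j : Fin Q.length) :
    (Q.get j).dropWhile (fun b => decide (b ∈ removed)) = (Q.get j).drop (c j) := by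
  apply dropWhile_eq_drop_of
  · intro b hb
    simpa using (h.2.2 b).mpr ⟨j, hb⟩
  · intro b hb
    obtain ⟨hj, hbe⟩ := List.getElem?_eq_some_iff.mp hb
    rw [← hbe]
    simpa using getElem_not_mem hnd h hj

lemma mem_confAfter {Q : List (List B)} (hnd : Q.flatten.Nodup) {removed c}
    (h : Inv Q removed c) {q' : List B} :
    q' ∈ confAfter Q removed ↔ ∃ j : Fin Q.length, q' = (Q.get j).drop (c j) := by
  unfold confAfter
  rw [List.mem_map]
  constructor
  · rintro ⟨q, hq, rfl⟩
    obtain ⟨j, rfl⟩ := List.mem_iff_get.mp hq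
    exact ⟨j, confAfter_get hnd h j⟩
  · rintro ⟨j, rfl⟩
    exact ⟨Q.get j, get_mem' Q j, confAfter_get hnd h j⟩

lemma openAfter_eq {Q : List (List B)} {plt : B → P} (hnd : Q.flatten.Nodup)
    {removed c} (h : Inv Q removed c) :
    openAfter Q plt removed = cutQ Q plt c := by
  ext t
  simp only [openAfter, cutQ, Set.mem_setOf_eq]
  constructor
  · rintro ⟨⟨b, hb, rfl⟩, q, hq, b', hb', hb'e⟩
    obtain ⟨j, hj⟩ := (h.2.2 b).mp hb
    obtain ⟨j', rfl⟩ := (mem_confAfter hnd h).mp hq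
    exact ⟨⟨j, b, hj, rfl⟩, ⟨j', b', hb', hb'e⟩⟩
  · rintro ⟨⟨j, b, hb, rfl⟩, j', b', hb', hb'e⟩
    exact ⟨⟨b, (h.2.2 b).mpr ⟨j, hb⟩, rfl⟩,
      (Q.get j').drop (c j'), (mem_confAfter hnd h).mpr ⟨j', rfl⟩, b', hb', hb'e⟩

lemma inv_step {Q : List (List B)} (hnd : Q.flatten.Nodup) {removed c}
    (h : Inv Q removed c) {j : Fin Q.length} (hj : c j < (Q.get j).length) :
    Inv Q (removed ++ [(Q.get j)[c j]]) (Function.update c j (c j + 1)) := by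
  obtain ⟨hnodup, hbound, hmem⟩ := h
  refine ⟨?_, ?_, ?_⟩
  · rw [List.nodup_append]
    exact ⟨hnodup, List.nodup_singleton _,
      fun a ha b hb hab => by rw [List.mem_singleton] at hb; subst hb hab; exact getElem_not_mem hnd ⟨hnodup, hbound, hmem⟩ hj ha⟩
  · intro l
    by_cases hl : l = j
    · subst hl; rw [Function.update_self]; omega
    · rw [Function.update_of_ne hl]; exact hbound l
  · intro b
    rw [List.mem_append, hmem]
    constructor
    · rintro (⟨j', hj'⟩ | hb)
      · refine ⟨j', ?_⟩
        by_cases hl : j' = j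
        · subst hl
          rw [Function.update_self, List.take_succ]
          exact List.mem_append_left _ hj'

        · rw [Function.update_of_ne hl]; exact hj'
      · rw [List.mem_singleton] at hb
        subst hb
        refine ⟨j, ?_⟩
        rw [Function.update_self, List.take_succ, List.getElem?_eq_getElem hj]
        exact List.mem_append_right _ (List.mem_singleton_self _)
    · rintro ⟨j', hj'⟩
      by_cases hl : j' = j
      · subst hl
        rw [Function.update_self, List.take_succ, List.getElem?_eq_getElem hj] at hj'
        rcases List.mem_append.mp hj' with h' | h'
        · exact Or.inl ⟨j', h'⟩
        · right; simpa using h'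
      · rw [Function.update_of_ne hl] at hj'
        exact Or.inl ⟨j', hj'⟩

lemma procStep_update {Q : List (List B)} (c : Fin Q.length → ℕ) (j : Fin Q.length) :
    ProcStep Q c (Function.update c j (c j + 1)) :=
  ⟨j, Function.update_self _ _ _, fun l hl => Function.update_of_ne hl _ _⟩

lemma inv_final {Q : List (List B)} (hnd : Q.flatten.Nodup) {ord c}
    (hperm : ord.Perm Q.flatten) (h : Inv Q ord c) :
    c = fun j => (Q.get j).length := by
  funext j
  refine le_antisymm (h.2.1 j) ?_
  have hsub : Q.get j ⊆ (Q.get j).take (c j) := by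
    intro b hb
    have hbf : b ∈ Q.flatten := List.mem_flatten.mpr ⟨Q.get j, get_mem' Q j, hb⟩
    obtain ⟨j', hj'⟩ := (h.2.2 b).mp (hperm.mem_iff.mpr hbf)
    have heq : j' = j := idx_unique hnd (List.mem_of_mem_take hj') hb
    subst heq; exact hj'
  have hlen := (List.subperm_of_subset (nodup_get hnd j) hsub).length_le
  rw [List.length_take] at hlen
  omega

lemma inv_zero (Q : List (List B)) : Inv Q [] (fun _ => 0) :=
  ⟨List.nodup_nil, fun _ => Nat.zero_le _, by simp⟩

lemma back_rec {Q : List (List B)} (hnd : Q.flatten.Nodup) :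
    ∀ (L : List (Fin Q.length → ℕ)), List.Chain' (ProcStep Q) L →
    (∀ c ∈ L, ∀ j, c j ≤ (Q.get j).length) →
    ∀ c0, L.head? = some c0 → ∀ clast, L.getLast? = some clast →
    ∀ removed, Inv Q removed c0 →
    ∃ ext : List B, Inv Q (removed ++ ext) clast ∧
      (∀ i (hi : i < ext.length),
        ∃ q ∈ confAfter Q (removed ++ ext.take i), q.head? = some ext[i]) ∧
      (∀ i ≤ ext.length, ∃ c ∈ L, Inv Q (removed ++ ext.take i) c) := by
  intro L
  induction L with
  | nil => intro _ _ c0 h; simp at h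
  | cons c rest ih =>
    intro hchain hbound c0 hc0 clast hlast removed hinv
    rw [List.head?_cons, Option.some.injEq] at hc0
    subst hc0
    cases rest with
    | nil =>
      rw [List.getLast?_singleton, Option.some.injEq] at hlast
      subst hlast
      refine ⟨[], by simpa, ?_, ?_⟩
      · intro i hi; simp at hi
      · intro i hi
        have : i = 0 := Nat.le_zero.mp hi
        subst this
        exact ⟨c, List.mem_singleton_self _, by simpa using hinv⟩
    | cons c' rest' =>
      replace hchain := List.isChain_cons_cons.mp hchain
      obtain ⟨hstep0, hchain'⟩ := hchain
      obtain ⟨j, hcj, hother⟩ := hstep0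
      have hj : c j < (Q.get j).length := by
        have := hbound c' (by simp) j; omega
      have hc'eq : c' = Function.update c j (c j + 1) := by
        funext l
        by_cases hl : l = j
        · subst hl; rw [Function.update_self]; exact hcj
        · rw [Function.update_of_ne hl]; exact hother l hl
      have hstep := inv_step hnd hinv hj
      rw [← hc'eq] at hstep
      have hlast' : (c' :: rest').getLast? = some clast := by
        rw [← hlast, List.getLast?_cons_cons]
      obtain ⟨ext', hinv', hsteps', hpref'⟩ :=
        ih hchain' (fun c'' h' => hbound c'' (List.mem_cons_of_mem _ h')) c' rfl clast hlast'
          (removed ++ [(Q.get j)[c j]]) hstep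
      refine ⟨(Q.get j)[c j] :: ext', ?_, ?_, ?_⟩
      · have he : removed ++ (Q.get j)[c j] :: ext'
            = (removed ++ [(Q.get j)[c j]]) ++ ext' := by simp
        rw [he]; exact hinv'
      · intro i hi
        cases i with
        | zero =>
          refine ⟨(Q.get j).drop (c j), ?_, ?_⟩
          · simp only [List.take_zero, List.append_nil]
            exact (mem_confAfter hnd hinv).mpr ⟨j, rfl⟩
          · rw [List.head?_drop, List.getElem?_eq_getElem hj]; rfl
        | succ i' =>
          have hi' : i' < ext'.length := by simpa using hi
          obtain ⟨q, hq, hqh⟩ := hsteps' i' hi'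
          refine ⟨q, ?_, ?_⟩
          · have he : removed ++ ((Q.get j)[c j] :: ext').take (i' + 1)
                = (removed ++ [(Q.get j)[c j]]) ++ ext'.take i' := by
              simp [List.take_succ_cons]
            rw [he]; exact hq
          · simpa using hqh
      · intro i hi
        cases i with
        | zero => exact ⟨c, by simp, by simpa using hinv⟩
        | succ i' =>
          have hi' : i' ≤ ext'.length := by simpa using hi
          obtain ⟨c'', hc'', hinv''⟩ := hpref' i' hi'
          refine ⟨c'', List.mem_cons_of_mem _ hc'', ?_⟩
          have he : removed ++ ((Q.get j)[c j] :: ext').take (i' + 1)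
              = (removed ++ [(Q.get j)[c j]]) ++ ext'.take i' := by
            simp [List.take_succ_cons]
          rw [he]; exact hinv''

end FifoAux

open FifoAux in

/-- There is a processing of `Q` in which at most `p` pallets
are open in every configuration if and only if the processing graph of `Q`
contains a directed path from the vertex `(0, …, 0)` to the vertex
`(|q_1|, …, |q_k|)` all of whose vertices `(i_1, …, i_k)` satisfy
`#cut_Q(i_1, …, i_k) ≤ p`. -/
theorem processing_iff_path_in_processing_graph {B P : Type} [DecidableEq B]
    (Q : List (List B)) (plt : B → P) (hnd : Q.flatten.Nodup) (p : ℕ) :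
    (∃ ord : List B, IsProcessing Q ord ∧ UsesAtMost Q plt ord p) ↔
    (∃ L : List (Fin Q.length → ℕ),
      L.head? = some (fun _ => 0) ∧
      L.getLast? = some (fun j => (Q.get j).length) ∧
      List.Chain' (ProcStep Q) L ∧
      (∀ c ∈ L, ∀ j, c j ≤ (Q.get j).length) ∧
      (∀ c ∈ L, (cutQ Q plt c).ncard ≤ p)) := by
  constructor
  · rintro ⟨ord, hproc, huse⟩
    have claim : ∀ i, i ≤ ord.length → ∃ (L : List (Fin Q.length → ℕ))
        (c : Fin Q.length → ℕ),
        L.head? = some (fun _ => 0) ∧ L.getLast? = some c ∧ Inv Q (ord.take i) c ∧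
        List.Chain' (ProcStep Q) L ∧ ∀ c' ∈ L, ∃ i' ≤ i, Inv Q (ord.take i') c' := by
      intro i
      induction i with
      | zero =>
        intro _
        refine ⟨[fun _ => 0], fun _ => 0, rfl, rfl, by simpa using inv_zero Q,
          List.isChain_singleton _, ?_⟩
        intro c' hc'
        rw [List.mem_singleton] at hc'
        subst hc'
        exact ⟨0, le_refl 0, by simpa using inv_zero Q⟩
      | succ i ihh =>
        intro hi1
        have hi : i < ord.length := hi1
        obtain ⟨L, c, hhead, hlast, hinv, hchain, hall⟩ := ihh (le_of_lt hi)
        obtain ⟨q, hq, hqh⟩ := hproc.2 i hi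
        obtain ⟨j, rfl⟩ := (mem_confAfter hnd hinv).mp hq
        rw [List.head?_drop] at hqh
        obtain ⟨hj, hje⟩ := List.getElem?_eq_some_iff.mp hqh
        have hstep := inv_step hnd hinv hj
        rw [hje] at hstep
        have htake : ord.take (i+1) = ord.take i ++ [ord[i]] := by
          rw [List.take_succ, List.getElem?_eq_getElem hi]; rfl
        refine ⟨L ++ [Function.update c j (c j + 1)], Function.update c j (c j + 1),
          ?_, ?_, ?_, ?_, ?_⟩
        · cases L with
          | nil => simp at hhead
          | cons a L' => simpa using hhead
        · rw [List.getLast?_concat]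
        · rw [htake]; exact hstep
        · refine List.isChain_append.mpr ?_
          refine ⟨hchain, List.isChain_singleton _, ?_⟩
          intro x hx y hy
          rw [hlast, Option.mem_some_iff] at hx
          rw [List.head?_cons, Option.mem_some_iff] at hy
          subst hx; subst hy
          exact procStep_update c j
        · intro c' hc'
          rcases List.mem_append.mp hc' with h' | h'
          · obtain ⟨i', hi', hinv'⟩ := hall c' h'
            exact ⟨i', le_trans hi' (Nat.le_succ i), hinv'⟩
          · rw [List.mem_singleton] at h'
            subst h'
            exact ⟨i+1, le_refl _, by rw [htake]; exact hstep⟩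
    obtain ⟨L, c, hh, hl, hinv, hch, hall⟩ := claim ord.length le_rfl
    rw [List.take_length] at hinv
    have hc := inv_final hnd hproc.1 hinv
    refine ⟨L, hh, by rw [hl, hc], hch, ?_, ?_⟩
    · intro c' hc'
      obtain ⟨i', _, hinv'⟩ := hall c' hc'
      exact hinv'.2.1
    · intro c' hc'
      obtain ⟨i', hi', hinv'⟩ := hall c' hc'
      have := huse i' hi'
      rwa [openAfter_eq hnd hinv'] at this
  · rintro ⟨L, hh, hl, hch, hb, hcut⟩
    obtain ⟨ext, hinvf, hsteps, hpref⟩ :=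
      back_rec hnd L hch hb _ hh _ hl [] (inv_zero Q)
    simp only [List.nil_append] at hinvf hsteps hpref
    refine ⟨ext, ⟨?_, ?_⟩, ?_⟩
    · have h1 : ext ⊆ Q.flatten := by
        intro b hb'
        obtain ⟨j, hj⟩ := (hinvf.2.2 b).mp hb'
        exact List.mem_flatten.mpr ⟨Q.get j, get_mem' Q j, List.mem_of_mem_take hj⟩
      have h2 : Q.flatten ⊆ ext := by
        intro b hb'
        obtain ⟨q, hq, hbq⟩ := List.mem_flatten.mp hb'
        obtain ⟨j, hj⟩ := List.mem_iff_get.mp hq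
        refine (hinvf.2.2 b).mpr ⟨j, ?_⟩
        rw [List.take_length, hj]
        exact hbq
      exact (List.subperm_of_subset hinvf.1 h1).antisymm
        (List.subperm_of_subset hnd h2)
    · intro i hi
      exact hsteps i hi
    · intro i hi
      obtain ⟨c, hcL, hinvc⟩ := hpref i hi
      rw [openAfter_eq hnd hinvc]
      exact hcut c hcL
end
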